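/- arXiv:1712.04228 — 10 statements merged into one kernel-verified Lean document; each statement's English description precedes it below -/
import Mathlib

section
/- Let G be a finite simple graph and let U = {u_1, …, u_k} be a set of vertices that forces a unique perfect matching in G. Then G has a unique perfect matching, namely M = {u_1v_1, …, u_kv_k}, where for each i ∈ {1,…,k} the vertex v_i is the unique neighbor of u_i in the graph G_i obtained from G by deleting the closed neighborhoods of u_1, …, u_{i−1}. -/
/-- A set (listed as `u 0, …, u (k-1)`, all distinct) forces a unique perfect matching
in `G` if `|V| = 2k` and every `u i` has degree exactly one in the graph `G_i` obtained
from `G` by deleting the closed neighborhoods of `u 0, …, u (i-1)`. -/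
def ForcesUPM {V : Type*} [Fintype V] (G : SimpleGraph V) (k : ℕ) (u : Fin k → V) : Prop :=
  Function.Injective u ∧ Fintype.card V = 2 * k ∧
  ∀ i : Fin k,
    (∀ j : Fin k, j < i → u i ∉ insert (u j) (G.neighborSet (u j))) ∧
    ∃! w : V, (∀ j : Fin k, j < i → w ∉ insert (u j) (G.neighborSet (u j))) ∧ G.Adj (u i) w

theorem forces_unique_perfect_matching {V : Type*} [Fintype V] (G : SimpleGraph V)
    (k : ℕ) (u : Fin k → V) (hU : ForcesUPM G k u) (v : Fin k → V)
    (hv : ∀ i : Fin k,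
      (∀ j : Fin k, j < i → v i ∉ insert (u j) (G.neighborSet (u j))) ∧ G.Adj (u i) (v i)) :
    (∃! M : G.Subgraph, M.IsPerfectMatching) ∧
      ∀ M : G.Subgraph, M.IsPerfectMatching → ∀ i : Fin k, M.Adj (u i) (v i) := by
  classical
  obtain ⟨hinj, hcard, hstep⟩ := hU
  have hadj : ∀ i, G.Adj (u i) (v i) := fun i => (hv i).2
  have hA : ∀ i j, j < i → v i ≠ u j ∧ ¬ G.Adj (u j) (v i) := by
    intro i j h
    have := (hv i).1 j h
    simp only [Set.mem_insert_iff, SimpleGraph.mem_neighborSet] at this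
    push_neg at this
    exact this
  have hB : ∀ i j, j < i → u i ≠ u j ∧ ¬ G.Adj (u j) (u i) := by
    intro i j h
    have := (hstep i).1 j h
    simp only [Set.mem_insert_iff, SimpleGraph.mem_neighborSet] at this
    push_neg at this
    exact this
  have hvu : ∀ i j, v i ≠ u j := by
    intro i j
    rcases lt_trichotomy j i with h | h | h
    · exact (hA i j h).1
    · subst h; exact (hadj _).ne'
    · intro he
      exact (hB j i h).2 (he ▸ hadj i)
  have hvv : ∀ i j, v i = v j → i = j := by
    intro i j he
    rcases lt_trichotomy i j with h | h | h
    · exact absurd (he ▸ hadj i) (hA j i h).2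
    · exact h
    · exact absurd (he ▸ hadj j).symm fun hc => (hA i j h).2 hc.symm
  -- surjectivity of the combined listing
  have hsurj : ∀ a : V, (∃ i, a = u i) ∨ (∃ i, a = v i) := by
    have hfinj : Function.Injective (Sum.elim u v : Fin k ⊕ Fin k → V) := by
      rintro (i | i) (j | j) h <;> simp only [Sum.elim_inl, Sum.elim_inr] at h
      · exact congrArg Sum.inl (hinj h)
      · exact absurd h.symm (hvu j i)
      · exact absurd h (hvu i j)
      · exact congrArg Sum.inr (hvv i j h)
    have hc : Fintype.card (Fin k ⊕ Fin k) = Fintype.card V := by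
      simp [hcard, two_mul]
    have hfsurj : Function.Surjective (Sum.elim u v : Fin k ⊕ Fin k → V) :=
      ((Fintype.bijective_iff_injective_and_card _).2 ⟨hfinj, hc⟩).2
    intro a
    obtain ⟨x, hx⟩ := hfsurj a
    cases x with
    | inl i => exact Or.inl ⟨i, hx.symm⟩
    | inr i => exact Or.inr ⟨i, hx.symm⟩
  -- every perfect matching matches u i with v i
  have key : ∀ M : G.Subgraph, M.IsPerfectMatching → ∀ i : Fin k, M.Adj (u i) (v i) := by
    intro M hM
    have main : ∀ n : ℕ, ∀ i : Fin k, i.val = n → M.Adj (u i) (v i) := by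
      intro n
      induction n using Nat.strong_induction_on with
      | _ n IH =>
        intro i hi
        obtain ⟨w, hw, huniq⟩ := hM.1 (hM.2 (u i))
        rcases hsurj w with ⟨m, rfl⟩ | ⟨m, rfl⟩
        · exfalso
          rcases lt_trichotomy m i with h | h | h
          · have hmm : M.Adj (u m) (v m) :=
              IH m.val (by rw [← hi]; exact h) m rfl
            have : v m = u i :=
              ExistsUnique.unique (hM.1 (hM.2 (u m))) hmm hw.symm
            exact hvu m i this
          · subst h
            exact (M.adj_sub hw).ne rfl
          · exact (hB m i h).2 (M.adj_sub hw)
        · rcases lt_trichotomy m i with h | h | h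
          · exfalso
            have hmm : M.Adj (u m) (v m) :=
              IH m.val (by rw [← hi]; exact h) m rfl
            have : u m = u i :=
              ExistsUnique.unique (hM.1 (hM.2 (v m))) hmm.symm hw.symm
            exact absurd (hinj this) h.ne
          · subst h; exact hw
          · exact absurd (M.adj_sub hw) (hA m i h).2
    exact fun i => main i.val i rfl
  -- the canonical matching
  let M0 : G.Subgraph :=
    { verts := Set.univ
      Adj := fun a b => ∃ i, (a = u i ∧ b = v i) ∨ (a = v i ∧ b = u i)
      adj_sub := by
        rintro a b ⟨i, ⟨rfl, rfl⟩ | ⟨rfl, rfl⟩⟩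
        exacts [hadj i, (hadj i).symm]
      edge_vert := fun _ => Set.mem_univ _
      symm := by
        constructor
        rintro a b ⟨i, ⟨rfl, rfl⟩ | ⟨rfl, rfl⟩⟩
        exacts [⟨i, Or.inr ⟨rfl, rfl⟩⟩, ⟨i, Or.inl ⟨rfl, rfl⟩⟩] }
  have hM0 : M0.IsPerfectMatching := by
    constructor
    · intro a _
      rcases hsurj a with ⟨i, rfl⟩ | ⟨i, rfl⟩
      · refine ⟨v i, ⟨i, Or.inl ⟨rfl, rfl⟩⟩, ?_⟩
        rintro b ⟨j, ⟨hj1, rfl⟩ | ⟨hj1, rfl⟩⟩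
        · rw [hinj hj1]
        · exact absurd hj1.symm (hvu j i)
      · refine ⟨u i, ⟨i, Or.inr ⟨rfl, rfl⟩⟩, ?_⟩
        rintro b ⟨j, ⟨hj1, rfl⟩ | ⟨hj1, rfl⟩⟩
        · exact absurd hj1 (hvu i j)
        · rw [hvv i j hj1]
    · intro a; exact Set.mem_univ a
  have huniqM : ∀ M : G.Subgraph, M.IsPerfectMatching → M = M0 := by
    intro M hM
    ext a b
    · simp only [M0, Set.mem_univ, iff_true]
      exact hM.2 a
    · constructor
      · intro hab
        rcases hsurj a with ⟨i, rfl⟩ | ⟨i, rfl⟩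
        · have : b = v i := ExistsUnique.unique (hM.1 (hM.2 (u i))) hab (key M hM i)
          exact ⟨i, Or.inl ⟨rfl, this⟩⟩
        · have : b = u i := ExistsUnique.unique (hM.1 (hM.2 (v i))) hab (key M hM i).symm
          exact ⟨i, Or.inr ⟨rfl, this⟩⟩
      · rintro ⟨i, ⟨rfl, rfl⟩ | ⟨rfl, rfl⟩⟩
        exacts [key M hM i, (key M hM i).symm]
  exact ⟨⟨M0, hM0, huniqM⟩, key⟩
end

section
/- A cograph G has a unique perfect matching if and only if some set of vertices forces a unique perfect matching in G. -/
/-- A cograph is a graph with no induced path on four vertices. -/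
def IsCograph {V : Type*} (G : SimpleGraph V) : Prop :=
  ¬ ∃ f : Fin 4 → V, Function.Injective f ∧
      ∀ i j : Fin 4, G.Adj (f i) (f j) ↔ (SimpleGraph.pathGraph 4).Adj i j

section NoP4
variable {V : Type*} {G : SimpleGraph V}

lemma no_p4 (hG : IsCograph G) {a b c d : V}
    (hac : a ≠ c) (had : a ≠ d) (hbd : b ≠ d)
    (e1 : G.Adj a b) (e2 : G.Adj b c) (e3 : G.Adj c d)
    (n1 : ¬G.Adj a c) (n2 : ¬G.Adj a d) (n3 : ¬G.Adj b d) : False := by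
  have hab : a ≠ b := e1.ne
  have hbc : b ≠ c := e2.ne
  have hcd : c ≠ d := e3.ne
  apply hG
  have e1' := e1.symm
  have e2' := e2.symm
  have e3' := e3.symm
  have n1' : ¬G.Adj c a := fun h => n1 h.symm
  have n2' : ¬G.Adj d a := fun h => n2 h.symm
  have n3' : ¬G.Adj d b := fun h => n3 h.symm
  refine ⟨![a, b, c, d], ?_, ?_⟩
  · intro i j h
    fin_cases i <;> fin_cases j <;> simp_all
  · intro i j
    fin_cases i <;> fin_cases j <;>
      simp_all [SimpleGraph.pathGraph_adj] <;> decide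
end NoP4

section Swap
variable {V : Type*} {G : SimpleGraph V}
open SimpleGraph

lemma pm_partner_unique {M : G.Subgraph} (hM : M.IsPerfectMatching) {v x y : V}
    (h1 : M.Adj v x) (h2 : M.Adj v y) : x = y :=
  (hM.1 (hM.2 v)).unique h1 h2

/-- The swapped subgraph: replace matching edges `ab`, `cd` by `ac`, `bd`. -/
def swapSub (M : G.Subgraph) (a b c d : V) (hac : G.Adj a c) (hbd : G.Adj b d) :
    G.Subgraph where
  verts := Set.univ
  Adj x y := (M.Adj x y ∧ ¬(x = a ∨ x = b ∨ x = c ∨ x = d) ∧ ¬(y = a ∨ y = b ∨ y = c ∨ y = d)) ∨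
    (x = a ∧ y = c) ∨ (x = c ∧ y = a) ∨ (x = b ∧ y = d) ∨ (x = d ∧ y = b)
  adj_sub := by
    rintro v w (⟨h, -, -⟩ | ⟨rfl, rfl⟩ | ⟨rfl, rfl⟩ | ⟨rfl, rfl⟩ | ⟨rfl, rfl⟩)
    · exact M.adj_sub h
    · exact hac
    · exact hac.symm
    · exact hbd
    · exact hbd.symm
  edge_vert := fun _ => Set.mem_univ _
  symm := Std.Symm.mk <| by
    rintro v w (⟨h, hv, hw⟩ | ⟨rfl, rfl⟩ | ⟨rfl, rfl⟩ | ⟨rfl, rfl⟩ | ⟨rfl, rfl⟩) <;>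
      first
      | exact Or.inl ⟨h.symm, hw, hv⟩
      | tauto

/-- If a perfect matching admits a 2-swap, it is not unique. -/
lemma swapfree {M : G.Subgraph} (hM : M.IsPerfectMatching)
    (huniq : ∀ N : G.Subgraph, N.IsPerfectMatching → N = M)
    {a b c d : V} (hab : M.Adj a b) (hcd : M.Adj c d) (hcb : c ≠ b)
    (hac : G.Adj a c) (hbd : G.Adj b d) : False := by
  have hGab : G.Adj a b := M.adj_sub hab
  have hGcd : G.Adj c d := M.adj_sub hcd
  have hne_ac : a ≠ c := hac.ne
  have hne_bd : b ≠ d := hbd.ne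
  have hne_ab : a ≠ b := hGab.ne
  have hne_cd : c ≠ d := hGcd.ne
  have hne_ad : a ≠ d := by
    rintro rfl
    exact hcb (pm_partner_unique hM hab hcd.symm).symm
  have hPa : (a = a ∨ a = b ∨ a = c ∨ a = d) := Or.inl rfl
  have hPb : (b = a ∨ b = b ∨ b = c ∨ b = d) := Or.inr (Or.inl rfl)
  have hPc : (c = a ∨ c = b ∨ c = c ∨ c = d) := Or.inr (Or.inr (Or.inl rfl))
  have hPd : (d = a ∨ d = b ∨ d = c ∨ d = d) := Or.inr (Or.inr (Or.inr rfl))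
  have hadjdef : ∀ x y : V, (swapSub M a b c d hac hbd).Adj x y ↔
      ((M.Adj x y ∧ ¬(x = a ∨ x = b ∨ x = c ∨ x = d) ∧ ¬(y = a ∨ y = b ∨ y = c ∨ y = d)) ∨
      (x = a ∧ y = c) ∨ (x = c ∧ y = a) ∨ (x = b ∧ y = d) ∨ (x = d ∧ y = b)) :=
    fun _ _ => Iff.rfl
  set M' := swapSub M a b c d hac hbd with hM'def
  have hM'pm : M'.IsPerfectMatching := by
    constructor
    · intro v _
      by_cases hv : (v = a ∨ v = b ∨ v = c ∨ v = d)
      · rcases hv with rfl | rfl | rfl | rfl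
        · refine ⟨c, Or.inr (Or.inl ⟨rfl, rfl⟩), ?_⟩
          intro y hy
          rw [hM'def, hadjdef] at hy
          rcases hy with ⟨-, hn, -⟩ | ⟨-, rfl⟩ | ⟨h, -⟩ | ⟨h, -⟩ | ⟨h, -⟩
          · exact (hn hPa).elim
          · rfl
          · exact (hne_ac h).elim
          · exact (hne_ab h).elim
          · exact (hne_ad h).elim
        · refine ⟨d, Or.inr (Or.inr (Or.inr (Or.inl ⟨rfl, rfl⟩))), ?_⟩
          intro y hy
          rw [hM'def, hadjdef] at hy
          rcases hy with ⟨-, hn, -⟩ | ⟨h, -⟩ | ⟨h, -⟩ | ⟨-, rfl⟩ | ⟨h, -⟩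
          · exact (hn hPb).elim
          · exact (hne_ab h.symm).elim
          · exact (hcb h.symm).elim
          · rfl
          · exact (hne_bd h).elim
        · refine ⟨a, Or.inr (Or.inr (Or.inl ⟨rfl, rfl⟩)), ?_⟩
          intro y hy
          rw [hM'def, hadjdef] at hy
          rcases hy with ⟨-, hn, -⟩ | ⟨h, -⟩ | ⟨-, rfl⟩ | ⟨h, -⟩ | ⟨h, -⟩
          · exact (hn hPc).elim
          · exact (hne_ac h.symm).elim
          · rfl
          · exact (hcb h).elim
          · exact (hne_cd h).elim
        · refine ⟨b, Or.inr (Or.inr (Or.inr (Or.inr ⟨rfl, rfl⟩))), ?_⟩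
          intro y hy
          rw [hM'def, hadjdef] at hy
          rcases hy with ⟨-, hn, -⟩ | ⟨h, -⟩ | ⟨h, -⟩ | ⟨h, -⟩ | ⟨-, rfl⟩
          · exact (hn hPd).elim
          · exact (hne_ad h.symm).elim
          · exact (hne_cd h.symm).elim
          · exact (hne_bd h.symm).elim
          · rfl
      · obtain ⟨w, hw, hwu⟩ := hM.1 (hM.2 v)
        have hPw : ¬(w = a ∨ w = b ∨ w = c ∨ w = d) := by
          rintro (rfl | rfl | rfl | rfl)
          · exact hv (Or.inr (Or.inl (pm_partner_unique hM hw.symm hab)))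
          · exact hv (Or.inl (pm_partner_unique hM hw.symm hab.symm))
          · exact hv (Or.inr (Or.inr (Or.inr (pm_partner_unique hM hw.symm hcd))))
          · exact hv (Or.inr (Or.inr (Or.inl (pm_partner_unique hM hw.symm hcd.symm))))
        refine ⟨w, Or.inl ⟨hw, hv, hPw⟩, ?_⟩
        intro y hy
        rw [hM'def, hadjdef] at hy
        rcases hy with ⟨h, -, -⟩ | ⟨h, -⟩ | ⟨h, -⟩ | ⟨h, -⟩ | ⟨h, -⟩
        · exact hwu _ h
        · exact (hv (h ▸ hPa)).elim
        · exact (hv (h ▸ hPc)).elim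
        · exact (hv (h ▸ hPb)).elim
        · exact (hv (h ▸ hPd)).elim
    · intro v; exact Set.mem_univ _
  have hMac : M'.Adj a c := Or.inr (Or.inl ⟨rfl, rfl⟩)
  rw [huniq M' hM'pm] at hMac
  exact hcb (pm_partner_unique hM hMac hab)

end Swap

section DegreeOne
variable {V : Type*} [Fintype V] {G : SimpleGraph V}
open SimpleGraph

lemma exists_degree_one (hG : IsCograph G) {M : G.Subgraph} (hM : M.IsPerfectMatching)
    (huniq : ∀ N : G.Subgraph, N.IsPerfectMatching → N = M) (hne : Nonempty V) :
    ∃ u : V, ∃! w, G.Adj u w := by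
  by_contra hdeg
  push_neg at hdeg
  choose m hm1 hm2 using fun v => hM.1 (hM.2 v)
  have minv : ∀ v, m (m v) = v := fun v => (hm2 (m v) v (hm1 v).symm).symm
  have madj : ∀ v, G.Adj v (m v) := fun v => M.adj_sub (hm1 v)
  have minj : ∀ x y, m x = m y → x = y := by
    intro x y h
    rw [← minv x, h, minv]
  have sf : ∀ a c, G.Adj a c → c ≠ m a → ¬ G.Adj (m a) (m c) := by
    intro a c h hc hadj2
    exact swapfree hM huniq (hm1 a) (hm1 c) hc h hadj2
  -- `Dom a c` below means `G.Adj a c ∧ G.Adj a (m c)` : a dominates the pair {c, m c}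
  have dom_ne : ∀ a c, G.Adj a c ∧ G.Adj a (m c) → c ≠ m a ∧ m c ≠ m a ∧ c ≠ a ∧ m c ≠ a := by
    intro a c ⟨h1, h2⟩
    refine ⟨?_, ?_, h1.ne', ?_⟩
    · intro h; rw [h, minv] at h2; exact G.irrefl h2
    · intro h; exact h1.ne' (minj _ _ h ▸ rfl)
    · intro h; rw [h] at h2; exact G.irrefl h2
  have star : ∀ a c, G.Adj a c ∧ G.Adj a (m c) → ¬G.Adj (m a) c ∧ ¬G.Adj (m a) (m c) := by
    intro a c hd
    obtain ⟨h1, h2⟩ := hd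
    obtain ⟨hne1, hne2, hne3, hne4⟩ := dom_ne a c ⟨h1, h2⟩
    constructor
    · have := sf a (m c) h2 hne2
      rw [minv] at this
      exact this
    · exact sf a c h1 hne1
  have L1 : ∀ a c, G.Adj a c → c ≠ m a →
      (G.Adj a c ∧ G.Adj a (m c)) ∨ (G.Adj c a ∧ G.Adj c (m a)) := by
    intro a c h hnc
    by_contra hcon
    push_neg at hcon
    have n2 : ¬G.Adj a (m c) := hcon.1 h
    have n3 : ¬G.Adj c (m a) := hcon.2 h.symm
    have nbd : ¬G.Adj (m a) (m c) := sf a c h hnc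
    have hd1 : m a ≠ c := hnc.symm
    have hd2 : m a ≠ m c := fun e => h.ne (minj _ _ e)
    have hd3 : a ≠ m c := fun e => hnc (by rw [e, minv])
    exact no_p4 hG hd1 hd2 hd3 (madj a).symm h (madj c)
      (fun hx => n3 hx.symm) nbd n2
  have L2 : ∀ a c e, (G.Adj a c ∧ G.Adj a (m c)) → (G.Adj (m a) e ∧ G.Adj (m a) (m e)) →
      False := by
    intro a c e hd1 hd2
    obtain ⟨h1, h2⟩ := hd1
    obtain ⟨g1, g2⟩ := hd2
    have st1 := star a c ⟨h1, h2⟩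
    have st2' := star (m a) e ⟨g1, g2⟩
    rw [minv] at st2'
    obtain ⟨st2a, st2b⟩ := st2'
    obtain ⟨dn1, dn2, dn3, dn4⟩ := dom_ne a c ⟨h1, h2⟩
    obtain ⟨en1, en2, en3, en4⟩ := dom_ne (m a) e ⟨g1, g2⟩
    rw [minv] at en1 en2
    -- e ∉ {c, m c}
    have hec : e ≠ c := by rintro rfl; exact st1.1 g1
    have hemc : e ≠ m c := by rintro rfl; exact st1.2 g1
    by_cases hce : G.Adj c e
    · have nmm : ¬G.Adj (m c) (m e) := sf c e hce hemc
      -- P4 : (m c) - a - (m a) - (m e)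
      refine no_p4 hG ?_ ?_ ?_ h2.symm (madj a) g2
        (fun hx => st1.2 hx.symm) nmm st2b
      · exact fun h => dn2 h
      · exact fun h => hec (minj _ _ h).symm
      · exact fun h => en2 h.symm
    · -- P4 : c - a - (m a) - e
      refine no_p4 hG ?_ ?_ ?_ h1.symm (madj a) g1
        (fun hx => st1.1 hx.symm) hce st2a
      · exact dn1
      · exact fun h => hec h.symm
      · exact fun h => en1 h.symm
  have L3 : ∀ a c e, (G.Adj a c ∧ G.Adj a (m c)) → (G.Adj c e ∧ G.Adj c (m e)) →
      (G.Adj a e ∧ G.Adj a (m e)) := by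
    intro a c e hd1 hd2
    obtain ⟨h1, h2⟩ := hd1
    obtain ⟨g1, g2⟩ := hd2
    have st1 := star a c ⟨h1, h2⟩
    have st2 := star c e ⟨g1, g2⟩
    obtain ⟨dn1, dn2, dn3, dn4⟩ := dom_ne a c ⟨h1, h2⟩
    obtain ⟨en1, en2, en3, en4⟩ := dom_ne c e ⟨g1, g2⟩
    have hea : e ≠ a := by rintro rfl; exact st1.1 g2.symm
    have hema : e ≠ m a := by rintro rfl; exact st1.1 g1.symm
    have hmea : m e ≠ a := fun h => hema (by rw [← h, minv])
    have hmema : m e ≠ m a := fun h => hea (minj _ _ h)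
    -- no vertex in pair of e is adjacent to both a and m a
    have ne_b : ∀ y, (y = e ∨ y = m e) → G.Adj y a → G.Adj y (m a) → False := by
      intro y hy hya hyma
      have hcy : G.Adj c y := by rcases hy with rfl | rfl; exacts [g1, g2]
      have hmcy : ¬G.Adj (m c) y := by rcases hy with rfl | rfl; exacts [st2.1, st2.2]
      have hmcne : m c ≠ y := by
        rcases hy with rfl | rfl
        · exact fun h => en1 h.symm
        · exact fun h => en3 (minj _ _ h).symm
      -- P4 : (m c) - c - y - (m a)
      exact no_p4 hG hmcne (fun h => dn3 (minj _ _ h)) dn1 (madj c).symm hcy hyma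
        hmcy (fun h => st1.2 h.symm) (fun h => st1.1 h.symm)
    have hcross : G.Adj a e ∨ G.Adj a (m e) ∨ G.Adj (m a) e ∨ G.Adj (m a) (m e) := by
      by_contra hno
      push_neg at hno
      -- P4 : e - c - a - (m a)
      exact no_p4 hG (fun h => hea h) (fun h => hema h) dn1 g1.symm h1.symm (madj a)
        (fun hx => hno.1 hx.symm) (fun hx => hno.2.2.1 hx.symm) (fun hx => st1.1 hx.symm)
    rcases hcross with h | h | h | h
    · rcases L1 a e h hema with hd | hd
      · exact hd
      · exact (ne_b e (Or.inl rfl) hd.1 hd.2).elim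
    · rcases L1 a (m e) h hmema with hd | hd
      · rw [minv] at hd
        exact ⟨hd.2, hd.1⟩
      · exact (ne_b (m e) (Or.inr rfl) hd.1 hd.2).elim
    · rcases L1 (m a) e h (by rw [minv]; exact hea) with hd | hd
      · exact (L2 a c e ⟨h1, h2⟩ hd).elim
      · rw [minv] at hd
        exact (ne_b e (Or.inl rfl) hd.2 hd.1).elim
    · rcases L1 (m a) (m e) h (by rw [minv]; exact hmea) with hd | hd
      · exact (L2 a c (m e) ⟨h1, h2⟩ hd).elim
      · rw [minv] at hd
        exact (ne_b (m e) (Or.inr rfl) hd.2 hd.1).elim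
  -- every vertex has a second neighbour
  have hdeg' : ∀ v : V, ∃ y, G.Adj v y ∧ y ≠ m v := by
    intro v
    by_contra hno
    push_neg at hno
    exact hdeg v ⟨m v, madj v, fun y hy => hno y hy⟩
  -- every pair is dominated
  have claimA : ∀ x : V, ∃ z, G.Adj z x ∧ G.Adj z (m x) := by
    intro x
    obtain ⟨y, hy, hy2⟩ := hdeg' x
    rcases L1 x y hy hy2 with hd | hd
    · obtain ⟨y', hy', hy2'⟩ := hdeg' (m x)
      rcases L1 (m x) y' hy' hy2' with hd' | hd'
      · exact (L2 x y y' hd hd').elim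
      · rw [minv] at hd'
        exact ⟨y', hd'.2, hd'.1⟩
    · exact ⟨y, hd⟩
  -- infinite strictly dominating chain in a finite graph: contradiction
  choose nx hnx using claimA
  obtain ⟨x0⟩ := hne
  let seq : ℕ → V := fun n => nx^[n] x0
  have hseq : ∀ n, G.Adj (seq (n+1)) (seq n) ∧ G.Adj (seq (n+1)) (m (seq n)) := by
    intro n
    have : seq (n+1) = nx (seq n) := Function.iterate_succ_apply' nx n x0
    rw [this]
    exact hnx (seq n)
  have htrans : ∀ i j, i < j → G.Adj (seq j) (seq i) ∧ G.Adj (seq j) (m (seq i)) := by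
    intro i j hij
    induction j with
    | zero => exact absurd hij (Nat.not_lt_zero i)
    | succ j ih =>
      rcases Nat.lt_succ_iff_lt_or_eq.mp hij with h | h
      · exact L3 _ _ _ (hseq j) (ih h)
      · rw [h]
        exact hseq j
  have hinj : Function.Injective seq := by
    intro i j hij
    rcases lt_trichotomy i j with hl | he | hl
    · exact absurd (htrans i j hl).1 (by rw [hij]; exact G.irrefl)
    · exact he
    · exact absurd (htrans j i hl).1 (by rw [hij]; exact G.irrefl)
  obtain ⟨i, j, hne', heq⟩ := Finite.exists_ne_map_eq_of_infinite seq
  exact hne' (hinj heq)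
end DegreeOne

section Transfer
variable {V : Type*} {G : SimpleGraph V}
open SimpleGraph

/-- Complement of the pair `{u₀, w₀}`. -/
def pairCompl (u₀ w₀ : V) : Set V := {x | x ≠ u₀ ∧ x ≠ w₀}

/-- Restrict a subgraph of `G` to the induced graph on the complement of a pair. -/
def restrictSub (G : SimpleGraph V) (u₀ w₀ : V) (M : G.Subgraph) :
    (G.induce (pairCompl u₀ w₀)).Subgraph where
  verts := Set.univ
  Adj a b := M.Adj a b
  adj_sub := fun h => M.adj_sub h
  edge_vert := fun _ => Set.mem_univ _
  symm := ⟨fun _ _ h => M.adj_symm h⟩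

/-- Extend a subgraph of the induced graph by the matching edge `u₀w₀`. -/
def extendSub (G : SimpleGraph V) (u₀ w₀ : V) (h : G.Adj u₀ w₀)
    (M' : (G.induce (pairCompl u₀ w₀)).Subgraph) : G.Subgraph where
  verts := Set.univ
  Adj x y := (x = u₀ ∧ y = w₀) ∨ (x = w₀ ∧ y = u₀) ∨
    ∃ (hx : x ∈ pairCompl u₀ w₀) (hy : y ∈ pairCompl u₀ w₀), M'.Adj ⟨x, hx⟩ ⟨y, hy⟩
  adj_sub := by
    rintro x y (⟨rfl, rfl⟩ | ⟨rfl, rfl⟩ | ⟨hx, hy, hxy⟩)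
    · exact h
    · exact h.symm
    · exact M'.adj_sub hxy
  edge_vert := fun _ => Set.mem_univ _
  symm := Std.Symm.mk <| by
    rintro x y (⟨rfl, rfl⟩ | ⟨rfl, rfl⟩ | ⟨hx, hy, hxy⟩)
    · exact Or.inr (Or.inl ⟨rfl, rfl⟩)
    · exact Or.inl ⟨rfl, rfl⟩
    · exact Or.inr (Or.inr ⟨hy, hx, hxy.symm⟩)

variable {u₀ w₀ : V}

lemma matched_pair (hadj : G.Adj u₀ w₀) (hu : ∀ x, G.Adj u₀ x → x = w₀)
    {M : G.Subgraph} (hM : M.IsPerfectMatching) : M.Adj u₀ w₀ := by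
  obtain ⟨p, hp, hpu⟩ := hM.1 (hM.2 u₀)
  have := hu p (M.adj_sub hp)
  rwa [this] at hp

lemma restrict_pm (hadj : G.Adj u₀ w₀) (hu : ∀ x, G.Adj u₀ x → x = w₀)
    {M : G.Subgraph} (hM : M.IsPerfectMatching) :
    (restrictSub G u₀ w₀ M).IsPerfectMatching := by
  have hMu : M.Adj u₀ w₀ := matched_pair hadj hu hM
  constructor
  · rintro ⟨v, hv1, hv2⟩ -
    obtain ⟨w, hw, hwu⟩ := hM.1 (hM.2 v)
    have hw1 : w ≠ u₀ := by
      rintro rfl; exact hv2 (pm_partner_unique hM hw.symm hMu)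
    have hw2 : w ≠ w₀ := by
      rintro rfl; exact hv1 (pm_partner_unique hM hw.symm hMu.symm)
    refine ⟨⟨w, hw1, hw2⟩, hw, ?_⟩
    rintro ⟨y, hy1, hy2⟩ hy
    exact Subtype.ext (hwu _ hy)
  · rintro ⟨v, hv⟩; exact Set.mem_univ _

lemma extend_pm (hadj : G.Adj u₀ w₀)
    {M' : (G.induce (pairCompl u₀ w₀)).Subgraph} (hM' : M'.IsPerfectMatching) :
    (extendSub G u₀ w₀ hadj M').IsPerfectMatching := by
  have hne : u₀ ≠ w₀ := hadj.ne
  constructor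
  · intro v _
    by_cases h0 : v = u₀
    · subst h0
      refine ⟨w₀, Or.inl ⟨rfl, rfl⟩, ?_⟩
      rintro y (⟨-, rfl⟩ | ⟨h, -⟩ | ⟨hx, -, -⟩)
      · rfl
      · exact (hne h).elim
      · exact (hx.1 rfl).elim
    by_cases h1 : v = w₀
    · subst h1
      refine ⟨u₀, Or.inr (Or.inl ⟨rfl, rfl⟩), ?_⟩
      rintro y (⟨h, -⟩ | ⟨-, rfl⟩ | ⟨hx, -, -⟩)
      · exact (hne h.symm).elim
      · rfl
      · exact (hx.2 rfl).elim
    · have hv : v ∈ pairCompl u₀ w₀ := ⟨h0, h1⟩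
      obtain ⟨w, hw, hwu⟩ := hM'.1 (hM'.2 ⟨v, hv⟩)
      refine ⟨↑w, Or.inr (Or.inr ⟨hv, w.2, hw⟩), ?_⟩
      rintro y (⟨h, -⟩ | ⟨h, -⟩ | ⟨hy1, hy2, hy⟩)
      · exact (h0 h).elim
      · exact (h1 h).elim
      · exact congrArg Subtype.val (hwu ⟨y, hy2⟩ hy)
  · intro v; exact Set.mem_univ _

lemma unique_pm_transfer (hadj : G.Adj u₀ w₀) (hu : ∀ x, G.Adj u₀ x → x = w₀) :
    (∃! M : G.Subgraph, M.IsPerfectMatching) ↔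
    (∃! M' : (G.induce (pairCompl u₀ w₀)).Subgraph, M'.IsPerfectMatching) := by
  constructor
  · rintro ⟨M, hM, hMu⟩
    refine ⟨restrictSub G u₀ w₀ M, restrict_pm hadj hu hM, ?_⟩
    intro N' hN'
    have hEq : extendSub G u₀ w₀ hadj N' = M := hMu _ (extend_pm hadj hN')
    rw [← hEq]
    refine SimpleGraph.Subgraph.ext ?_ ?_
    · exact (Set.eq_univ_iff_forall.mpr hN'.2).trans rfl
    · funext a b
      apply propext
      constructor
      · intro h
        exact Or.inr (Or.inr ⟨a.2, b.2, h⟩)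
      · rintro (⟨h, -⟩ | ⟨h, -⟩ | ⟨ha, hb, h⟩)
        · exact (a.2.1 h).elim
        · exact (a.2.2 h).elim
        · exact h
  · rintro ⟨M', hM', hMu'⟩
    refine ⟨extendSub G u₀ w₀ hadj M', extend_pm hadj hM', ?_⟩
    intro N hN
    have hNu : N.Adj u₀ w₀ := matched_pair hadj hu hN
    have hEq : restrictSub G u₀ w₀ N = M' := hMu' _ (restrict_pm hadj hu hN)
    rw [← hEq]
    refine SimpleGraph.Subgraph.ext ?_ ?_
    · exact (Set.eq_univ_iff_forall.mpr hN.2).trans rfl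
    · funext x y
      apply propext
      constructor
      · intro h
        by_cases hx0 : x = u₀
        · subst hx0
          exact Or.inl ⟨rfl, hu y (N.adj_sub h)⟩
        by_cases hx1 : x = w₀
        · subst hx1
          exact Or.inr (Or.inl ⟨rfl, pm_partner_unique hN h hNu.symm⟩)
        · have hy0 : y ≠ u₀ := by
            rintro rfl; exact hx1 (hu x (N.adj_sub h.symm))
          have hy1 : y ≠ w₀ := by
            rintro rfl; exact hx0 (pm_partner_unique hN h.symm hNu.symm)
          exact Or.inr (Or.inr ⟨⟨hx0, hx1⟩, ⟨hy0, hy1⟩, h⟩)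
      · rintro (⟨rfl, rfl⟩ | ⟨rfl, rfl⟩ | ⟨hx, hy, h⟩)
        · exact hNu
        · exact hNu.symm
        · exact h

lemma IsCograph.induce (hG : IsCograph G) (s : Set V) : IsCograph (G.induce s) := by
  rintro ⟨f, hf, hadj⟩
  exact hG ⟨fun i => ↑(f i), fun i j h => hf (Subtype.ext h), fun i j => hadj i j⟩

lemma card_pairCompl [Fintype V] [Fintype (pairCompl u₀ w₀)] (hne : u₀ ≠ w₀) :
    Fintype.card (pairCompl u₀ w₀) = Fintype.card V - 2 := by
  classical
  have h1 : Fintype.card (pairCompl u₀ w₀) =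
      Fintype.card {x : V // ¬(x = u₀ ∨ x = w₀)} := by
    apply Fintype.card_congr
    apply Equiv.subtypeEquivRight
    intro x
    simp [pairCompl, not_or]
  rw [h1, Fintype.card_subtype_compl]
  congr 1
  rw [Fintype.card_subtype]
  rw [show (Finset.univ.filter fun x : V => x = u₀ ∨ x = w₀) = {u₀, w₀} by
    ext x; simp [or_comm]]
  rw [Finset.card_insert_of_notMem (by simp [hne]), Finset.card_singleton]

lemma mem_insert_nbhd_iff (hadj : G.Adj u₀ w₀) (hu : ∀ x, G.Adj u₀ x → x = w₀) (x : V) :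
    x ∈ insert u₀ (G.neighborSet u₀) ↔ (x = u₀ ∨ x = w₀) := by
  constructor
  · rintro (rfl | h)
    · exact Or.inl rfl
    · exact Or.inr (hu x h)
  · rintro (rfl | rfl)
    · exact Set.mem_insert _ _
    · exact Set.mem_insert_of_mem _ hadj

end Transfer

section Main
open SimpleGraph
universe u

lemma forward_aux : ∀ (n : ℕ) (V : Type u) [Fintype V] (G : SimpleGraph V),
    IsCograph G → Fintype.card V = n → (∃! M : G.Subgraph, M.IsPerfectMatching) →
    ∃ (k : ℕ) (u : Fin k → V), ForcesUPM G k u := by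
  intro n
  induction n using Nat.strong_induction_on with
  | _ n ih =>
    intro V _ G hG hcard hupm
    rcases Nat.eq_zero_or_pos n with hn | hn
    · subst hn
      haveI : IsEmpty V := Fintype.card_eq_zero_iff.mp hcard
      refine ⟨0, Fin.elim0, ?_, by simpa using hcard, fun i => i.elim0⟩
      intro a
      exact a.elim0
    · haveI hVne : Nonempty V := Fintype.card_pos_iff.mp (hcard ▸ hn)
      obtain ⟨M, hM, hMu⟩ := hupm
      obtain ⟨u₀, hw⟩ := exists_degree_one hG hM hMu hVne
      obtain ⟨w₀, hadj, hu⟩ := hw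
      classical
      haveI : Fintype (pairCompl u₀ w₀) := Fintype.ofFinite _
      have hcard' : Fintype.card (pairCompl u₀ w₀) = n - 2 := by
        rw [card_pairCompl hadj.ne, hcard]
      have hbig : 1 < Fintype.card V :=
        Fintype.one_lt_card_iff_nontrivial.mpr ⟨⟨u₀, w₀, hadj.ne⟩⟩
      have hupm' := (unique_pm_transfer hadj hu).mp ⟨M, hM, hMu⟩
      obtain ⟨k', u', hF⟩ := ih (n - 2) (by omega) (pairCompl u₀ w₀)
        (G.induce (pairCompl u₀ w₀)) (hG.induce _) hcard' hupm'
      have hmemtrans : ∀ (x y : pairCompl u₀ w₀),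
          (↑x : V) ∈ insert (↑y : V) (G.neighborSet ↑y) ↔
          x ∈ insert y ((G.induce (pairCompl u₀ w₀)).neighborSet y) := by
        intro x y
        simp only [Set.mem_insert_iff, SimpleGraph.mem_neighborSet]
        constructor
        · rintro (h | h)
          · exact Or.inl (Subtype.ext h)
          · exact Or.inr h
        · rintro (h | h)
          · exact Or.inl (congrArg Subtype.val h)
          · exact Or.inr h
      refine ⟨k' + 1, Fin.cases u₀ (fun i => ↑(u' i)), ?_, ?_, ?_⟩
      · intro i j hij
        rcases Fin.eq_zero_or_eq_succ i with rfl | ⟨i', rfl⟩ <;>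
          rcases Fin.eq_zero_or_eq_succ j with rfl | ⟨j', rfl⟩
        · rfl
        · simp only [Fin.cases_zero, Fin.cases_succ] at hij
          exact absurd hij.symm (u' j').2.1
        · simp only [Fin.cases_zero, Fin.cases_succ] at hij
          exact absurd hij (u' i').2.1
        · simp only [Fin.cases_succ] at hij
          exact congrArg Fin.succ (hF.1 (Subtype.ext hij))
      · have h1 := hF.2.1
        rw [hcard'] at h1
        omega
      · intro i
        rcases Fin.eq_zero_or_eq_succ i with rfl | ⟨i', rfl⟩
        · constructor
          · intro j hj
            exact absurd hj (Fin.not_lt_zero j)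
          · refine ⟨w₀, ⟨fun j hj => absurd hj (Fin.not_lt_zero j), by simpa using hadj⟩, ?_⟩
            rintro y ⟨-, hy⟩
            exact hu y (by simpa using hy)
        · obtain ⟨hAcond, hAex⟩ := hF.2.2 i'
          constructor
          · intro j hj
            rcases Fin.eq_zero_or_eq_succ j with rfl | ⟨j', rfl⟩
            · simp only [Fin.cases_zero, Fin.cases_succ]
              intro hmem
              rcases (mem_insert_nbhd_iff hadj hu _).mp hmem with h | h
              · exact (u' i').2.1 h
              · exact (u' i').2.2 h
            · simp only [Fin.cases_succ]
              intro hmem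
              exact hAcond j' (Fin.succ_lt_succ_iff.mp hj) ((hmemtrans _ _).mp hmem)
          · obtain ⟨w', ⟨hw'cond, hw'adj⟩, hw'uniq⟩ := hAex
            refine ⟨↑w', ⟨?_, ?_⟩, ?_⟩
            · intro j hj
              rcases Fin.eq_zero_or_eq_succ j with rfl | ⟨j', rfl⟩
              · simp only [Fin.cases_zero]
                intro hmem
                rcases (mem_insert_nbhd_iff hadj hu _).mp hmem with h | h
                · exact w'.2.1 h
                · exact w'.2.2 h
              · simp only [Fin.cases_succ]
                intro hmem
                exact hw'cond j' (Fin.succ_lt_succ_iff.mp hj) ((hmemtrans _ _).mp hmem)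
            · simpa using hw'adj
            · rintro y ⟨hycond, hyadj⟩
              have hy0 := hycond 0 (Fin.succ_pos i')
              simp only [Fin.cases_zero] at hy0
              have hys : y ∈ pairCompl u₀ w₀ := by
                constructor
                · intro h
                  exact hy0 ((mem_insert_nbhd_iff hadj hu _).mpr (Or.inl h))
                · intro h
                  exact hy0 ((mem_insert_nbhd_iff hadj hu _).mpr (Or.inr h))
              refine congrArg Subtype.val (hw'uniq ⟨y, hys⟩ ⟨?_, ?_⟩)
              · intro j' hj' hmem
                apply hycond j'.succ (Fin.succ_lt_succ_iff.mpr hj')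
                simp only [Fin.cases_succ]
                exact (hmemtrans _ _).mpr hmem
              · simpa using hyadj

lemma backward_aux : ∀ (k : ℕ) (V : Type u) [Fintype V] (G : SimpleGraph V) (u : Fin k → V),
    ForcesUPM G k u → ∃! M : G.Subgraph, M.IsPerfectMatching := by
  intro k
  induction k with
  | zero =>
    intro V _ G u hF
    haveI : IsEmpty V := Fintype.card_eq_zero_iff.mp (by simpa using hF.2.1)
    refine ⟨⟨Set.univ, fun _ _ => False, False.elim, False.elim, ⟨fun _ _ h => h⟩⟩,
      ⟨fun v _ => isEmptyElim v, fun v => Set.mem_univ v⟩, ?_⟩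
    intro N hN
    refine SimpleGraph.Subgraph.ext ?_ ?_
    · exact (Set.eq_univ_iff_forall.mpr hN.2).trans rfl
    · funext x
      exact isEmptyElim x
  | succ k ihk =>
    intro V _ G u hF
    obtain ⟨hinj, hcard, hcond⟩ := hF
    obtain ⟨hc0, hex0⟩ := hcond 0
    obtain ⟨w₀, ⟨-, hadj⟩, hw₀u⟩ := hex0
    have hu : ∀ x, G.Adj (u 0) x → x = w₀ := fun x hx =>
      hw₀u x ⟨fun j hj => absurd hj (Fin.not_lt_zero j), hx⟩
    classical
    haveI : Fintype (pairCompl (u 0) w₀) := Fintype.ofFinite _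
    have hmemtrans : ∀ (x y : pairCompl (u 0) w₀),
        (↑x : V) ∈ insert (↑y : V) (G.neighborSet ↑y) ↔
        x ∈ insert y ((G.induce (pairCompl (u 0) w₀)).neighborSet y) := by
      intro x y
      simp only [Set.mem_insert_iff, SimpleGraph.mem_neighborSet]
      constructor
      · rintro (h | h)
        · exact Or.inl (Subtype.ext h)
        · exact Or.inr h
      · rintro (h | h)
        · exact Or.inl (congrArg Subtype.val h)
        · exact Or.inr h
    have hmem : ∀ i : Fin k, (u i.succ) ∈ pairCompl (u 0) w₀ := by
      intro i
      have hthis := (hcond i.succ).1 0 (Fin.succ_pos i)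
      constructor
      · intro h
        exact hthis ((mem_insert_nbhd_iff hadj hu _).mpr (Or.inl h))
      · intro h
        exact hthis ((mem_insert_nbhd_iff hadj hu _).mpr (Or.inr h))
    have hF' : ForcesUPM (G.induce (pairCompl (u 0) w₀)) k (fun i => ⟨u i.succ, hmem i⟩) := by
      refine ⟨?_, ?_, ?_⟩
      · intro i j hij
        exact Fin.succ_injective _ (hinj (congrArg Subtype.val hij))
      · rw [card_pairCompl hadj.ne, hcard]; omega
      · intro i
        obtain ⟨hci, hei⟩ := hcond i.succ
        constructor
        · intro j hj hmem'
          apply hci j.succ (Fin.succ_lt_succ_iff.mpr hj)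
          exact (hmemtrans _ _).mpr hmem'
        · obtain ⟨w, ⟨hwc, hwadj⟩, hwu⟩ := hei
          have hws : w ∈ pairCompl (u 0) w₀ := by
            have h0 := hwc 0 (Fin.succ_pos i)
            constructor
            · intro h
              exact h0 ((mem_insert_nbhd_iff hadj hu _).mpr (Or.inl h))
            · intro h
              exact h0 ((mem_insert_nbhd_iff hadj hu _).mpr (Or.inr h))
          refine ⟨⟨w, hws⟩, ⟨?_, ?_⟩, ?_⟩
          · intro j hj hmem'
            exact hwc j.succ (Fin.succ_lt_succ_iff.mpr hj) ((hmemtrans _ _).mpr hmem')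
          · exact hwadj
          · rintro y ⟨hyc, hyadj⟩
            apply Subtype.ext
            apply hwu
            refine ⟨?_, hyadj⟩
            intro j hj
            rcases Fin.eq_zero_or_eq_succ j with rfl | ⟨j', rfl⟩
            · intro hmem'
              rcases (mem_insert_nbhd_iff hadj hu _).mp hmem' with h | h
              · exact y.2.1 h
              · exact y.2.2 h
            · intro hmem'
              exact hyc j' (Fin.succ_lt_succ_iff.mp hj) ((hmemtrans _ _).mp hmem')
    have hres := ihk (pairCompl (u 0) w₀) (G.induce (pairCompl (u 0) w₀))
      (fun i => ⟨u i.succ, hmem i⟩) hF'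
    exact (unique_pm_transfer hadj hu).mpr hres

end Main

theorem cograph_unique_pm_iff_forces {V : Type*} [Fintype V] (G : SimpleGraph V)
    (hG : IsCograph G) :
    (∃! M : G.Subgraph, M.IsPerfectMatching) ↔
      ∃ (k : ℕ) (u : Fin k → V), ForcesUPM G k u := by
  constructor
  · intro h
    exact forward_aux (Fintype.card V) V G hG rfl h
  · rintro ⟨k, u, hF⟩
    exact backward_aux k V G u hF
end

section
/- Every connected cograph of order at least 4 that has a unique perfect matching contains a vertex of degree 1. -/
open SimpleGraph

def HasIP4 {V : Type*} (G : SimpleGraph V) : Prop :=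
  ∃ f : Fin 4 → V, Function.Injective f ∧
      ∀ i j : Fin 4, G.Adj (f i) (f j) ↔ (SimpleGraph.pathGraph 4).Adj i j

lemma hasIP4_of {V : Type*} (G : SimpleGraph V) (a b c d : V)
    (hab : G.Adj a b) (hbc : G.Adj b c) (hcd : G.Adj c d)
    (hac : ¬ G.Adj a c) (had : ¬ G.Adj a d) (hbd : ¬ G.Adj b d) : HasIP4 G := by
  have hne_ab : a ≠ b := hab.ne
  have hne_bc : b ≠ c := hbc.ne
  have hne_cd : c ≠ d := hcd.ne
  have hne_ac : a ≠ c := by rintro rfl; exact had hcd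
  have hne_bd : b ≠ d := by rintro rfl; exact had hab
  have hne_ad : a ≠ d := by rintro rfl; exact hac (hcd.symm)
  refine ⟨![a,b,c,d], ?_, ?_⟩
  · intro i j h
    fin_cases i <;> fin_cases j <;> simp_all <;>
      first
        | rfl
        | exact absurd h hne_ab | exact absurd h hne_bc | exact absurd h hne_cd
        | exact absurd h hne_ac | exact absurd h hne_bd | exact absurd h hne_ad
        | exact absurd h.symm hne_ab | exact absurd h.symm hne_bc | exact absurd h.symm hne_cd
        | exact absurd h.symm hne_ac | exact absurd h.symm hne_bd | exact absurd h.symm hne_ad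
  · intro i j
    rw [pathGraph_adj]
    fin_cases i <;> fin_cases j <;> norm_num <;>
      first
        | assumption
        | exact hab.symm | exact hbc.symm | exact hcd.symm
        | exact fun h => hac h.symm | exact fun h => had h.symm | exact fun h => hbd h.symm
        | exact G.irrefl

lemma ip4_compl {V : Type*} {G : SimpleGraph V} (h : HasIP4 Gᶜ) : HasIP4 G := by
  obtain ⟨f, hf, hadj⟩ := h
  let σ : Fin 4 → Fin 4 := ![1,3,0,2]
  have hσ : Function.Injective σ := by decide
  refine ⟨f ∘ σ, hf.comp hσ, ?_⟩
  intro i j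
  have key : ∀ a b : Fin 4, G.Adj (f a) (f b) ↔ (a ≠ b ∧ ¬ (pathGraph 4).Adj a b) := by
    intro a b
    constructor
    · intro hg
      exact ⟨fun hh => G.irrefl (hh ▸ hg), fun hp => ((hadj a b).mpr hp).2 hg⟩
    · rintro ⟨hne, hp⟩
      by_contra hg
      exact hp ((hadj a b).mp ⟨hf.ne_iff.mpr hne, hg⟩)
  rw [Function.comp_apply, Function.comp_apply, key]
  simp only [pathGraph_adj]
  revert i j
  decide

lemma ip4_induce {V : Type*} {G : SimpleGraph V} {s : Set V}
    (h : HasIP4 (G.induce s)) : HasIP4 G := by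
  obtain ⟨f, hf, hadj⟩ := h
  exact ⟨fun i => (f i : V), Subtype.val_injective.comp hf, fun i j => hadj i j⟩

lemma compl_induce {V : Type*} (G : SimpleGraph V) (s : Set V) :
    (G.induce s)ᶜ = Gᶜ.induce s := by
  ext a b
  show a ≠ b ∧ ¬ G.Adj (a : V) (b : V) ↔ Gᶜ.Adj (a : V) (b : V)
  rw [compl_adj]
  exact and_congr_left' Subtype.coe_ne_coe.symm

lemma exists_adj_reachable (G : SimpleGraph V) (v : V) :
    ∀ {b e : V}, G.Walk b e → e = v → b ≠ v →
    ∃ (c : V) (hc : c ∈ ({v}ᶜ : Set V)) (hb : b ∈ ({v}ᶜ : Set V)), G.Adj v c ∧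
      (G.induce {v}ᶜ).Reachable ⟨b, hb⟩ ⟨c, hc⟩ := by
  intro b e p
  induction p with
  | nil => intro he hb; exact absurd he hb
  | @cons b z w h q ih =>
      intro he hb
      by_cases hz : z = v
      · exact ⟨b, by simpa using hb, by simpa using hb, (hz ▸ h).symm, Reachable.refl _⟩
      · obtain ⟨c, hc, hz', hadj, hr⟩ := ih he hz
        have hb' : b ∈ ({v}ᶜ : Set V) := by simpa using hb
        have hstep : (G.induce {v}ᶜ).Adj ⟨b, hb'⟩ ⟨z, hz'⟩ := by
          simpa [comap_adj] using h
        exact ⟨c, hc, hb', hadj, hstep.reachable.trans hr⟩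

lemma exists_drop (G : SimpleGraph V) (v : V) :
    ∀ {c b : ({v}ᶜ : Set V)}, (G.induce {v}ᶜ).Walk c b → G.Adj v c → ¬ G.Adj v b →
    ∃ c1 c2 : ({v}ᶜ : Set V), (G.induce {v}ᶜ).Adj c1 c2 ∧ G.Adj v c1 ∧ ¬ G.Adj v c2 ∧
      (G.induce {v}ᶜ).Reachable c1 b ∧ (G.induce {v}ᶜ).Reachable c2 b := by
  intro c b p
  induction p with
  | nil => intro h1 h2; exact absurd h1 h2
  | @cons c z w h q ih =>
      intro h1 h2
      by_cases hz : G.Adj v z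
      · obtain ⟨c1, c2, a1, a2, a3, a4, a5⟩ := ih hz h2
        exact ⟨c1, c2, a1, a2, a3, a4, a5⟩
      · exact ⟨c, z, h, h1, hz, h.reachable.trans q.reachable, q.reachable⟩

lemma L1 {V : Type*} (G : SimpleGraph V) (v : V) (hconn : G.Connected)
    (hnc : ¬ (G.induce {v}ᶜ).Connected) :
    HasIP4 G ∨ ∀ w, w ≠ v → G.Adj v w := by
  classical
  by_cases huniv : ∀ w, w ≠ v → G.Adj v w
  · exact Or.inr huniv
  push_neg at huniv
  obtain ⟨b, hbv, hvb⟩ := huniv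
  left
  have hbmem : b ∈ ({v}ᶜ : Set V) := by simpa using hbv
  have hnonempty : Nonempty ({v}ᶜ : Set V) := ⟨⟨b, hbmem⟩⟩
  rw [connected_iff] at hnc
  push_neg at hnc
  have hpre : ¬ (G.induce {v}ᶜ).Preconnected := fun hp => @IsEmpty.false _ (hnc hp) ⟨b, hbmem⟩
  unfold SimpleGraph.Preconnected at hpre
  push_neg at hpre
  obtain ⟨x, y, hxy⟩ := hpre
  -- neighbors of v reaching x and y
  obtain ⟨cx, hcx, hx', hvcx, hrx⟩ :=
    exists_adj_reachable G v ((hconn.preconnected (x : V) v).some) rfl x.2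
  obtain ⟨cy, hcy, hy', hvcy, hry⟩ :=
    exists_adj_reachable G v ((hconn.preconnected (y : V) v).some) rfl y.2
  obtain ⟨cb, hcb, hb', hvcb, hrb⟩ :=
    exists_adj_reachable G v ((hconn.preconnected b v).some) rfl hbv
  have hrx : (G.induce {v}ᶜ).Reachable x ⟨cx, hcx⟩ := by convert hrx
  have hry : (G.induce {v}ᶜ).Reachable y ⟨cy, hcy⟩ := by convert hry
  have hrb : (G.induce {v}ᶜ).Reachable ⟨b, hbmem⟩ ⟨cb, hcb⟩ := by convert hrb
  -- pick d adjacent to v, not reachable from b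
  have hd : ∃ (d : V) (hd : d ∈ ({v}ᶜ : Set V)), G.Adj v d ∧
      ¬ (G.induce {v}ᶜ).Reachable ⟨b, hbmem⟩ ⟨d, hd⟩ := by
    by_cases h1 : (G.induce {v}ᶜ).Reachable ⟨b, hbmem⟩ ⟨cx, hcx⟩
    · refine ⟨cy, hcy, hvcy, fun h2 => hxy ?_⟩
      exact (hrx.trans h1.symm).trans (h2.trans hry.symm)
    · exact ⟨cx, hcx, hvcx, h1⟩
  obtain ⟨d, hdmem, hvd, hbd⟩ := hd
  -- drop adjacency along walk from cb to b
  obtain ⟨c1, c2, hadj12, hv1, hv2, hr1, hr2⟩ :=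
    exists_drop G v (hrb.symm.some) hvcb hvb
  -- build the P4 : c2 - c1 - v - d
  have hG12 : G.Adj (c2 : V) (c1 : V) := hadj12.symm
  have hnr : ∀ (c : ({v}ᶜ : Set V)), (G.induce {v}ᶜ).Reachable c ⟨b, hbmem⟩ →
      ¬ G.Adj (c : V) d := by
    intro c hcreach hcd
    have : (G.induce {v}ᶜ).Adj c ⟨d, hdmem⟩ := by simpa [comap_adj] using hcd
    exact hbd (hcreach.symm.trans this.reachable)
  refine hasIP4_of G (c2 : V) (c1 : V) v d hG12 hv1.symm hvd ?_ ?_ ?_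
  · exact fun h => hv2 h.symm
  · exact hnr c2 hr2
  · exact hnr c1 hr1

lemma adj_of_reachable_card_le_two {V : Type*} [Fintype V] (G : SimpleGraph V)
    (h2 : Fintype.card V ≤ 2) {x y : V} (hxy : x ≠ y) (hr : G.Reachable x y) :
    G.Adj x y := by
  classical
  obtain ⟨p⟩ := hr
  cases p with
  | nil => exact absurd rfl hxy
  | @cons x z y h q =>
      by_cases hzy : z = y
      · exact hzy ▸ h
      · exfalso
        have h1 : x ≠ z := h.ne
        have : ({x, z, y} : Finset V).card ≤ 2 := le_trans (Finset.card_le_univ _) (by simpa using h2)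
        rw [Finset.card_insert_of_notMem (by simp [h1, hxy]),
          Finset.card_insert_of_notMem (by simp [hzy]), Finset.card_singleton] at this
        omega

lemma universal_not_connected_compl {V : Type*} (G : SimpleGraph V) (v : V)
    (huniv : ∀ w, w ≠ v → G.Adj v w) (w0 : V) (hw0 : w0 ≠ v) : ¬ Gᶜ.Connected := by
  intro hc
  obtain ⟨p⟩ := hc.preconnected v w0
  cases p with
  | nil => exact hw0 rfl
  | @cons x z y h q =>
      rw [compl_adj] at h
      exact h.2 (huniv z (fun hh => h.1 hh.symm))

lemma key_lemma : ∀ (n : ℕ) (V : Type u) [Fintype V] (G : SimpleGraph V),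
    Fintype.card V = n → 2 ≤ n → ¬ HasIP4 G → ¬ HasIP4 Gᶜ →
    G.Connected → ¬ Gᶜ.Connected := by
  intro n
  induction n using Nat.strong_induction_on with
  | _ n ih =>
    intro V _ G hcard h2 hco hcoc hconn hconnc
    classical
    by_cases h3 : n = 2
    · -- two vertices
      subst h3
      have : Nontrivial V := Fintype.one_lt_card_iff_nontrivial.mp (by omega)
      obtain ⟨x, y, hxy⟩ := this.exists_pair_ne
      have h1 := adj_of_reachable_card_le_two G (by omega) hxy (hconn.preconnected x y)
      have h2 := adj_of_reachable_card_le_two Gᶜ (by omega) hxy (hconnc.preconnected x y)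
      rw [compl_adj] at h2
      exact h2.2 h1
    · have h3' : 3 ≤ n := by omega
      have : Nontrivial V := Fintype.one_lt_card_iff_nontrivial.mp (by omega)
      obtain ⟨v⟩ : Nonempty V := inferInstance
      obtain ⟨w0, hw0⟩ := exists_ne v
      -- cardinality of the complement subtype
      have hcard' : Fintype.card ({v}ᶜ : Set V) = n - 1 := by
        rw [Fintype.card_compl_set, hcard]
        simp
      have hko : ¬ HasIP4 (G.induce {v}ᶜ) := fun h => hco (ip4_induce h)
      have hkoc : ¬ HasIP4 ((G.induce {v}ᶜ)ᶜ) := by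
        rw [compl_induce]
        exact fun h => hcoc (ip4_induce h)
      by_cases hGc : (G.induce {v}ᶜ).Connected
      · have hnc : ¬ ((G.induce {v}ᶜ)ᶜ).Connected :=
          ih (n-1) (by omega) _ _ hcard' (by omega) hko hkoc hGc
        rw [compl_induce] at hnc
        rcases L1 Gᶜ v hconnc hnc with h | h
        · exact hcoc h
        · have := universal_not_connected_compl Gᶜ v h w0 hw0
          rw [compl_compl] at this
          exact this hconn
      · rcases L1 G v hconn hGc with h | h
        · exact hco h
        · exact universal_not_connected_compl G v h w0 hw0 hconnc

lemma swap_pm {V : Type*} (G : SimpleGraph V) (M : G.Subgraph)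
    (hM : M.IsPerfectMatching) {a b c d : V}
    (hab : M.Adj a b) (hcd : M.Adj c d)
    (hac' : G.Adj a c) (hbd' : G.Adj b d)
    (h_ac : a ≠ c) (h_ad : a ≠ d) (h_bc : b ≠ c) (h_bd : b ≠ d) :
    ∃ M' : G.Subgraph, M'.IsPerfectMatching ∧ M' ≠ M := by
  classical
  have hm := SimpleGraph.Subgraph.isPerfectMatching_iff.mp hM
  have h_ab : a ≠ b := (M.adj_sub hab).ne
  have h_cd : c ≠ d := (M.adj_sub hcd).ne
  set S : Set V := {a, b, c, d} with hS
  have haS : a ∈ S := by simp [hS]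
  have hbS : b ∈ S := by simp [hS]
  have hcS : c ∈ S := by simp [hS]
  have hdS : d ∈ S := by simp [hS]
  refine ⟨{ verts := Set.univ
            Adj := fun u w => (M.Adj u w ∧ u ∉ S ∧ w ∉ S) ∨ (u = a ∧ w = c) ∨ (u = c ∧ w = a) ∨
              (u = b ∧ w = d) ∨ (u = d ∧ w = b)
            adj_sub := ?_
            edge_vert := fun _ => Set.mem_univ _
            symm := ?_ }, ?_, ?_⟩
  · rintro u w (⟨h, -, -⟩ | ⟨rfl, rfl⟩ | ⟨rfl, rfl⟩ | ⟨rfl, rfl⟩ | ⟨rfl, rfl⟩)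
    · exact M.adj_sub h
    · exact hac'
    · exact hac'.symm
    · exact hbd'
    · exact hbd'.symm
  · refine ⟨?_⟩
    rintro u w (⟨h, h1, h2⟩ | ⟨rfl, rfl⟩ | ⟨rfl, rfl⟩ | ⟨rfl, rfl⟩ | ⟨rfl, rfl⟩)
    · exact Or.inl ⟨h.symm, h2, h1⟩
    · exact Or.inr (Or.inr (Or.inl ⟨rfl, rfl⟩))
    · exact Or.inr (Or.inl ⟨rfl, rfl⟩)
    · exact Or.inr (Or.inr (Or.inr (Or.inr ⟨rfl, rfl⟩)))
    · exact Or.inr (Or.inr (Or.inr (Or.inl ⟨rfl, rfl⟩)))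
  · rw [SimpleGraph.Subgraph.isPerfectMatching_iff]
    intro v
    -- helper: partner of elements of S inside M
    have partner_unique : ∀ {x y z : V}, M.Adj x y → M.Adj x z → y = z := by
      intro x y z h1 h2
      obtain ⟨w, -, hw⟩ := hm x
      rw [hw y h1, hw z h2]
    by_cases hvS : v ∈ S
    · rcases hvS with rfl | rfl | rfl | rfl
      · refine ⟨c, Or.inr (Or.inl ⟨rfl, rfl⟩), ?_⟩
        rintro w (⟨-, h1, -⟩ | ⟨-, rfl⟩ | ⟨h1, -⟩ | ⟨h1, -⟩ | ⟨h1, -⟩)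
        · exact absurd haS h1
        · rfl
        · exact absurd h1 h_ac
        · exact absurd h1 h_ab
        · exact absurd h1 h_ad
      · refine ⟨d, Or.inr (Or.inr (Or.inr (Or.inl ⟨rfl, rfl⟩))), ?_⟩
        rintro w (⟨-, h1, -⟩ | ⟨h1, -⟩ | ⟨h1, -⟩ | ⟨-, rfl⟩ | ⟨h1, -⟩)
        · exact absurd hbS h1
        · exact absurd h1 h_ab.symm
        · exact absurd h1 h_bc
        · rfl
        · exact absurd h1 h_bd
      · refine ⟨a, Or.inr (Or.inr (Or.inl ⟨rfl, rfl⟩)), ?_⟩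
        rintro w (⟨-, h1, -⟩ | ⟨h1, -⟩ | ⟨-, rfl⟩ | ⟨h1, -⟩ | ⟨h1, -⟩)
        · exact absurd hcS h1
        · exact absurd h1 h_ac.symm
        · rfl
        · exact absurd h1 h_bc.symm
        · exact absurd h1 h_cd
      · refine ⟨b, Or.inr (Or.inr (Or.inr (Or.inr ⟨rfl, rfl⟩))), ?_⟩
        rintro w (⟨-, h1, -⟩ | ⟨h1, -⟩ | ⟨h1, -⟩ | ⟨h1, -⟩ | ⟨-, rfl⟩)
        · exact absurd hdS h1
        · exact absurd h1 h_ad.symm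
        · exact absurd h1 h_cd.symm
        · exact absurd h1 h_bd.symm
        · rfl
    · obtain ⟨w, hw, hwu⟩ := hm v
      have hwS : w ∉ S := by
        rintro (rfl | rfl | rfl | rfl)
        · exact hvS (partner_unique hw.symm hab ▸ hbS)
        · exact hvS (partner_unique hw.symm hab.symm ▸ haS)
        · exact hvS (partner_unique hw.symm hcd ▸ hdS)
        · exact hvS (partner_unique hw.symm hcd.symm ▸ hcS)
      refine ⟨w, Or.inl ⟨hw, hvS, hwS⟩, ?_⟩
      rintro u (⟨h1, -, -⟩ | ⟨h1, -⟩ | ⟨h1, -⟩ | ⟨h1, -⟩ | ⟨h1, -⟩)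
      · exact hwu u h1
      all_goals exact absurd (h1 ▸ hvS) (by simp [hS])
  · intro heq
    have h2 : M.Adj a c := by
      rw [← heq]
      exact Or.inr (Or.inl ⟨rfl, rfl⟩)
    obtain ⟨w, -, hw⟩ := hm a
    exact h_bc ((hw b hab).trans (hw c h2).symm)

lemma deg_one_of_universal {V : Type*} [Fintype V] [DecidableEq V] (G : SimpleGraph V)
    [DecidableRel G.Adj] (M : G.Subgraph) (hM : M.IsPerfectMatching)
    (huniq : ∀ M' : G.Subgraph, M'.IsPerfectMatching → M' = M)
    (v : V) (huniv : ∀ w, w ≠ v → G.Adj v w) : ∃ u, G.degree u = 1 := by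
  classical
  have hm := SimpleGraph.Subgraph.isPerfectMatching_iff.mp hM
  obtain ⟨u, hu, huu⟩ := hm v
  have hGvu : G.Adj v u := M.adj_sub hu
  have honly : ∀ w, G.Adj u w → w = v := by
    intro w hw
    by_contra hwv
    obtain ⟨z, hz, hzu⟩ := hm w
    have hwu : w ≠ u := hw.ne'
    have hzv : z ≠ v := by
      rintro rfl
      exact hwu (huu w hz.symm)
    have hzu' : u ≠ z := by
      rintro rfl
      obtain ⟨p, hp, hpu⟩ := hm u
      exact hwv ((hpu w hz.symm).trans (hpu v hu.symm).symm)
    obtain ⟨M', hM', hne⟩ := swap_pm G M hM hu.symm hz hw (huniv z hzv)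
      (fun h => hwu h.symm) hzu' (fun h => hwv h.symm) (fun h => hzv h.symm)
    exact hne (huniq M' hM')
  have hnb : G.neighborFinset u = {v} := by
    ext w
    simp only [SimpleGraph.mem_neighborFinset, Finset.mem_singleton]
    exact ⟨honly w, fun h => h ▸ hGvu.symm⟩
  exact ⟨u, by rw [← SimpleGraph.card_neighborFinset_eq_degree, hnb, Finset.card_singleton]⟩

theorem connected_cograph_unique_pm_degree_one {V : Type*} [Fintype V]
    [DecidableEq V] (G : SimpleGraph V) [DecidableRel G.Adj]
    (hco : IsCograph G) (hconn : G.Connected) (hcard : 4 ≤ Fintype.card V)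
    (hupm : ∃! M : G.Subgraph, M.IsPerfectMatching) :
    ∃ v : V, G.degree v = 1 := by
  classical
  obtain ⟨M, hM, huniq'⟩ := hupm
  have huniq : ∀ M' : G.Subgraph, M'.IsPerfectMatching → M' = M := fun M' h => huniq' M' h
  have hco' : ¬ HasIP4 G := hco
  have hncc : ¬ Gᶜ.Connected :=
    key_lemma (Fintype.card V) V G rfl (by omega) hco' (fun h => hco' (ip4_compl h)) hconn
  haveI hne : Nonempty V := Fintype.card_pos_iff.mp (by omega)
  have hpre : ¬ Gᶜ.Preconnected := fun hp => hncc ⟨hp⟩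
  unfold SimpleGraph.Preconnected at hpre
  push_neg at hpre
  obtain ⟨x, y, hxy⟩ := hpre
  set A : Set V := {w | Gᶜ.Reachable x w} with hA
  have hxA : x ∈ A := SimpleGraph.Reachable.refl x
  have hyA : y ∉ A := hxy
  have cross : ∀ a ∈ A, ∀ b, b ∉ A → G.Adj a b := by
    intro a ha bb hb
    have hab : a ≠ bb := by rintro rfl; exact hb ha
    by_contra hadj
    exact hb (SimpleGraph.Reachable.trans ha
      (SimpleGraph.Adj.reachable ((G.compl_adj a bb).mpr ⟨hab, hadj⟩)))
  have hm := SimpleGraph.Subgraph.isPerfectMatching_iff.mp hM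
  by_cases hA2 : ∃ a1 ∈ A, ∃ a2 ∈ A, a1 ≠ a2
  · by_cases hB2 : ∃ b1, b1 ∉ A ∧ ∃ b2, b2 ∉ A ∧ b1 ≠ b2
    · exfalso
      by_cases hiA : ∃ a a', a ∈ A ∧ a' ∈ A ∧ M.Adj a a'
      · by_cases hiB : ∃ b b', b ∉ A ∧ b' ∉ A ∧ M.Adj b b'
        · obtain ⟨a, a', haA, ha'A, haa⟩ := hiA
          obtain ⟨b, b', hbB, hb'B, hbb⟩ := hiB
          obtain ⟨M', hM', hne'⟩ := swap_pm G M hM haa hbb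
            (cross a haA b hbB) (cross a' ha'A b' hb'B)
            (fun h => hbB (h ▸ haA)) (fun h => hb'B (h ▸ haA))
            (fun h => hbB (h ▸ ha'A)) (fun h => hb'B (h ▸ ha'A))
          exact hne' (huniq M' hM')
        · -- every vertex outside A is matched into A
          push_neg at hiB
          obtain ⟨b1, hb1, b2, hb2, hb12⟩ := hB2
          obtain ⟨z1, hz1, -⟩ := hm b1
          obtain ⟨z2, hz2, -⟩ := hm b2
          have hz1A : z1 ∈ A := by
            by_contra h; exact hiB b1 z1 hb1 h hz1
          have hz2A : z2 ∈ A := by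
            by_contra h; exact hiB b2 z2 hb2 h hz2
          have hz12 : z1 ≠ z2 := by
            rintro rfl
            obtain ⟨p, -, hp⟩ := hm z1
            exact hb12 ((hp b1 hz1.symm).trans (hp b2 hz2.symm).symm)
          obtain ⟨M', hM', hne'⟩ := swap_pm G M hM hz1 hz2.symm
            ((cross z2 hz2A b1 hb1).symm) (cross z1 hz1A b2 hb2)
            (fun h => by subst h; exact hb1 hz2A) hb12 hz12
            (fun h => by subst h; exact hb2 hz1A)
          exact hne' (huniq M' hM')
      · -- every vertex in A is matched outside A
        push_neg at hiA
        obtain ⟨a1, ha1, a2, ha2, ha12⟩ := hA2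
        obtain ⟨z1, hz1, -⟩ := hm a1
        obtain ⟨z2, hz2, -⟩ := hm a2
        have hz1A : z1 ∉ A := fun h => hiA a1 z1 ha1 h hz1
        have hz2A : z2 ∉ A := fun h => hiA a2 z2 ha2 h hz2
        have hz12 : z1 ≠ z2 := by
          rintro rfl
          obtain ⟨p, -, hp⟩ := hm z1
          exact ha12 ((hp a1 hz1.symm).trans (hp a2 hz2.symm).symm)
        obtain ⟨M', hM', hne'⟩ := swap_pm G M hM hz1 hz2.symm
          (cross a1 ha1 z2 hz2A) ((cross a2 ha2 z1 hz1A).symm)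
          (fun h => by subst h; exact hz2A ha1) ha12 hz12
          (fun h => by rw [h] at hz1A; exact hz1A ha2)
        exact hne' (huniq M' hM')
    · push_neg at hB2
      have huniv : ∀ w, w ≠ y → G.Adj y w := by
        intro w hw
        have hwA : w ∈ A := by
          by_contra h
          exact hw (hB2 w h y hyA)
        exact (cross w hwA y hyA).symm
      exact deg_one_of_universal G M hM huniq y huniv
  · push_neg at hA2
    have huniv : ∀ w, w ≠ x → G.Adj x w := by
      intro w hw
      have hwA : w ∉ A := fun h => hw (hA2 w h x hxA)
      exact cross x hxA w hwA
    exact deg_one_of_universal G M hM huniq x huniv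
end

section
/- Every connected split graph of order at least 4 that has a unique perfect matching contains a vertex of degree 1. -/
open SimpleGraph
open scoped symmDiff

private lemma finish_lemma {V : Type*} {G : SimpleGraph V}
    {M : G.Subgraph} (hM : M.IsPerfectMatching)
    (huniq : ∀ M' : G.Subgraph, M'.IsPerfectMatching → M' = M)
    (G' : SimpleGraph V) (hle : G' ≤ G) (hne : G' ≠ ⊥)
    (h : ∀ v : V, (G'.neighborSet v).Nonempty →
      ∃ a b : V, a ≠ b ∧ G'.neighborSet v = {a, b} ∧ M.Adj v a ∧ ¬ M.Adj v b) :
    False := by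
  have hcyc : G'.IsCycles := fun v hv => by
    obtain ⟨a, b, hab, hset, -, -⟩ := h v hv
    rw [hset, Set.ncard_pair hab]
  have halt : G'.IsAlternating M.spanningCoe := by
    intro v w w' hww' hvw hvw'
    obtain ⟨a, b, hab, hset, hMa, hMb⟩ := h v ⟨w, hvw⟩
    have hw : w ∈ ({a, b} : Set V) := hset ▸ hvw
    have hw' : w' ∈ ({a, b} : Set V) := hset ▸ hvw'
    simp only [Set.mem_insert_iff, Set.mem_singleton_iff] at hw hw'
    simp only [Subgraph.spanningCoe_adj]
    rcases hw with rfl | rfl <;> rcases hw' with rfl | rfl <;> simp_all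
  have hle2 : M.spanningCoe ∆ G' ≤ G := by
    rw [symmDiff_def]
    exact sup_le (sdiff_le.trans M.spanningCoe_le) (sdiff_le.trans hle)
  have hpm' := Subgraph.IsPerfectMatching.symmDiff_of_isAlternating hM halt hcyc
  have hpm2 : (SimpleGraph.toSubgraph (M.spanningCoe ∆ G') hle2).IsPerfectMatching := by
    rw [Subgraph.isPerfectMatching_iff] at hpm' ⊢
    simpa using hpm'
  have heq := huniq _ hpm2
  have hAdj : ∀ u v, (M.spanningCoe ∆ G').Adj u v ↔ M.Adj u v := by
    intro u v
    conv_rhs => rw [← heq]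
    simp [toSubgraph_adj]
  apply hne
  ext u v
  simp only [bot_adj, iff_false]
  intro hG'
  have h1 := hAdj u v
  by_cases hMuv : M.Adj u v
  · simp [symmDiff_def, hG', hMuv, hMuv.adj_sub] at h1
  · simp [symmDiff_def, hG', hMuv] at h1

set_option maxHeartbeats 1000000 in
private lemma L4 {V : Type*} {G : SimpleGraph V} {M : G.Subgraph}
    (hM : M.IsPerfectMatching)
    (huniq : ∀ M' : G.Subgraph, M'.IsPerfectMatching → M' = M)
    {a b x y : V} (hax : a ≠ x) (hay : a ≠ y) (hbx : b ≠ x) (hby : b ≠ y)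
    (hab : M.Adj a b) (hxy : M.Adj x y) (hGbx : G.Adj b x) (hGya : G.Adj y a) :
    False := by
  have key := Subgraph.isPerfectMatching_iff.mp hM
  have huA : ∀ u w w', M.Adj u w → M.Adj u w' → w = w' := fun u w w' h1 h2 => by
    have hu := key u
    rw [hu.unique h1 h2]
  have hab' : a ≠ b := hab.ne
  have hxy' : x ≠ y := hxy.ne
  set G' : SimpleGraph V := fromEdgeSet {s(a,b), s(b,x), s(x,y), s(y,a)} with hG'
  have hle : G' ≤ G := by
    intro u v huv
    simp only [hG', fromEdgeSet_adj, Set.mem_insert_iff, Set.mem_singleton_iff,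
      Sym2.eq_iff] at huv
    obtain ⟨h1, -⟩ := huv
    rcases h1 with (⟨rfl,rfl⟩|⟨rfl,rfl⟩)|(⟨rfl,rfl⟩|⟨rfl,rfl⟩)|(⟨rfl,rfl⟩|⟨rfl,rfl⟩)|(⟨rfl,rfl⟩|⟨rfl,rfl⟩)
    exacts [hab.adj_sub, hab.symm.adj_sub, hGbx, hGbx.symm, hxy.adj_sub, hxy.symm.adj_sub,
      hGya, hGya.symm]
  have hadjab : G'.Adj a b := by
    simp [hG', fromEdgeSet_adj, hab']
  apply finish_lemma hM huniq G' hle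
  · intro hbot
    rw [hbot] at hadjab
    exact hadjab.elim
  · intro v hv
    obtain ⟨w, hw⟩ := hv
    have hvmem : v = a ∨ v = b ∨ v = x ∨ v = y := by
      simp only [hG', mem_neighborSet, fromEdgeSet_adj, Set.mem_insert_iff,
        Set.mem_singleton_iff, Sym2.eq_iff] at hw
      tauto
    have hset : ∀ (vv B Y : V), (∀ w, (G'.Adj vv w ↔ (w = B ∨ w = Y))) → G'.neighborSet vv = {B, Y} := by
      intro vv B Y hch
      ext w
      simp [mem_neighborSet, hch w]
    rcases hvmem with hveq | hveq | hveq | hveq <;> rw [hveq]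
    · refine ⟨b, y, hby, hset a b y (fun w => ?_), hab, fun h => hby (huA a b y hab h)⟩
      simp only [hG', fromEdgeSet_adj, Set.mem_insert_iff, Set.mem_singleton_iff, Sym2.eq_iff]
      constructor
      · rintro ⟨h, hne⟩; tauto
      · rintro (rfl | rfl) <;> tauto
    · refine ⟨a, x, hax, hset b a x (fun w => ?_), hab.symm, fun h => hax (huA b a x hab.symm h)⟩
      simp only [hG', fromEdgeSet_adj, Set.mem_insert_iff, Set.mem_singleton_iff, Sym2.eq_iff]
      constructor
      · rintro ⟨h, hne⟩; tauto
      · rintro (rfl | rfl) <;> tauto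
    · refine ⟨y, b, fun h => hby h.symm, hset x y b (fun w => ?_), hxy,
        fun h => hby (huA x y b hxy h).symm⟩
      simp only [hG', fromEdgeSet_adj, Set.mem_insert_iff, Set.mem_singleton_iff, Sym2.eq_iff]
      constructor
      · rintro ⟨h, hne⟩; tauto
      · rintro (rfl | rfl) <;> tauto
    · refine ⟨x, a, fun h => hax h.symm, hset y x a (fun w => ?_), hxy.symm,
        fun h => hax (huA y x a hxy.symm h).symm⟩
      simp only [hG', fromEdgeSet_adj, Set.mem_insert_iff, Set.mem_singleton_iff, Sym2.eq_iff]
      constructor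
      · rintro ⟨h, hne⟩; tauto
      · rintro (rfl | rfl) <;> tauto

/-- A split graph is a graph whose vertex set can be partitioned into an
independent set `S` and a clique `C`. -/
def IsSplitGraph {V : Type*} (G : SimpleGraph V) : Prop :=
  ∃ S C : Set V, Disjoint S C ∧ S ∪ C = Set.univ ∧
    (∀ a ∈ S, ∀ b ∈ S, ¬ G.Adj a b) ∧ G.IsClique C

set_option maxHeartbeats 1000000 in
theorem connected_split_unique_pm_degree_one {V : Type*} [Fintype V]
    [DecidableEq V] (G : SimpleGraph V) [DecidableRel G.Adj]
    (hsplit : IsSplitGraph G) (hconn : G.Connected) (hcard : 4 ≤ Fintype.card V)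
    (hupm : ∃! M : G.Subgraph, M.IsPerfectMatching) :
    ∃ v : V, G.degree v = 1 := by
  classical
  obtain ⟨M, hM, huniq'⟩ := hupm
  have huniq : ∀ M' : G.Subgraph, M'.IsPerfectMatching → M' = M := fun M' h => huniq' M' h
  by_contra hcon
  push_neg at hcon
  exfalso
  have key := Subgraph.isPerfectMatching_iff.mp hM
  have key' : ∀ v, ∃ w, M.Adj v w ∧ ∀ y, M.Adj v y → y = w := fun v => key v
  choose m hm hmu using key'
  -- m : V → V, hm : ∀ v, M.Adj v (m v), hmu : ∀ v y, M.Adj v y → y = m v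
  have hminv : ∀ v, m (m v) = v := fun v => (hmu (m v) v (hm v).symm).symm
  have hminj : Function.Injective m := fun u v h => by
    rw [← hminv u, h, hminv]
  have hGm : ∀ v, G.Adj v (m v) := fun v => M.adj_sub (hm v)
  have hmne : ∀ v, m v ≠ v := fun v h => G.loopless.irrefl v (by have := hGm v; rwa [h] at this)
  -- minimum degree 2 and a second neighbor
  have hsn' : ∀ v : V, ∃ w, G.Adj v w ∧ w ≠ m v := by
    intro v
    have h1 : 0 < G.degree v := (G.degree_pos_iff_exists_adj v).mpr ⟨m v, hGm v⟩
    have h2 : G.degree v ≠ 1 := hcon v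
    have h3 : 1 < (G.neighborFinset v).card := by
      rw [← degree]; omega
    obtain ⟨w, hw1, hw2⟩ := Finset.exists_mem_ne h3 (m v)
    exact ⟨w, (mem_neighborFinset G v w).mp hw1, hw2⟩
  choose sn hsn1 hsn2 using hsn'
  -- split structure
  obtain ⟨S, Cq, hdisj, huniv, hSind, hCcl⟩ := hsplit
  have hmem : ∀ v : V, v ∈ S ∨ v ∈ Cq := fun v => by
    have : v ∈ S ∪ Cq := huniv ▸ Set.mem_univ v
    exact this
  have hnotboth : ∀ v : V, v ∈ S → v ∈ Cq → False := fun v h1 h2 =>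
    Set.disjoint_left.mp hdisj h1 h2
  have hnbrC : ∀ s ∈ S, ∀ w, G.Adj s w → w ∈ Cq := by
    intro s hs w hw
    rcases hmem w with hwS | hwC
    · exact absurd hw (hSind s hs w hwS)
    · exact hwC
  rcases Set.eq_empty_or_nonempty S with hSe | ⟨s0, hs0⟩
  · -- S empty: V is a clique
    have hCuniv : ∀ v : V, v ∈ Cq := fun v => (hmem v).resolve_left (hSe ▸ id)
    have hne : Nonempty V := Fintype.card_pos_iff.mp (by omega)
    obtain ⟨a⟩ := hne
    have hxx : ∃ x : V, x ∉ ({a, m a} : Finset V) := by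
      by_contra hq
      push_neg at hq
      have hsub : (Finset.univ : Finset V) ⊆ {a, m a} := fun t _ => hq t
      have := Finset.card_le_card hsub
      have h2 : ({a, m a} : Finset V).card ≤ 2 := Finset.card_insert_le _ _ |>.trans (by simp)
      simp [Finset.card_univ] at this
      omega
    obtain ⟨x, hx⟩ := hxx
    simp only [Finset.mem_insert, Finset.mem_singleton, not_or] at hx
    obtain ⟨hxa, hxma⟩ := hx
    have hax : a ≠ x := fun h => hxa h.symm
    have hay : a ≠ m x := fun h => hxma (by rw [h, hminv])
    have hbx : m a ≠ x := fun h => hxma h.symm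
    have hby : m a ≠ m x := fun h => hax (hminj h)
    exact L4 hM huniq hax hay hbx hby (hm a) (hm x)
      (hCcl (hCuniv (m a)) (hCuniv x) hbx)
      (hCcl (hCuniv (m x)) (hCuniv a) (fun h => hay h.symm))
  · -- S nonempty: build the alternating cycle
    -- step lemma
    have hstep : ∀ s ∈ S, m (sn s) ∈ S := by
      intro s hs
      by_contra hmc
      have hcC : sn s ∈ Cq := hnbrC s hs _ (hsn1 s)
      have hmcC : m (sn s) ∈ Cq := (hmem _).resolve_left hmc
      have hmsC : m s ∈ Cq := hnbrC s hs _ (hGm s)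
      have h1 : s ≠ m (sn s) := fun h => hnotboth s hs (h ▸ hmcC)
      have h2 : s ≠ sn s := fun h => hnotboth s hs (h ▸ hcC)
      have h3 : m s ≠ m (sn s) := fun h => h2 (hminj h)
      have h4 : m s ≠ sn s := fun h => hsn2 s h.symm
      exact L4 hM huniq h1 h2 h3 h4 (hm s) (hm (sn s)).symm
        (hCcl hmsC hmcC h3) (hsn1 s).symm
    let F : ℕ → V := fun n => Nat.rec s0 (fun _ v => m (sn v)) n
    have hFs : ∀ n, F (n + 1) = m (sn (F n)) := fun n => rfl
    have hFS : ∀ n, F n ∈ S := by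
      intro n
      induction n with
      | zero => exact hs0
      | succ k ih => rw [hFs]; exact hstep _ ih
    have hFne : ∀ n, F (n + 1) ≠ F n := by
      intro n h
      rw [hFs] at h
      exact hsn2 (F n) (hminj (by rw [hminv, h]) : sn (F n) = m (F n))
    -- collision
    have hcoll : ∃ j, ∃ i, i < j ∧ F i = F j := by
      obtain ⟨p, q, hpq, hFpq⟩ := Finite.exists_ne_map_eq_of_infinite F
      rcases lt_or_gt_of_ne hpq with h | h
      · exact ⟨q, p, h, hFpq⟩
      · exact ⟨p, q, h, hFpq.symm⟩
    haveI : DecidablePred fun j => ∃ i, i < j ∧ F i = F j := fun _ => Classical.dec _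
    set j0 := Nat.find hcoll with hj0
    obtain ⟨i, hij, hFeq⟩ := Nat.find_spec hcoll
    have hFinj : ∀ p q, p < q → q < j0 → F p ≠ F q := by
      intro p q hpq hq h
      exact Nat.find_min hcoll hq ⟨p, hpq, h⟩
    set L := j0 - i with hL
    have hL2 : 2 ≤ L := by
      rcases Nat.lt_or_ge L 2 with h | h
      · interval_cases L
        · omega
        · have : j0 = i + 1 := by omega
          exact absurd (this ▸ hFeq.symm : F (i+1) = F i) (hFne i)
      · exact h
    haveI : NeZero L := ⟨by omega⟩
    haveI : Fact (1 < L) := ⟨by omega⟩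
    have hone0 : (1 : ZMod L) ≠ 0 := by
      intro h
      have h2 := congrArg ZMod.val h
      rw [ZMod.val_one, ZMod.val_zero] at h2
      omega
    let σ : ZMod L → V := fun k => F (i + k.val)
    have hσk : ∀ k : ZMod L, σ k = F (i + k.val) := fun _ => rfl
    have hsucc : ∀ k : ZMod L, σ (k + 1) = m (sn (σ k)) := by
      intro k
      rw [hσk, hσk, ← hFs]
      have h1 : (k + 1).val = (k.val + 1) % L := by rw [ZMod.val_add, ZMod.val_one]
      rcases Nat.lt_or_ge (k.val + 1) L with h | h
      · have h4 : i + (k + 1).val = i + k.val + 1 := by rw [h1, Nat.mod_eq_of_lt h]; omega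
        rw [h4]
      · have hkL : k.val + 1 = L := by have := ZMod.val_lt k; omega
        have h4 : i + (k + 1).val = i := by rw [h1, hkL, Nat.mod_self]; omega
        have h3 : i + k.val + 1 = j0 := by omega
        rw [h4, h3]
        exact hFeq
    have hσinj : Function.Injective σ := by
      intro k k' h
      rw [hσk, hσk] at h
      have hk := ZMod.val_lt k
      have hk' := ZMod.val_lt k'
      have hvv : i + k.val = i + k'.val := by
        by_contra hne2
        rcases Nat.lt_or_ge (i + k.val) (i + k'.val) with hlt | hge
        · exact hFinj _ _ hlt (by omega) h
        · exact hFinj _ _ (by omega) (by omega) h.symm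
      exact ZMod.val_injective L (by omega)
    let c : ZMod L → V := fun k => sn (σ k)
    have hmc : ∀ k, m (c k) = σ (k + 1) := fun k => (hsucc k).symm
    have hcm : ∀ k, c k = m (σ (k + 1)) := fun k => by rw [← hmc k, hminv]
    have hcinj : Function.Injective c := by
      intro k k' h
      rw [hcm, hcm] at h
      exact add_right_cancel (hσinj (hminj h))
    have hσS : ∀ k, σ k ∈ S := fun k => hFS _
    have hcC : ∀ k, c k ∈ Cq := fun k => hnbrC _ (hσS k) _ (hsn1 _)
    have hGsc : ∀ k, G.Adj (σ k) (c k) := fun k => hsn1 _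
    have hMcs : ∀ k, M.Adj (c k) (σ (k + 1)) := fun k => by rw [← hmc k]; exact hm (c k)
    have hscne : ∀ k k' : ZMod L, σ k ≠ c k' := fun k k' h => hnotboth _ (hσS k) (h ▸ hcC k')
    have hmσ : ∀ k, m (σ k) = c (k - 1) := fun k => by
      rw [hcm (k - 1), sub_add_cancel]
    let G' : SimpleGraph V :=
      fromEdgeSet {e | ∃ k : ZMod L, e = s(σ k, c k) ∨ e = s(c k, σ (k + 1))}
    have hG'adj : ∀ u v : V, G'.Adj u v ↔ ((∃ k : ZMod L,
        (u = σ k ∧ v = c k) ∨ (v = σ k ∧ u = c k) ∨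
        (u = c k ∧ v = σ (k + 1)) ∨ (v = c k ∧ u = σ (k + 1))) ∧ u ≠ v) := by
      intro u v
      show (fromEdgeSet _).Adj u v ↔ _
      rw [fromEdgeSet_adj]
      simp only [Set.mem_setOf_eq, Sym2.eq_iff]
      constructor
      · rintro ⟨⟨k, hk⟩, hne2⟩
        exact ⟨⟨k, by tauto⟩, hne2⟩
      · rintro ⟨⟨k, hk⟩, hne2⟩
        exact ⟨⟨k, by tauto⟩, hne2⟩
    have hG'le : G' ≤ G := by
      intro u v h
      rw [hG'adj] at h
      obtain ⟨⟨k, hk⟩, hne2⟩ := h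
      rcases hk with ⟨rfl, rfl⟩ | ⟨rfl, rfl⟩ | ⟨rfl, rfl⟩ | ⟨rfl, rfl⟩
      · exact hGsc k
      · exact (hGsc k).symm
      · exact M.adj_sub (hMcs k)
      · exact (M.adj_sub (hMcs k)).symm
    have hG'ne : G' ≠ ⊥ := by
      intro h
      have h2 : G'.Adj (σ 0) (c 0) := (hG'adj _ _).mpr ⟨⟨0, Or.inl ⟨rfl, rfl⟩⟩, hscne 0 0⟩
      rw [h] at h2
      exact h2.elim
    apply finish_lemma hM huniq G' hG'le hG'ne
    intro v hv
    obtain ⟨w, hw⟩ := hv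
    rw [mem_neighborSet, hG'adj] at hw
    obtain ⟨⟨k, hk⟩, hne2⟩ := hw
    have hcases : (∃ k1, v = σ k1) ∨ (∃ k1, v = c k1) := by
      rcases hk with ⟨h1, -⟩ | ⟨-, h1⟩ | ⟨h1, -⟩ | ⟨-, h1⟩
      · exact Or.inl ⟨k, h1⟩
      · exact Or.inr ⟨k, h1⟩
      · exact Or.inr ⟨k, h1⟩
      · exact Or.inl ⟨k + 1, h1⟩
    clear hk hne2
    rcases hcases with ⟨k0, rfl⟩ | ⟨k0, rfl⟩
    · refine ⟨c (k0 - 1), c k0, fun h => hone0 (sub_eq_self.mp (hcinj h)), ?_, ?_, ?_⟩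
      · ext w
        rw [mem_neighborSet, hG'adj]
        simp only [Set.mem_insert_iff, Set.mem_singleton_iff]
        constructor
        · rintro ⟨⟨k', hk'⟩, hnew⟩
          rcases hk' with ⟨h1, rfl⟩ | ⟨-, h1⟩ | ⟨h1, -⟩ | ⟨rfl, h1⟩
          · exact Or.inr (by rw [hσinj h1])
          · exact absurd h1 (hscne k0 k')
          · exact absurd h1 (hscne k0 k')
          · exact Or.inl (by rw [eq_sub_of_add_eq (hσinj h1).symm])
        · rintro (rfl | rfl)
          · exact ⟨⟨k0 - 1, Or.inr (Or.inr (Or.inr ⟨rfl, by rw [sub_add_cancel]⟩))⟩,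
              hscne k0 (k0 - 1)⟩
          · exact ⟨⟨k0, Or.inl ⟨rfl, rfl⟩⟩, hscne k0 k0⟩
      · have h2 := (hMcs (k0 - 1)).symm
        rwa [sub_add_cancel] at h2
      · intro h
        have h2 := hmu _ _ h
        rw [hmσ k0] at h2
        exact hone0 (sub_eq_self.mp (hcinj h2).symm)
    · refine ⟨σ (k0 + 1), σ k0, fun h => hone0 (add_eq_left.mp (hσinj h)), ?_, hMcs k0, ?_⟩
      · ext w
        rw [mem_neighborSet, hG'adj]
        simp only [Set.mem_insert_iff, Set.mem_singleton_iff]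
        constructor
        · rintro ⟨⟨k', hk'⟩, hnew⟩
          rcases hk' with ⟨h1, -⟩ | ⟨rfl, h1⟩ | ⟨h1, rfl⟩ | ⟨-, h1⟩
          · exact absurd h1.symm (hscne k' k0)
          · exact Or.inr (by rw [hcinj h1])
          · exact Or.inl (by rw [hcinj h1])
          · exact absurd h1.symm (hscne (k' + 1) k0)
        · rintro (rfl | rfl)
          · exact ⟨⟨k0, Or.inr (Or.inr (Or.inl ⟨rfl, rfl⟩))⟩, fun h => hscne (k0+1) k0 h.symm⟩
          · exact ⟨⟨k0, Or.inr (Or.inl ⟨rfl, rfl⟩)⟩, fun h => hscne k0 k0 h.symm⟩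
      · intro h
        have h2 := hmu _ _ h
        rw [hmc k0] at h2
        exact hone0 (add_eq_left.mp (hσinj h2.symm))
end

section
/- Let G be a finite simple graph with a unique perfect matching M, let v be a universal vertex of G (a vertex adjacent to all other vertices), and let u be the vertex with uv ∈ M. Then u has degree 1 in G, i.e., v is the only neighbor of u. -/
theorem universal_vertex_matched_to_degree_one {V : Type*} [Fintype V]
    (G : SimpleGraph V) (M : G.Subgraph) (hM : M.IsPerfectMatching)
    (huniq : ∀ M' : G.Subgraph, M'.IsPerfectMatching → M' = M)
    (v : V) (hv : ∀ w : V, w ≠ v → G.Adj v w)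
    (u : V) (huv : M.Adj u v) :
    ∀ w : V, G.Adj u w → w = v := by
  intro w hw
  by_contra hne
  have hm := hM.1
  have hsp := hM.2
  have key : ∀ a b c : V, M.Adj a b → M.Adj a c → b = c := by
    intro a b c hab hac
    obtain ⟨d, _, hd⟩ := hm (hsp a)
    rw [hd b hab, hd c hac]
  obtain ⟨w', hww', _⟩ := hm (hsp w)
  have huv_ne : u ≠ v := (M.adj_sub huv).ne
  have hwu : w ≠ u := (G.adj_symm hw).ne
  have hw'w : w' ≠ w := (M.adj_sub hww').symm.ne
  have hw'u : w' ≠ u := by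
    intro h; rw [h] at hww'
    exact hne (key u w v hww'.symm huv)
  have hw'v : w' ≠ v := by
    intro h; rw [h] at hww'
    exact hwu (key v w u hww'.symm huv.symm)
  let M' : G.Subgraph :=
    { verts := Set.univ
      Adj := fun a b =>
        (M.Adj a b ∧ a ≠ u ∧ a ≠ v ∧ a ≠ w ∧ a ≠ w' ∧ b ≠ u ∧ b ≠ v ∧ b ≠ w ∧ b ≠ w')
        ∨ (a = u ∧ b = w) ∨ (a = w ∧ b = u) ∨ (a = v ∧ b = w') ∨ (a = w' ∧ b = v)
      adj_sub := by
        rintro a b (⟨h, -⟩ | ⟨h1, h2⟩ | ⟨h1, h2⟩ | ⟨h1, h2⟩ | ⟨h1, h2⟩)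
        · exact M.adj_sub h
        · rw [h1, h2]; exact hw
        · rw [h1, h2]; exact hw.symm
        · rw [h1, h2]; exact hv w' hw'v
        · rw [h1, h2]; exact (hv w' hw'v).symm
      edge_vert := fun _ => Set.mem_univ _
      symm := by
        constructor
        rintro a b (⟨h, h1, h2, h3, h4, h5, h6, h7, h8⟩ | ⟨h1, h2⟩ | ⟨h1, h2⟩ | ⟨h1, h2⟩ | ⟨h1, h2⟩)
        · exact Or.inl ⟨h.symm, h5, h6, h7, h8, h1, h2, h3, h4⟩
        · exact Or.inr (Or.inr (Or.inl ⟨h2, h1⟩))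
        · exact Or.inr (Or.inl ⟨h2, h1⟩)
        · exact Or.inr (Or.inr (Or.inr (Or.inr ⟨h2, h1⟩)))
        · exact Or.inr (Or.inr (Or.inr (Or.inl ⟨h2, h1⟩))) }
  have hM' : M'.IsPerfectMatching := by
    rw [SimpleGraph.Subgraph.isPerfectMatching_iff]
    intro a
    by_cases ha_u : a = u
    · subst ha_u
      refine ⟨w, Or.inr (Or.inl ⟨rfl, rfl⟩), ?_⟩
      rintro b (⟨-, h1, -⟩ | ⟨-, rfl⟩ | ⟨h, -⟩ | ⟨h, -⟩ | ⟨h, -⟩)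
      · exact absurd rfl h1
      · rfl
      · exact absurd h.symm hwu
      · exact absurd h huv_ne
      · exact absurd h.symm hw'u
    by_cases ha_w : a = w
    · subst ha_w
      refine ⟨u, Or.inr (Or.inr (Or.inl ⟨rfl, rfl⟩)), ?_⟩
      rintro b (⟨-, -, -, h3, -⟩ | ⟨h, -⟩ | ⟨-, rfl⟩ | ⟨h, -⟩ | ⟨h, -⟩)
      · exact absurd rfl h3
      · exact absurd h hwu
      · rfl
      · exact absurd h hne
      · exact absurd h.symm hw'w
    by_cases ha_v : a = v
    · subst ha_v
      refine ⟨w', Or.inr (Or.inr (Or.inr (Or.inl ⟨rfl, rfl⟩))), ?_⟩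
      rintro b (⟨-, -, h2, -⟩ | ⟨h, -⟩ | ⟨h, -⟩ | ⟨-, rfl⟩ | ⟨h, -⟩)
      · exact absurd rfl h2
      · exact absurd h.symm huv_ne
      · exact absurd h.symm hne
      · rfl
      · exact absurd h.symm hw'v
    by_cases ha_w' : a = w'
    · subst ha_w'
      refine ⟨v, Or.inr (Or.inr (Or.inr (Or.inr ⟨rfl, rfl⟩))), ?_⟩
      rintro b (⟨-, -, -, -, h4, -⟩ | ⟨h, -⟩ | ⟨h, -⟩ | ⟨h, -⟩ | ⟨-, rfl⟩)
      · exact absurd rfl h4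
      · exact absurd h hw'u
      · exact absurd h hw'w
      · exact absurd h hw'v
      · rfl
    · obtain ⟨b, hab, hbuniq⟩ := hm (hsp a)
      have hbu : b ≠ u := fun h => ha_v (key u a v (h ▸ hab.symm) huv)
      have hbv : b ≠ v := fun h => ha_u (key v a u (h ▸ hab.symm) huv.symm)
      have hbw : b ≠ w := fun h => ha_w' (key w a w' (h ▸ hab.symm) hww')
      have hbw' : b ≠ w' := fun h => ha_w (key w' a w (h ▸ hab.symm) hww'.symm)
      refine ⟨b, Or.inl ⟨hab, ha_u, ha_v, ha_w, ha_w', hbu, hbv, hbw, hbw'⟩, ?_⟩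
      rintro c (⟨h, -⟩ | ⟨h, -⟩ | ⟨h, -⟩ | ⟨h, -⟩ | ⟨h, -⟩)
      · exact key a c b h hab
      · exact absurd h ha_u
      · exact absurd h ha_w
      · exact absurd h ha_v
      · exact absurd h ha_w'
  have hMM : M' = M := huniq M' hM'
  have : M.Adj u w := by
    rw [← hMM]; exact Or.inr (Or.inl ⟨rfl, rfl⟩)
  exact hne (key u w v this huv)
end

section
/- Let G be a finite simple graph with a unique perfect matching whose vertex set is partitioned into an independent set S and a clique C. Then |C| − |S| equals 0 or 2. -/
theorem split_partition_card_diff {V : Type*} [Fintype V] [DecidableEq V]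
    (G : SimpleGraph V) (S C : Finset V)
    (hdisj : Disjoint S C) (hunion : S ∪ C = Finset.univ)
    (hindep : ∀ a ∈ S, ∀ b ∈ S, ¬ G.Adj a b)
    (hclique : G.IsClique (C : Set V))
    (hupm : ∃! M : G.Subgraph, M.IsPerfectMatching) :
    C.card = S.card ∨ C.card = S.card + 2 := by
  obtain ⟨M, hM, huniq⟩ := hupm
  have hMm := hM.1
  have hMsp := hM.2
  have hpart : ∀ v : V, ∃! w, M.Adj v w := fun v => hMm (hMsp v)
  set f : V → V := fun v => (hpart v).choose with hf
  have hfadj : ∀ v, M.Adj v (f v) := fun v => (hpart v).choose_spec.1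
  have hfuniq : ∀ v w, M.Adj v w → w = f v := fun v w h => (hpart v).choose_spec.2 w h
  have hfinv : ∀ v, f (f v) = v := fun v => (hfuniq (f v) v (M.adj_symm (hfadj v))).symm
  have hfne : ∀ v, f v ≠ v := fun v h => G.irrefl (h ▸ (M.adj_sub (hfadj v)))
  have hfinj : Function.Injective f := fun x y h => by
    rw [← hfinv x, h, hfinv]
  have hmem : ∀ v : V, v ∉ S → v ∈ C := by
    intro v hv
    have h := Finset.mem_univ v
    rw [← hunion, Finset.mem_union] at h
    tauto
  have hfS : ∀ s ∈ S, f s ∈ C := by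
    intro s hs
    apply hmem
    intro h
    exact hindep s hs (f s) h (M.adj_sub (hfadj s))
  set FS := S.image f with hFS
  have hFSsub : FS ⊆ C := by
    intro x hx
    obtain ⟨s, hs, rfl⟩ := Finset.mem_image.mp hx
    exact hfS s hs
  have hFScard : FS.card = S.card := Finset.card_image_of_injective S hfinj
  set C2 := C \ FS with hC2
  have hcard : C.card = S.card + C2.card := by
    have h := Finset.card_sdiff_add_card_eq_card hFSsub
    rw [hC2]
    omega
  have hC2C : C2 ⊆ C := Finset.sdiff_subset
  have hC2f : ∀ x ∈ C2, f x ∈ C2 := by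
    intro x hx
    rw [hC2, Finset.mem_sdiff] at hx ⊢
    obtain ⟨hxC, hxFS⟩ := hx
    constructor
    · apply hmem
      intro h
      exact hxFS (Finset.mem_image.mpr ⟨f x, h, hfinv x⟩)
    · intro h
      obtain ⟨s, hs, hsf⟩ := Finset.mem_image.mp h
      have hsx : s = x := hfinj hsf
      exact (Finset.disjoint_left.mp hdisj (hsx ▸ hs)) hxC
  rcases Finset.eq_empty_or_nonempty C2 with h0 | ⟨c1, hc1⟩
  · left
    rw [hcard, h0]
    simp
  by_cases hsmall : ∀ x ∈ C2, x = c1 ∨ x = f c1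
  · right
    have hC2eq : C2 = {c1, f c1} := by
      apply Finset.Subset.antisymm
      · intro x hx
        rcases hsmall x hx with rfl | rfl <;> simp
      · intro x hx
        rcases Finset.mem_insert.mp hx with rfl | hx
        · exact hc1
        · rw [Finset.mem_singleton] at hx
          subst hx
          exact hC2f c1 hc1
    rw [hcard, hC2eq]
    rw [Finset.card_insert_of_notMem (by simp [Ne.symm (hfne c1)]), Finset.card_singleton]
  exfalso
  push_neg at hsmall
  obtain ⟨c2, hc2, hc2a, hc2b⟩ := hsmall
  -- name the four vertices
  set a := c1 with ha
  set b := f c1 with hb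
  set c := c2 with hcc
  set d := f c2 with hd
  have hab : a ≠ b := Ne.symm (hfne c1)
  have hcd : c ≠ d := Ne.symm (hfne c2)
  have hac : a ≠ c := Ne.symm hc2a
  have hbc : b ≠ c := Ne.symm hc2b
  have had : a ≠ d := by
    intro h
    apply hbc
    rw [hb, hd] at *
    rw [ha] at h
    have : f c1 = f (f c2) := by rw [← h]
    rw [hfinv] at this
    exact this
  have hbd : b ≠ d := fun h => hc2a (hfinj h).symm
  have haC : a ∈ C := hC2C hc1
  have hbC : b ∈ C := hC2C (hC2f c1 hc1)
  have hcC : c ∈ C := hC2C hc2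
  have hdC : d ∈ C := hC2C (hC2f c2 hc2)
  have hGac : G.Adj a c := hclique haC hcC hac
  have hGbd : G.Adj b d := hclique hbC hdC hbd
  set T : Set V := {a, b, c, d} with hT
  have haT : a ∈ T := by simp [hT]
  have hbT : b ∈ T := by simp [hT]
  have hcT : c ∈ T := by simp [hT]
  have hdT : d ∈ T := by simp [hT]
  have hfab : f a = b := rfl
  have hfba : f b = a := hfinv c1
  have hfcd : f c = d := rfl
  have hfdc : f d = c := hfinv c2
  clear_value a b c d
  have hfT : ∀ v, v ∉ T → f v ∉ T := by
    intro v hv hfv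
    apply hv
    simp only [hT, Set.mem_insert_iff, Set.mem_singleton_iff] at hfv ⊢
    rcases hfv with h | h | h | h
    · right; left; rw [← hfinv v, h, hfab]
    · left; rw [← hfinv v, h, hfba]
    · right; right; right; rw [← hfinv v, h, hfcd]
    · right; right; left; rw [← hfinv v, h, hfdc]
  let M' : G.Subgraph :=
    { verts := Set.univ
      Adj := fun x y =>
        (M.Adj x y ∧ x ∉ T ∧ y ∉ T) ∨
        (x = a ∧ y = c) ∨ (x = c ∧ y = a) ∨ (x = b ∧ y = d) ∨ (x = d ∧ y = b)
      adj_sub := by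
        rintro x y (⟨h, -, -⟩ | ⟨rfl, rfl⟩ | ⟨rfl, rfl⟩ | ⟨rfl, rfl⟩ | ⟨rfl, rfl⟩)
        · exact M.adj_sub h
        · exact hGac
        · exact hGac.symm
        · exact hGbd
        · exact hGbd.symm
      edge_vert := fun _ => Set.mem_univ _
      symm := by
        constructor
        rintro x y (⟨h, h1, h2⟩ | ⟨rfl, rfl⟩ | ⟨rfl, rfl⟩ | ⟨rfl, rfl⟩ | ⟨rfl, rfl⟩)
        · exact Or.inl ⟨M.adj_symm h, h2, h1⟩
        · exact Or.inr (Or.inr (Or.inl ⟨rfl, rfl⟩))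
        · exact Or.inr (Or.inl ⟨rfl, rfl⟩)
        · exact Or.inr (Or.inr (Or.inr (Or.inr ⟨rfl, rfl⟩)))
        · exact Or.inr (Or.inr (Or.inr (Or.inl ⟨rfl, rfl⟩))) }
  have hM' : M'.IsPerfectMatching := by
    constructor
    · intro v _
      by_cases hv : v ∈ T
      · simp only [hT, Set.mem_insert_iff, Set.mem_singleton_iff] at hv
        rcases hv with rfl | rfl | rfl | rfl
        · refine ⟨c, Or.inr (Or.inl ⟨rfl, rfl⟩), ?_⟩
          rintro y (⟨-, h1, -⟩ | ⟨-, rfl⟩ | ⟨h, -⟩ | ⟨h, -⟩ | ⟨h, -⟩)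
          · exact absurd haT h1
          · rfl
          · exact absurd h hac
          · exact absurd h hab
          · exact absurd h had
        · refine ⟨d, Or.inr (Or.inr (Or.inr (Or.inl ⟨rfl, rfl⟩))), ?_⟩
          rintro y (⟨-, h1, -⟩ | ⟨h, -⟩ | ⟨h, -⟩ | ⟨-, rfl⟩ | ⟨h, -⟩)
          · exact absurd hbT h1
          · exact absurd h hab.symm
          · exact absurd h hbc
          · rfl
          · exact absurd h hbd
        · refine ⟨a, Or.inr (Or.inr (Or.inl ⟨rfl, rfl⟩)), ?_⟩
          rintro y (⟨-, h1, -⟩ | ⟨h, -⟩ | ⟨-, rfl⟩ | ⟨h, -⟩ | ⟨h, -⟩)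
          · exact absurd hcT h1
          · exact absurd h hac.symm
          · rfl
          · exact absurd h.symm hbc
          · exact absurd h hcd
        · refine ⟨b, Or.inr (Or.inr (Or.inr (Or.inr ⟨rfl, rfl⟩))), ?_⟩
          rintro y (⟨-, h1, -⟩ | ⟨h, -⟩ | ⟨h, -⟩ | ⟨h, -⟩ | ⟨-, rfl⟩)
          · exact absurd hdT h1
          · exact absurd h had.symm
          · exact absurd h.symm hcd
          · exact absurd h hbd.symm
          · rfl
      · refine ⟨f v, Or.inl ⟨hfadj v, hv, hfT v hv⟩, ?_⟩
        rintro y (⟨h, -, -⟩ | ⟨rfl, -⟩ | ⟨rfl, -⟩ | ⟨rfl, -⟩ | ⟨rfl, -⟩)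
        · exact hfuniq v y h
        · exact absurd haT hv
        · exact absurd hcT hv
        · exact absurd hbT hv
        · exact absurd hdT hv
    · intro v
      exact Set.mem_univ v
  have heq : M' = M := huniq M' hM'
  have hMac : M.Adj a c := by
    rw [← heq]
    exact Or.inr (Or.inl ⟨rfl, rfl⟩)
  have : c = f a := hfuniq a c hMac
  exact hbc (hfab ▸ this.symm)
end

section
/- Let G be a finite simple graph with a unique perfect matching M, and suppose ( [ℓ_u, r_u] )_{u ∈ V(G)} is an interval representation of G in which all 2n(G) endpoints ℓ_u, r_u (u ∈ V(G)) are pairwise distinct real numbers. Let u* ∈ V(G) satisfy r_{u*} = min{ r_u : u ∈ V(G) } and let v* ∈ N_G(u*) satisfy r_{v*} = min{ r_v : v ∈ N_G(u*) }. Then the edge u*v* belongs to M. -/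
theorem interval_graph_unique_pm_first_edge {V : Type*} [Fintype V]
    (G : SimpleGraph V) (M : G.Subgraph) (hM : M.IsPerfectMatching)
    (huniq : ∀ M' : G.Subgraph, M'.IsPerfectMatching → M' = M)
    (l r : V → ℝ) (hlr : ∀ u : V, l u ≤ r u)
    (hrep : ∀ u v : V, u ≠ v → (G.Adj u v ↔ (l u ≤ r v ∧ l v ≤ r u)))
    (hdistinct : Function.Injective (Sum.elim l r : V ⊕ V → ℝ))
    (ustar vstar : V)
    (hustar : ∀ u : V, r ustar ≤ r u)
    (hadj : G.Adj ustar vstar)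
    (hvstar : ∀ v : V, G.Adj ustar v → r vstar ≤ r v) :
    M.Adj ustar vstar := by
  classical
  by_contra hMuv
  have hspan := hM.2
  have hmatch := hM.1
  have hne_uv : ustar ≠ vstar := hadj.ne
  obtain ⟨w, hMuw, hwuniq⟩ := hmatch (hspan ustar)
  obtain ⟨x, hMvx, hxuniq⟩ := hmatch (hspan vstar)
  have hGuw : G.Adj ustar w := M.adj_sub hMuw
  have hGvx : G.Adj vstar x := M.adj_sub hMvx
  have hne_uw : ustar ≠ w := hGuw.ne
  have hne_vx : vstar ≠ x := hGvx.ne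
  have hne_vw : vstar ≠ w := by
    intro h; exact hMuv (h ▸ hMuw)
  have hne_ux : ustar ≠ x := by
    intro h
    have : M.Adj vstar ustar := by rw [h]; exact hMvx
    exact hMuv this.symm
  have hne_wx : w ≠ x := by
    intro h
    obtain ⟨p, hp, hpu⟩ := hmatch (hspan w)
    have h1 : ustar = p := hpu ustar hMuw.symm
    have h2 : vstar = p := hpu vstar (by rw [h]; exact hMvx.symm)
    exact hne_uv (h1.trans h2.symm)
  -- w and x are adjacent in G
  have hGwx : G.Adj w x := by
    rw [hrep w x hne_wx]
    obtain ⟨_, hlw⟩ := (hrep ustar w hne_uw).mp hGuw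
    obtain ⟨_, hlx⟩ := (hrep vstar x hne_vx).mp hGvx
    exact ⟨hlw.trans (hustar x), hlx.trans (hvstar w hGuw)⟩
  -- the four special vertices
  set S : Set V := {ustar, vstar, w, x} with hS
  have huS : ustar ∈ S := by simp [hS]
  have hvS : vstar ∈ S := by simp [hS]
  have hwS : w ∈ S := by simp [hS]
  have hxS : x ∈ S := by simp [hS]
  have hclose : ∀ a b : V, M.Adj a b → b ∈ S → a ∈ S := by
    intro a b hab hb
    simp only [hS, Set.mem_insert_iff, Set.mem_singleton_iff] at hb ⊢
    rcases hb with rfl | rfl | hb1 | hb1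
    · exact Or.inr (Or.inr (Or.inl (hwuniq a hab.symm)))
    · exact Or.inr (Or.inr (Or.inr (hxuniq a hab.symm)))
    · obtain ⟨p, hp, hpu⟩ := hmatch (hspan b)
      have h2 : M.Adj b ustar := by rw [hb1]; exact hMuw.symm
      exact Or.inl ((hpu a hab.symm).trans (hpu ustar h2).symm)
    · obtain ⟨p, hp, hpu⟩ := hmatch (hspan b)
      have h2 : M.Adj b vstar := by rw [hb1]; exact hMvx.symm
      exact Or.inr (Or.inl ((hpu a hab.symm).trans (hpu vstar h2).symm))
  -- the swapped matching
  let M' : G.Subgraph :=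
    { verts := Set.univ
      Adj := fun a b =>
        (M.Adj a b ∧ a ∉ S ∧ b ∉ S) ∨ (a = ustar ∧ b = vstar) ∨ (a = vstar ∧ b = ustar)
          ∨ (a = w ∧ b = x) ∨ (a = x ∧ b = w)
      adj_sub := by
        rintro a b (⟨h, _, _⟩ | ⟨rfl, rfl⟩ | ⟨rfl, rfl⟩ | ⟨rfl, rfl⟩ | ⟨rfl, rfl⟩)
        · exact M.adj_sub h
        · exact hadj
        · exact hadj.symm
        · exact hGwx
        · exact hGwx.symm
      edge_vert := fun _ => trivial
      symm := by
        constructor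
        rintro a b (⟨h, ha, hb⟩ | ⟨rfl, rfl⟩ | ⟨rfl, rfl⟩ | ⟨rfl, rfl⟩ | ⟨rfl, rfl⟩)
        · exact Or.inl ⟨h.symm, hb, ha⟩
        · exact Or.inr (Or.inr (Or.inl ⟨rfl, rfl⟩))
        · exact Or.inr (Or.inl ⟨rfl, rfl⟩)
        · exact Or.inr (Or.inr (Or.inr (Or.inr ⟨rfl, rfl⟩)))
        · exact Or.inr (Or.inr (Or.inr (Or.inl ⟨rfl, rfl⟩))) }
  have hM'adj : M'.Adj ustar vstar := Or.inr (Or.inl ⟨rfl, rfl⟩)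
  have hM'pm : M'.IsPerfectMatching := by
    constructor
    · intro v _
      by_cases hv : v ∈ S
      · simp only [hS, Set.mem_insert_iff, Set.mem_singleton_iff] at hv
        rcases hv with rfl | rfl | rfl | rfl
        · refine ⟨vstar, Or.inr (Or.inl ⟨rfl, rfl⟩), ?_⟩
          rintro y (⟨_, ha, _⟩ | ⟨_, rfl⟩ | ⟨h1, _⟩ | ⟨h1, _⟩ | ⟨h1, _⟩)
          · exact absurd huS ha
          · rfl
          · exact absurd h1 hne_uv
          · exact absurd h1 hne_uw
          · exact absurd h1 hne_ux
        · refine ⟨ustar, Or.inr (Or.inr (Or.inl ⟨rfl, rfl⟩)), ?_⟩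
          rintro y (⟨_, ha, _⟩ | ⟨h1, _⟩ | ⟨_, rfl⟩ | ⟨h1, _⟩ | ⟨h1, _⟩)
          · exact absurd hvS ha
          · exact absurd h1 hne_uv.symm
          · rfl
          · exact absurd h1 hne_vw
          · exact absurd h1 hne_vx
        · refine ⟨x, Or.inr (Or.inr (Or.inr (Or.inl ⟨rfl, rfl⟩))), ?_⟩
          rintro y (⟨_, ha, _⟩ | ⟨h1, _⟩ | ⟨h1, _⟩ | ⟨_, rfl⟩ | ⟨h1, _⟩)
          · exact absurd hwS ha
          · exact absurd h1 hne_uw.symm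
          · exact absurd h1 hne_vw.symm
          · rfl
          · exact absurd h1 hne_wx
        · refine ⟨w, Or.inr (Or.inr (Or.inr (Or.inr ⟨rfl, rfl⟩))), ?_⟩
          rintro y (⟨_, ha, _⟩ | ⟨h1, _⟩ | ⟨h1, _⟩ | ⟨h1, _⟩ | ⟨_, rfl⟩)
          · exact absurd hxS ha
          · exact absurd h1 hne_ux.symm
          · exact absurd h1 hne_vx.symm
          · exact absurd h1 hne_wx.symm
          · rfl
      · obtain ⟨p, hp, hpu⟩ := hmatch (hspan v)
        have hpS : p ∉ S := fun h => hv (hclose v p hp h)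
        refine ⟨p, Or.inl ⟨hp, hv, hpS⟩, ?_⟩
        rintro y (⟨h, _, _⟩ | ⟨h1, _⟩ | ⟨h1, _⟩ | ⟨h1, _⟩ | ⟨h1, _⟩)
        · exact hpu y h
        · exact absurd (h1 ▸ huS) hv
        · exact absurd (h1 ▸ hvS) hv
        · exact absurd (h1 ▸ hwS) hv
        · exact absurd (h1 ▸ hxS) hv
    · intro v; trivial
  have := huniq M' hM'pm
  rw [this] at hM'adj
  exact hMuv hM'adj
end

section
/- Let G be a connected claw-free finite simple graph of even order, and let P: u_1 … u_k (k ≥ 2) be a path in G that allows neither an end-extension nor a swap-extension. Then the edge u_{k−1}u_k belongs to some perfect matching of G. -/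
/-- A graph is claw-free if it has no induced subgraph isomorphic to `K_{1,3}`. -/
def ClawFree {V : Type*} (G : SimpleGraph V) : Prop :=
  ¬ ∃ a b c d : V, a ≠ b ∧ a ≠ c ∧ a ≠ d ∧ b ≠ c ∧ b ≠ d ∧ c ≠ d ∧
    G.Adj a b ∧ G.Adj a c ∧ G.Adj a d ∧ ¬ G.Adj b c ∧ ¬ G.Adj b d ∧ ¬ G.Adj c d


open SimpleGraph

/-- Lift a perfect matching on the complement of {x,w} to G, adding the edge xw. -/
lemma lift_pm {V : Type*} [Fintype V] (G : SimpleGraph V) (x w : V) (hxw : G.Adj x w)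
    (M' : (G.induce ({x, w}ᶜ : Set V)).Subgraph) (hM' : M'.IsPerfectMatching) :
    ∃ M : G.Subgraph, M.IsPerfectMatching ∧ M.Adj x w := by
  classical
  have hne : x ≠ w := hxw.ne
  refine ⟨⟨Set.univ, fun a b => (a = x ∧ b = w) ∨ (a = w ∧ b = x) ∨
      ∃ (ha : a ∈ ({x, w}ᶜ : Set V)) (hb : b ∈ ({x, w}ᶜ : Set V)), M'.Adj ⟨a, ha⟩ ⟨b, hb⟩, ?_, ?_, ?_⟩, ⟨?_, fun v => trivial⟩, ?_⟩
  · rintro a b (⟨rfl, rfl⟩ | ⟨rfl, rfl⟩ | ⟨ha, hb, h⟩)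
    · exact hxw
    · exact hxw.symm
    · exact M'.adj_sub h
  · rintro a b (⟨rfl, rfl⟩ | ⟨rfl, rfl⟩ | ⟨ha, hb, h⟩) <;> trivial
  · constructor; rintro a b (⟨rfl, rfl⟩ | ⟨rfl, rfl⟩ | ⟨ha, hb, h⟩)
    · exact Or.inr (Or.inl ⟨rfl, rfl⟩)
    · exact Or.inl ⟨rfl, rfl⟩
    · exact Or.inr (Or.inr ⟨hb, ha, h.symm⟩)
  · intro v _
    by_cases hvx : v = x
    · refine ⟨w, Or.inl ⟨hvx, rfl⟩, ?_⟩
      rintro b (⟨_, rfl⟩ | ⟨hvw, _⟩ | ⟨ha, _, _⟩)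
      · rfl
      · exact absurd (hvx ▸ hvw : x = w) hne
      · exact absurd ha (by simp [hvx])
    · by_cases hvw : v = w
      · refine ⟨x, Or.inr (Or.inl ⟨hvw, rfl⟩), ?_⟩
        rintro b (⟨hvx', _⟩ | ⟨_, rfl⟩ | ⟨ha, _, _⟩)
        · exact absurd hvx' hvx
        · rfl
        · exact absurd ha (by simp [hvw])
      · have hvs : v ∈ ({x, w}ᶜ : Set V) := by simp [hvx, hvw]
        obtain ⟨b', hb', hub'⟩ := hM'.1 (hM'.2 ⟨v, hvs⟩)
        refine ⟨(b' : V), Or.inr (Or.inr ⟨hvs, b'.2, hb'⟩), ?_⟩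
        rintro b (⟨rfl, _⟩ | ⟨rfl, _⟩ | ⟨ha, hb, h⟩)
        · exact absurd rfl hvx
        · exact absurd rfl hvw
        · have := hub' ⟨b, hb⟩ (by convert h)
          exact congrArg Subtype.val this
  · exact Or.inl ⟨rfl, rfl⟩

lemma exists_maximal_path {W : Type*} [Fintype W] (G : SimpleGraph W) (hconn : G.Connected)
    (h2 : 2 ≤ Fintype.card W) :
    ∃ (k : ℕ) (u : ℕ → W), 2 ≤ k ∧
      (∀ i j : ℕ, i < k → j < k → u i = u j → i = j) ∧
      (∀ i : ℕ, i + 1 < k → G.Adj (u i) (u (i + 1))) ∧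
      (¬ ∃ v : W, (∀ i : ℕ, i < k → v ≠ u i) ∧ G.Adj (u (k - 1)) v) ∧
      (¬ (3 ≤ k ∧ G.Adj (u (k - 3)) (u (k - 1)) ∧
        ∃ v : W, (∀ i : ℕ, i < k → v ≠ u i) ∧ G.Adj (u (k - 2)) v)) := by
  classical
  set P : ℕ → Prop := fun m => ∃ u : ℕ → W,
    (∀ i j : ℕ, i < m → j < m → u i = u j → i = j) ∧
    (∀ i : ℕ, i + 1 < m → G.Adj (u i) (u (i + 1))) with hP
  have hbound : ∀ m, P m → m ≤ Fintype.card W := by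
    intro m ⟨u, hinj, _⟩
    calc m = Fintype.card (Fin m) := (Fintype.card_fin m).symm
    _ ≤ Fintype.card W := Fintype.card_le_of_injective (fun i => u i.1)
        (fun i j hij => Fin.ext (hinj i.1 j.1 i.2 j.2 hij))
  obtain ⟨a, b, hab⟩ := Fintype.exists_pair_of_one_lt_card (by omega) (α := W)
  obtain ⟨c, hac⟩ : ∃ c, G.Adj a c := by
    obtain ⟨p⟩ := hconn.preconnected a b
    cases p with
    | nil => exact absurd rfl hab
    | cons h q => exact ⟨_, h⟩
  have hP2 : P 2 := by
    refine ⟨fun i => if i = 0 then a else c, ?_, ?_⟩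
    · intro i j hi hj hij
      rcases (by omega : i = 0 ∨ i = 1) with rfl | rfl <;>
        rcases (by omega : j = 0 ∨ j = 1) with rfl | rfl <;>
        simp_all [hac.ne, hac.ne']
    · intro i hi
      have : i = 0 := by omega
      subst this
      simpa using hac
  set k := Nat.findGreatest P (Fintype.card W) with hkdef
  have hk2 : 2 ≤ k := Nat.le_findGreatest h2 hP2
  obtain ⟨u, hinj, hpath⟩ : P k := Nat.findGreatest_spec h2 hP2
  have hmax : ¬ P (k + 1) := by
    intro h
    exact Nat.findGreatest_is_greatest (by omega) (hbound _ h) h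
  refine ⟨k, u, hk2, hinj, hpath, ?_, ?_⟩
  · rintro ⟨v, hvoff, hadj⟩
    apply hmax
    refine ⟨fun i => if i < k then u i else v, ?_, ?_⟩
    · intro i j hi hj hij
      dsimp only at hij
      by_cases h1 : i < k <;> by_cases h2 : j < k
      · rw [if_pos h1, if_pos h2] at hij; exact hinj i j h1 h2 hij
      · rw [if_pos h1, if_neg h2] at hij; exact absurd hij.symm (hvoff i h1)
      · rw [if_neg h1, if_pos h2] at hij; exact absurd hij (hvoff j h2)
      · omega
    · intro i hi
      have hik : i < k := by omega
      by_cases h1 : i + 1 < k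
      · show G.Adj (if i < k then u i else v) (if i + 1 < k then u (i+1) else v)
        rw [if_pos hik, if_pos h1]; exact hpath i h1
      · show G.Adj (if i < k then u i else v) (if i + 1 < k then u (i+1) else v)
        rw [if_pos hik, if_neg h1]
        have : i = k - 1 := by omega
        rw [this]; exact hadj
  · rintro ⟨hk3, hadj3, v, hvoff, hadj⟩
    apply hmax
    set σ : ℕ → ℕ := fun i => if i = k - 2 then k - 1 else if i = k - 1 then k - 2 else i with hσ
    have hσa : σ (k - 2) = k - 1 := by simp [hσ]
    have hσb : σ (k - 1) = k - 2 := by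
      simp only [hσ]
      rw [if_neg (by omega)]; simp
    have hσeq : ∀ i, i ≠ k - 2 → i ≠ k - 1 → σ i = i := by
      intro i h1 h2; simp [hσ, h1, h2]
    have hσinv : ∀ i, σ (σ i) = i := by
      intro i
      by_cases h1 : i = k - 2
      · rw [h1, hσa, hσb]
      · by_cases h2 : i = k - 1
        · rw [h2, hσb, hσa]
        · rw [hσeq i h1 h2, hσeq i h1 h2]
    have hσlt : ∀ i, i < k → σ i < k := by
      intro i hi
      by_cases h1 : i = k - 2
      · rw [h1, hσa]; omega
      · by_cases h2 : i = k - 1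
        · rw [h2, hσb]; omega
        · rw [hσeq i h1 h2]; exact hi
    refine ⟨fun i => if i < k then u (σ i) else v, ?_, ?_⟩
    · intro i j hi hj hij
      dsimp only at hij
      by_cases h1 : i < k <;> by_cases h2 : j < k
      · rw [if_pos h1, if_pos h2] at hij
        have := hinj _ _ (hσlt i h1) (hσlt j h2) hij
        have := congrArg σ this
        rwa [hσinv, hσinv] at this
      · rw [if_pos h1, if_neg h2] at hij; exact absurd hij.symm (hvoff _ (hσlt i h1))
      · rw [if_neg h1, if_pos h2] at hij; exact absurd hij (hvoff _ (hσlt j h2))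
      · omega
    · intro i hi
      have hik : i < k := by omega
      show G.Adj (if i < k then u (σ i) else v) (if i + 1 < k then u (σ (i+1)) else v)
      by_cases h1 : i + 1 < k
      · rw [if_pos hik, if_pos h1]
        rcases (by omega : i + 1 < k - 2 ∨ i + 1 = k - 2 ∨ i + 1 = k - 1) with h | h | h
        · rw [hσeq i (by omega) (by omega), hσeq (i+1) (by omega) (by omega)]
          exact hpath i h1
        · rw [hσeq i (by omega) (by omega), h, hσa, (by omega : i = k - 3)]
          exact hadj3
        · rw [h, hσb, (by omega : i = k - 2), hσa]
          have e : k - 2 + 1 = k - 1 := by omega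
          exact (e ▸ hpath (k - 2) (by omega)).symm
      · rw [if_pos hik, if_neg h1, (by omega : i = k - 1), hσb]
        exact hadj

universe u

lemma sumner_aux : ∀ (n : ℕ), ∀ {V : Type u} [Fintype V] (G : SimpleGraph V),
    Fintype.card V ≤ n → G.Connected → ClawFree G → Even (Fintype.card V) →
    ∀ (k : ℕ), 2 ≤ k → ∀ (u : ℕ → V),
    (∀ i j : ℕ, i < k → j < k → u i = u j → i = j) →
    (∀ i : ℕ, i + 1 < k → G.Adj (u i) (u (i + 1))) →
    (¬ ∃ v : V, (∀ i : ℕ, i < k → v ≠ u i) ∧ G.Adj (u (k - 1)) v) →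
    (¬ (3 ≤ k ∧ G.Adj (u (k - 3)) (u (k - 1)) ∧
      ∃ v : V, (∀ i : ℕ, i < k → v ≠ u i) ∧ G.Adj (u (k - 2)) v)) →
    ∃ M : G.Subgraph, M.IsPerfectMatching ∧ M.Adj (u (k - 2)) (u (k - 1)) := by
  intro n
  induction n with
  | zero =>
    intro V _ G hcard _ _ _ k _ u _ _ _ _
    have : IsEmpty V := Fintype.card_eq_zero_iff.mp (by omega)
    exact (this.false (u 0)).elim
  | succ n ih =>
    intro V _ G hcard hconn hcf heven k hk u hinj hpath hend hswap
    classical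
    have hxw : G.Adj (u (k - 2)) (u (k - 1)) := by
      have := hpath (k - 2) (by omega)
      rwa [(by omega : k - 2 + 1 = k - 1)] at this
    set s : Set V := ({u (k - 2), u (k - 1)}ᶜ : Set V) with hsdef
    have hmem : ∀ y : V, y ∈ s ↔ y ≠ u (k - 2) ∧ y ≠ u (k - 1) := by
      intro y; simp [hsdef, not_or]
    have hw_nbr : ∀ y, G.Adj (u (k - 1)) y → ∃ i, i < k ∧ y = u i := by
      intro y hy
      by_contra hcon
      push_neg at hcon
      exact hend ⟨y, hcon, hy⟩
    suffices hM' : ∃ M' : (G.induce s).Subgraph, M'.IsPerfectMatching by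
      obtain ⟨M', hM'⟩ := hM'
      exact lift_pm G (u (k - 2)) (u (k - 1)) hxw M' hM'
    by_cases hes : IsEmpty ↥s
    · refine ⟨⊤, fun v _ => (hes.false v).elim, fun v => trivial⟩
    · rw [not_isEmpty_iff] at hes
      -- cardinality facts
      have hcards : Fintype.card ↥s + 2 = Fintype.card V := by
        have h1 : s.toFinset = ({u (k - 2), u (k - 1)} : Finset V)ᶜ := by
          ext y; simp [hsdef]
        have h2 : Fintype.card ↥s = s.toFinset.card := (Set.toFinset_card _).symm
        rw [h2, h1, Finset.card_compl, Finset.card_pair hxw.ne]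
        have h3 : ({u (k - 2), u (k - 1)} : Finset V).card ≤ Fintype.card V :=
          Finset.card_le_univ _
        rw [Finset.card_pair hxw.ne] at h3
        omega
      have heven' : Even (Fintype.card ↥s) := by
        rw [Nat.even_iff] at heven ⊢; omega
      have hpos : 0 < Fintype.card ↥s := Fintype.card_pos_iff.mpr hes
      have h2' : 2 ≤ Fintype.card ↥s := by
        rw [Nat.even_iff] at heven'; omega
      have hcard' : Fintype.card ↥s ≤ n := by omega
      -- claw-freeness of the induced graph
      have hcf' : ClawFree (G.induce s) := by
        rintro ⟨a, b, c, d, h1, h2, h3, h4, h5, h6, h7, h8, h9, h10, h11, h12⟩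
        exact hcf ⟨a, b, c, d, Subtype.coe_injective.ne h1, Subtype.coe_injective.ne h2,
          Subtype.coe_injective.ne h3, Subtype.coe_injective.ne h4, Subtype.coe_injective.ne h5,
          Subtype.coe_injective.ne h6, h7, h8, h9, h10, h11, h12⟩
      -- connectivity of the induced graph
      have hconn' : (G.induce s).Connected := by
        rw [connected_iff]
        refine ⟨?_, Set.Nonempty.to_subtype (Set.nonempty_coe_sort.mp hes)⟩
        have hstep : ∀ (a b : V) (ha : a ∈ s) (hb : b ∈ s), G.Adj a b →
            (G.induce s).Reachable ⟨a, ha⟩ ⟨b, hb⟩ := by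
          intro a b ha hb hab
          exact SimpleGraph.Adj.reachable hab
        by_cases hk3 : 3 ≤ k
        · -- anchor is u 0
          have hus : ∀ i, i ≤ k - 3 → u i ∈ s := by
            intro i hi
            rw [hmem]
            constructor
            · intro h; have := hinj i (k-2) (by omega) (by omega) h; omega
            · intro h; have := hinj i (k-1) (by omega) (by omega) h; omega
          have h0s : u 0 ∈ s := hus 0 (by omega)
          have hreach0 : ∀ i (hi : i ≤ k - 3),
              (G.induce s).Reachable ⟨u i, hus i hi⟩ ⟨u 0, h0s⟩ := by
            intro i
            induction i with
            | zero => intro _; exact Reachable.refl _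
            | succ m ihm =>
              intro hi
              have hadj : G.Adj (u m) (u (m+1)) := hpath m (by omega)
              exact (hstep _ _ (hus (m+1) hi) (hus m (by omega)) hadj.symm).trans
                (ihm (by omega))
          have claim : ∀ (y z : V) (p : G.Walk y z), z = u 0 → ∀ hy : y ∈ s,
              (G.induce s).Reachable ⟨y, hy⟩ ⟨u 0, h0s⟩ := by
            intro y z p
            induction p with
            | nil =>
              intro hz hy
              subst hz
              exact Reachable.refl _
            | @cons a b c hab p ihp =>
              intro hz hy
              by_cases hbs : b ∈ s
              · exact (hstep a b hy hbs hab).trans (ihp hz hbs)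
              · rw [hmem] at hbs
                push_neg at hbs
                by_cases hbx : b = u (k - 2)
                · have hax : G.Adj a (u (k - 2)) := hbx ▸ hab
                  by_cases hyon : ∃ i, i < k ∧ a = u i
                  · obtain ⟨i, hik, hyi⟩ := hyon
                    rcases (hmem a).mp hy with ⟨h1, h2⟩
                    have hi3 : i ≤ k - 3 := by
                      have e1 : i ≠ k - 2 := fun h => h1 (h ▸ hyi)
                      have e2 : i ≠ k - 1 := fun h => h2 (h ▸ hyi)
                      omega
                    have he : (⟨a, hy⟩ : ↥s) = ⟨u i, hus i hi3⟩ := Subtype.ext hyi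
                    rw [he]; exact hreach0 i hi3
                  · push_neg at hyon
                    have hyon' : ∀ i, i < k → a ≠ u i := fun i hi => hyon i hi
                    by_cases hA3 : G.Adj (u (k - 3)) (u (k - 1))
                    · exact absurd ⟨hk3, hA3, a, hyon', hax.symm⟩ hswap
                    · have hy3 : G.Adj (u (k - 3)) a := by
                        by_contra hcon
                        apply hcf
                        refine ⟨u (k-2), u (k-1), u (k-3), a, ?_, ?_, ?_, ?_, ?_, ?_,
                          hxw, ?_, hax.symm, ?_, ?_, hcon⟩
                        · exact fun h => by have := hinj _ _ (by omega) (by omega) h; omega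
                        · exact fun h => by have := hinj _ _ (by omega) (by omega) h; omega
                        · exact hax.ne'
                        · exact fun h => by have := hinj _ _ (by omega) (by omega) h; omega
                        · exact (hyon' (k-1) (by omega)).symm
                        · exact (hyon' (k-3) (by omega)).symm
                        · have := hpath (k-3) (by omega)
                          rw [(by omega : k - 3 + 1 = k - 2)] at this
                          exact this.symm
                        · exact fun h => hA3 h.symm
                        · intro h
                          obtain ⟨i, hik, hai⟩ := hw_nbr a h
                          exact hyon' i hik hai
                      have h3s : u (k-3) ∈ s := hus (k-3) (by omega)
                      exact (hstep a (u (k-3)) hy h3s hy3.symm).trans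
                        (hreach0 (k-3) (by omega))
                · have hbw : b = u (k - 1) := hbs hbx
                  have haw : G.Adj a (u (k - 1)) := hbw ▸ hab
                  obtain ⟨i, hik, hai⟩ := hw_nbr a haw.symm
                  rcases (hmem a).mp hy with ⟨h1, h2⟩
                  have hi3 : i ≤ k - 3 := by
                    have e1 : i ≠ k - 2 := fun h => h1 (h ▸ hai)
                    have e2 : i ≠ k - 1 := fun h => h2 (h ▸ hai)
                    omega
                  have he : (⟨a, hy⟩ : ↥s) = ⟨u i, hus i hi3⟩ := Subtype.ext hai
                  rw [he]; exact hreach0 i hi3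
          rintro ⟨y, hy⟩ ⟨y', hy'⟩
          obtain ⟨p⟩ := hconn.preconnected y (u 0)
          obtain ⟨p'⟩ := hconn.preconnected y' (u 0)
          exact (claim y _ p rfl hy).trans (claim y' _ p' rfl hy').symm
        · -- k = 2
          have hk2 : k = 2 := by omega
          have claim : ∀ (y z : V) (p : G.Walk y z), z = u (k-2) → ∀ hy : y ∈ s,
              ∃ t, ∃ ht : t ∈ s, G.Adj (u (k-2)) t ∧
                (G.induce s).Reachable ⟨y, hy⟩ ⟨t, ht⟩ := by
            intro y z p
            induction p with
            | nil =>
              intro hz hy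
              exact absurd hz ((hmem _).mp hy).1
            | @cons a b c hab p ihp =>
              intro hz hy
              by_cases hbs : b ∈ s
              · obtain ⟨t, ht, hxt, hr⟩ := ihp hz hbs
                exact ⟨t, ht, hxt, (hstep a b hy hbs hab).trans hr⟩
              · rw [hmem] at hbs
                push_neg at hbs
                by_cases hbx : b = u (k - 2)
                · exact ⟨a, hy, (hbx ▸ hab).symm, Reachable.refl _⟩
                · have hbw : b = u (k - 1) := hbs hbx
                  obtain ⟨i, hik, hai⟩ := hw_nbr a (hbw ▸ hab : G.Adj a (u (k-1))).symm
                  rcases (hmem a).mp hy with ⟨h1, h2⟩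
                  rcases (by omega : i = k - 2 ∨ i = k - 1) with h | h
                  · exact absurd (h ▸ hai) h1
                  · exact absurd (h ▸ hai) h2
          have hclique : ∀ t t' (ht : t ∈ s) (ht' : t' ∈ s), G.Adj (u (k-2)) t →
              G.Adj (u (k-2)) t' → t ≠ t' → G.Adj t t' := by
            intro t t' ht ht' hxt hxt' htt
            by_contra hcon
            apply hcf
            have hwt : ∀ (r : V), r ∈ s → G.Adj (u (k-2)) r → ¬ G.Adj (u (k-1)) r := by
              intro r hr hxr h
              obtain ⟨i, hik, hti⟩ := hw_nbr r h
              rcases (by omega : i = k - 2 ∨ i = k - 1) with hh | hh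
              · exact hxr.ne' (hh ▸ hti)
              · exact ((hmem r).mp hr).2 (hh ▸ hti)
            refine ⟨u (k-2), u (k-1), t, t', hxw.ne, hxt.ne, hxt'.ne, ?_, ?_, htt,
              hxw, hxt, hxt', hwt t ht hxt, hwt t' ht' hxt', hcon⟩
            · exact fun h => ((hmem t).mp ht).2 h.symm
            · exact fun h => ((hmem t').mp ht').2 h.symm
          rintro ⟨y, hy⟩ ⟨y', hy'⟩
          obtain ⟨p⟩ := hconn.preconnected y (u (k-2))
          obtain ⟨p'⟩ := hconn.preconnected y' (u (k-2))
          obtain ⟨t, ht, hxt, hr⟩ := claim y _ p rfl hy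
          obtain ⟨t', ht', hxt', hr'⟩ := claim y' _ p' rfl hy'
          by_cases htt : t = t'
          · subst htt
            exact hr.trans hr'.symm
          · exact hr.trans ((hstep t t' ht ht' (hclique t t' ht ht' hxt hxt' htt)).trans
              hr'.symm)
      obtain ⟨k', u', hk', hinj', hpath', hend', hswap'⟩ :=
        exists_maximal_path (G.induce s) hconn' h2'
      obtain ⟨M', hM', -⟩ := ih (G.induce s) hcard' hconn' hcf' heven' k' hk' u'
        hinj' hpath' hend' hswap'
      exact ⟨M', hM'⟩

/- The path is `u 0, u 1, …, u (k-1)` (the paper's `u_1 … u_k`); its last two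
vertices are `u (k-2)` and `u (k-1)`. -/
theorem last_edge_in_some_perfect_matching {V : Type*} [Fintype V]
    (G : SimpleGraph V) (hconn : G.Connected) (hcf : ClawFree G)
    (heven : Even (Fintype.card V))
    (k : ℕ) (hk : 2 ≤ k) (u : ℕ → V)
    (hinj : ∀ i j : ℕ, i < k → j < k → u i = u j → i = j)
    (hpath : ∀ i : ℕ, i + 1 < k → G.Adj (u i) (u (i + 1)))
    (hend : ¬ ∃ v : V, (∀ i : ℕ, i < k → v ≠ u i) ∧ G.Adj (u (k - 1)) v)
    (hswap : ¬ (3 ≤ k ∧ G.Adj (u (k - 3)) (u (k - 1)) ∧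
      ∃ v : V, (∀ i : ℕ, i < k → v ≠ u i) ∧ G.Adj (u (k - 2)) v)) :
    ∃ M : G.Subgraph, M.IsPerfectMatching ∧ M.Adj (u (k - 2)) (u (k - 1)) := by
  exact sumner_aux (Fintype.card V) G le_rfl hconn hcf heven k hk u hinj hpath hend hswap
end

section
/- Every graph G in the class 𝒢 is connected, claw-free, and has a unique perfect matching. -/
/-- Operation 1: add two new vertices `x = inr 0` and `y = inr 1`, and the three
new edges `xy`, `xu`, `yu`. -/
def AddOp1 {V : Type*} (G : SimpleGraph V) (u : V) : SimpleGraph (V ⊕ Fin 2) :=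
  SimpleGraph.fromRel fun a b =>
    match a, b with
    | Sum.inl a, Sum.inl b => G.Adj a b
    | Sum.inl a, Sum.inr _ => a = u
    | Sum.inr _, Sum.inr _ => True
    | _, _ => False

/-- Operation 2: add two new vertices `x = inr 0` and `y = inr 1`, the new edge `xy`,
and new edges between `x` and all vertices of `C`. -/
def AddOp2 {V : Type*} (G : SimpleGraph V) (C : Set V) : SimpleGraph (V ⊕ Fin 2) :=
  SimpleGraph.fromRel fun a b =>
    match a, b with
    | Sum.inl a, Sum.inl b => G.Adj a b
    | Sum.inl a, Sum.inr i => i = 0 ∧ a ∈ C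
    | Sum.inr _, Sum.inr _ => True
    | _, _ => False

/-- The class `𝒢`: obtained from `K₂` by iteratively applying Operation 1 (at a
simplicial vertex `u`) and Operation 2 (at a non-empty clique `C` such that
`N_G(u) \ C` is a clique for every `u ∈ C`), considered up to isomorphism. -/
inductive InClassG : ∀ (V : Type), SimpleGraph V → Prop
  | base : InClassG (Fin 2) ⊤
  | op1 {V : Type} (G : SimpleGraph V) (u : V)
      (hu : G.IsClique (G.neighborSet u)) :
      InClassG V G → InClassG (V ⊕ Fin 2) (AddOp1 G u)
  | op2 {V : Type} (G : SimpleGraph V) (C : Set V) (hne : C.Nonempty)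
      (hC : G.IsClique C) (hnbr : ∀ u ∈ C, G.IsClique (G.neighborSet u \ C)) :
      InClassG V G → InClassG (V ⊕ Fin 2) (AddOp2 G C)
  | iso {V W : Type} (G : SimpleGraph V) (H : SimpleGraph W) (e : G ≃g H) :
      InClassG V G → InClassG W H


section generic
open SimpleGraph Sum
variable {V : Type} {G : SimpleGraph V} {H : SimpleGraph (V ⊕ Fin 2)}

lemma fin2_eq {i j k : Fin 2} (h1 : j ≠ i) (h2 : k ≠ i) : j = k := by omega

lemma conn_transfer (hadj : ∀ a b : V, G.Adj a b → H.Adj (inl a) (inl b))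
    (hx : H.Adj (inr 0) (inr 1)) (v0 : V) (h0 : H.Adj (inr 0) (inl v0))
    (hG : G.Connected) : H.Connected := by
  have key : ∀ w, H.Reachable w (inl v0) := by
    rintro (a | i)
    · exact Reachable.map (⟨inl, fun h => hadj _ _ h⟩ : G →g H) (hG.preconnected a v0)
    · fin_cases i
      · exact h0.reachable
      · exact (hx.symm.reachable).trans h0.reachable
  haveI : Nonempty (V ⊕ Fin 2) := ⟨inr 0⟩
  exact ⟨fun w w' => (key w).trans (key w').symm⟩

lemma pm_transfer (hadj : ∀ a b : V, H.Adj (inl a) (inl b) ↔ G.Adj a b)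
    (hx : H.Adj (inr 0) (inr 1))
    (hforce : ∀ M : H.Subgraph, M.IsPerfectMatching → M.Adj (inr 0) (inr 1))
    (hG : ∃! M : G.Subgraph, M.IsPerfectMatching) :
    ∃! M : H.Subgraph, M.IsPerfectMatching := by
  obtain ⟨M, hM, huniq⟩ := hG
  have hMadj := (Subgraph.isPerfectMatching_iff).mp hM
  have hrr : ∀ i j : Fin 2, i ≠ j → H.Adj (inr i) (inr j) := by
    intro i j h
    fin_cases i <;> fin_cases j <;> first | exact hx | exact hx.symm | exact absurd rfl h
  -- the lifted matching
  refine ⟨⟨Set.univ, fun a b => match a, b with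
      | inl a, inl b => M.Adj a b
      | inr i, inr j => i ≠ j
      | _, _ => False, ?_, ?_, ?_⟩, ?_, ?_⟩
  · rintro (a | i) (b | j) h
    · exact (hadj a b).mpr (M.adj_sub h)
    · exact h.elim
    · exact h.elim
    · exact hrr i j h
  · intros; trivial
  · constructor; rintro (a | i) (b | j) h
    · exact M.adj_symm h
    · exact h.elim
    · exact h.elim
    · exact h.symm
  · show Subgraph.IsPerfectMatching _
    rw [Subgraph.isPerfectMatching_iff]
    rintro (a | i)
    · obtain ⟨w, hw, hwu⟩ := hMadj a
      refine ⟨inl w, hw, ?_⟩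
      rintro (b | j) h
      · exact congrArg inl (hwu b h)
      · exact h.elim
    · refine ⟨inr (i + 1), ?_, ?_⟩
      · show i ≠ i + 1; omega
      · rintro (b | j) h
        · exact h.elim
        · have : j = i + 1 := by have : i ≠ j := h; omega
          exact congrArg inr this
  · -- uniqueness
    intro M' hM'
    have hM'adj := (Subgraph.isPerfectMatching_iff).mp hM'
    have hxy : M'.Adj (inr 0) (inr 1) := hforce M' hM'
    have hnolr : ∀ (a : V) (i : Fin 2), ¬ M'.Adj (inl a) (inr i) := by
      intro a i h
      fin_cases i
      · obtain ⟨w, hw, hwu⟩ := hM'adj (inr 0)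
        have h1 := hwu _ hxy
        have h2 := hwu _ h.symm
        exact absurd (h2.trans h1.symm) (by simp)
      · obtain ⟨w, hw, hwu⟩ := hM'adj (inr 1)
        have h1 := hwu _ hxy.symm
        have h2 := hwu _ h.symm
        exact absurd (h2.trans h1.symm) (by simp)
    -- restriction of M' is a perfect matching of G
    have hrest : ∀ (a : V), ∃! b : V, M'.Adj (inl a) (inl b) := by
      intro a
      obtain ⟨w, hw, hwu⟩ := hM'adj (inl a)
      obtain (b | j) := w
      · exact ⟨b, hw, fun c hc => by simpa using hwu _ hc⟩
      · exact absurd hw (hnolr a j)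
    have hRpm : (⟨Set.univ, fun a b => M'.Adj (inl a) (inl b),
        fun h => (hadj _ _).mp (M'.adj_sub h), fun _ => trivial,
        ⟨fun a b h => M'.adj_symm h⟩⟩ : G.Subgraph).IsPerfectMatching := by
      rw [Subgraph.isPerfectMatching_iff]
      exact hrest
    have hRM := huniq _ hRpm
    -- now M' equals the lift
    have hverts : M'.verts = Set.univ := hM'.2.verts_eq_univ
    ext x y
    · simp [hverts]
    · constructor
      · rintro h
        obtain (a | i) := x <;> obtain (b | j) := y
        · show M.Adj a b
          rw [← hRM]; exact h
        · exact (hnolr a j h).elim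
        · exact (hnolr b i h.symm).elim
        · show i ≠ j
          rintro rfl
          exact (M'.adj_sub h).ne rfl
      · rintro h
        obtain (a | i) := x <;> obtain (b | j) := y
        · have : M.Adj a b := h
          rw [← hRM] at this; exact this
        · exact h.elim
        · exact h.elim
        · have hij : i ≠ j := h
          fin_cases i <;> fin_cases j <;>
            first | exact hxy | exact hxy.symm | exact absurd rfl hij
end generic

section isoBase
open SimpleGraph Sum

lemma clawFree_iso {V W : Type} {G : SimpleGraph V} {H : SimpleGraph W} (e : G ≃g H)
    (h : ClawFree G) : ClawFree H := by
  rintro ⟨a, b, c, d, hab, hac, had, hbc, hbd, hcd, Aab, Aac, Aad, nbc, nbd, ncd⟩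
  refine h ⟨e.symm a, e.symm b, e.symm c, e.symm d, ?_, ?_, ?_, ?_, ?_, ?_,
    ?_, ?_, ?_, ?_, ?_, ?_⟩ <;>
    simp_all [e.symm.injective.ne_iff, Iso.map_adj_iff]

lemma pm_iso_aux {V W : Type} {G : SimpleGraph V} {H : SimpleGraph W} (e : G ≃g H)
    {M : G.Subgraph} (hM : M.IsPerfectMatching) :
    (M.map e.toHom).IsPerfectMatching := by
  rw [Subgraph.isPerfectMatching_iff] at hM ⊢
  intro w
  obtain ⟨v', hv', hv'u⟩ := hM (e.symm w)
  refine ⟨e v', ⟨e.symm w, v', hv', by simp, rfl⟩, ?_⟩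
  rintro y ⟨a, b, hab, ha, rfl⟩
  have : a = e.symm w := by
    have := congrArg e.symm ha; simpa using this
  subst this
  exact congrArg e (hv'u _ hab)

lemma map_symm_map {V W : Type} {G : SimpleGraph V} {H : SimpleGraph W} (e : G ≃g H)
    (M : H.Subgraph) : (M.map e.symm.toHom).map e.toHom = M := by
  ext x y
  · simp [Set.image_image]
  · constructor
    · rintro ⟨a, b, ⟨a', b', h, ha, hb⟩, rfl, rfl⟩
      subst ha; subst hb; simpa using h
    · intro h
      exact ⟨e.symm x, e.symm y, ⟨x, y, h, rfl, rfl⟩, by simp, by simp⟩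

lemma pm_iso {V W : Type} {G : SimpleGraph V} {H : SimpleGraph W} (e : G ≃g H)
    (h : ∃! M : G.Subgraph, M.IsPerfectMatching) :
    ∃! M : H.Subgraph, M.IsPerfectMatching := by
  obtain ⟨M, hM, huniq⟩ := h
  refine ⟨M.map e.toHom, pm_iso_aux e hM, ?_⟩
  intro M' hM'
  rw [← map_symm_map e M', huniq _ (pm_iso_aux e.symm hM')]

-- base case
lemma base_conn : (⊤ : SimpleGraph (Fin 2)).Connected := connected_top

lemma base_cf : ClawFree (⊤ : SimpleGraph (Fin 2)) := by
  rintro ⟨a, b, c, d, h⟩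
  fin_cases a <;> fin_cases b <;> fin_cases c <;> fin_cases d <;> simp_all

lemma base_pm : ∃! M : (⊤ : SimpleGraph (Fin 2)).Subgraph, M.IsPerfectMatching := by
  have hFin : ∀ w a b : Fin 2, w ≠ a → b ≠ a → w = b := by decide
  refine ⟨⊤, ?_, ?_⟩
  · show Subgraph.IsPerfectMatching _
    rw [Subgraph.isPerfectMatching_iff]
    intro v
    refine ⟨v + 1, by simp only [Subgraph.top_adj, top_adj]; omega, ?_⟩
    intro y hy
    have : y ≠ v := by simpa [Subgraph.top_adj] using hy.symm.ne
    omega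
  · intro M hM
    have hMadj := (Subgraph.isPerfectMatching_iff).mp hM
    ext x y
    · simp [hM.2.verts_eq_univ]
    · simp only [Subgraph.top_adj, top_adj]
      constructor
      · exact fun h => (M.adj_sub h).ne
      · intro hxy
        obtain ⟨w, hw, hwu⟩ := hMadj x
        have hwx : w ≠ x := (M.adj_sub hw).ne'
        have : w = y := hFin w x y hwx (Ne.symm hxy)
        exact this ▸ hw

end isoBase

section ops
open SimpleGraph Sum
variable {V : Type} {G : SimpleGraph V} {u : V} {C : Set V}

lemma op1_ll {a b : V} : (AddOp1 G u).Adj (inl a) (inl b) ↔ G.Adj a b := by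
  simp only [AddOp1, fromRel_adj]
  constructor
  · rintro ⟨h, h' | h'⟩
    · exact h'
    · exact h'.symm
  · intro h; exact ⟨by simpa using h.ne, Or.inl h⟩

lemma op1_lr {a : V} {i : Fin 2} : (AddOp1 G u).Adj (inl a) (inr i) ↔ a = u := by
  simp [AddOp1, fromRel_adj]

lemma op1_rl {a : V} {i : Fin 2} : (AddOp1 G u).Adj (inr i) (inl a) ↔ a = u := by
  simp [AddOp1, fromRel_adj]

lemma op1_rr {i j : Fin 2} : (AddOp1 G u).Adj (inr i) (inr j) ↔ i ≠ j := by
  simp [AddOp1, fromRel_adj]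

lemma op2_ll {a b : V} : (AddOp2 G C).Adj (inl a) (inl b) ↔ G.Adj a b := by
  simp only [AddOp2, fromRel_adj]
  constructor
  · rintro ⟨h, h' | h'⟩
    · exact h'
    · exact h'.symm
  · intro h; exact ⟨by simpa using h.ne, Or.inl h⟩

lemma op2_lr {a : V} {i : Fin 2} : (AddOp2 G C).Adj (inl a) (inr i) ↔ i = 0 ∧ a ∈ C := by
  simp [AddOp2, fromRel_adj]

lemma op2_rl {a : V} {i : Fin 2} : (AddOp2 G C).Adj (inr i) (inl a) ↔ i = 0 ∧ a ∈ C := by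
  simp [AddOp2, fromRel_adj]

lemma op2_rr {i j : Fin 2} : (AddOp2 G C).Adj (inr i) (inr j) ↔ i ≠ j := by
  simp [AddOp2, fromRel_adj]

lemma op1_force (M : (AddOp1 G u).Subgraph) (hM : M.IsPerfectMatching) :
    M.Adj (inr 0) (inr 1) := by
  have hMadj := (Subgraph.isPerfectMatching_iff).mp hM
  obtain ⟨w, hw, hwu⟩ := hMadj (inr 0)
  obtain (a | j) := w
  · -- inr 0 is matched to inl a, so a = u
    rw [op1_rl.mp (M.adj_sub hw)] at hw
    obtain ⟨w', hw', hwu'⟩ := hMadj (inr 1)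
    obtain (b | k) := w'
    · rw [op1_rl.mp (M.adj_sub hw')] at hw'
      -- inl u matched to both inr 0 and inr 1
      obtain ⟨z, hz, hzu⟩ := hMadj (inl u)
      have h1 := hzu _ hw.symm
      have h2 := hzu _ hw'.symm
      rw [← h2] at h1
      exact absurd (Sum.inr.injEq _ _ ▸ h1) (by decide)
    · have hk : k = 0 := by
        have := (M.adj_sub hw').ne
        simp only [ne_eq, Sum.inr.injEq] at this
        omega
      subst hk
      -- inr 0 matched to both inl u and inr 1
      have := hwu _ hw'.symm
      exact absurd this (by simp)
  · have hj : j = 1 := by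
      have := (M.adj_sub hw).ne
      simp only [ne_eq, Sum.inr.injEq] at this
      omega
    exact hj ▸ hw

lemma op2_force (M : (AddOp2 G C).Subgraph) (hM : M.IsPerfectMatching) :
    M.Adj (inr 0) (inr 1) := by
  have hMadj := (Subgraph.isPerfectMatching_iff).mp hM
  obtain ⟨w, hw, hwu⟩ := hMadj (inr 1)
  obtain (a | j) := w
  · have := op2_rl.mp (M.adj_sub hw)
    exact absurd this.1 (by decide)
  · have hj : j = 0 := by
      have := (M.adj_sub hw).ne
      simp only [ne_eq, Sum.inr.injEq] at this
      omega
    subst hj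
    exact hw.symm

lemma op1_clawFree (hu : G.IsClique (G.neighborSet u)) (h : ClawFree G) :
    ClawFree (AddOp1 G u) := by
  rintro ⟨a, b, c, d, hab, hac, had, hbc, hbd, hcd, Aab, Aac, Aad, nbc, nbd, ncd⟩
  obtain (a | i) := a
  · -- center in V
    obtain (b | j) := b <;> obtain (c | k) := c <;> obtain (d | l) := d
    · -- all leaves in V : claw in G
      exact h ⟨a, b, c, d, by simpa using hab, by simpa using hac, by simpa using had,
        by simpa using hbc, by simpa using hbd, by simpa using hcd,
        op1_ll.mp Aab, op1_ll.mp Aac, op1_ll.mp Aad,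
        fun h' => nbc (op1_ll.mpr h'), fun h' => nbd (op1_ll.mpr h'),
        fun h' => ncd (op1_ll.mpr h')⟩
    · -- d = inr l : a = u, b c ∈ N(u) nonadjacent
      have ha : a = u := op1_lr.mp Aad
      have hb : b ∈ G.neighborSet u := ha ▸ op1_ll.mp Aab
      have hc : c ∈ G.neighborSet u := ha ▸ op1_ll.mp Aac
      exact nbc (op1_ll.mpr (hu hb hc (by simpa using hbc)))
    · have ha : a = u := op1_lr.mp Aac
      have hb : b ∈ G.neighborSet u := ha ▸ op1_ll.mp Aab
      have hd : d ∈ G.neighborSet u := ha ▸ op1_ll.mp Aad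
      exact nbd (op1_ll.mpr (hu hb hd (by simpa using hbd)))
    · -- c, d both inr : adjacent
      exact ncd (op1_rr.mpr (by simpa using hcd))
    · have ha : a = u := op1_lr.mp Aab
      have hc : c ∈ G.neighborSet u := ha ▸ op1_ll.mp Aac
      have hd : d ∈ G.neighborSet u := ha ▸ op1_ll.mp Aad
      exact ncd (op1_ll.mpr (hu hc hd (by simpa using hcd)))
    · exact nbd (op1_rr.mpr (by simpa using hbd))
    · exact nbc (op1_rr.mpr (by simpa using hbc))
    · exact nbc (op1_rr.mpr (by simpa using hbc))
  · -- center is inr i : each leaf is inl u or inr (other)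
    obtain (b | j) := b <;> obtain (c | k) := c <;> obtain (d | l) := d
    · -- at least two leaves inl: all equal u
      have hb : b = u := op1_rl.mp Aab
      have hc : c = u := op1_rl.mp Aac
      exact hbc (by rw [hb, hc])
    · have hb : b = u := op1_rl.mp Aab
      have hc : c = u := op1_rl.mp Aac
      exact hbc (by rw [hb, hc])
    · have hb : b = u := op1_rl.mp Aab
      have hd : d = u := op1_rl.mp Aad
      exact hbd (by rw [hb, hd])
    · have hk : i ≠ k := op1_rr.mp Aac
      have hl : i ≠ l := op1_rr.mp Aad
      have hkl : k ≠ l := by simpa using hcd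
      omega
    · have hc : c = u := op1_rl.mp Aac
      have hd : d = u := op1_rl.mp Aad
      exact hcd (by rw [hc, hd])
    · have hj : i ≠ j := op1_rr.mp Aab
      have hl : i ≠ l := op1_rr.mp Aad
      have hjl : j ≠ l := by simpa using hbd
      omega
    · have hj : i ≠ j := op1_rr.mp Aab
      have hk : i ≠ k := op1_rr.mp Aac
      have hjk : j ≠ k := by simpa using hbc
      omega
    · have hj : i ≠ j := op1_rr.mp Aab
      have hk : i ≠ k := op1_rr.mp Aac
      have hjk : j ≠ k := by simpa using hbc
      omega


lemma op2_clawFree (hC : G.IsClique C) (hnbr : ∀ v ∈ C, G.IsClique (G.neighborSet v \ C))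
    (h : ClawFree G) : ClawFree (AddOp2 G C) := by
  rintro ⟨a, b, c, d, hab, hac, had, hbc, hbd, hcd, Aab, Aac, Aad, nbc, nbd, ncd⟩
  obtain (a | i) := a
  · obtain (b | j) := b <;> obtain (c | k) := c <;> obtain (d | l) := d
    · exact h ⟨a, b, c, d, by simpa using hab, by simpa using hac, by simpa using had,
        by simpa using hbc, by simpa using hbd, by simpa using hcd,
        op2_ll.mp Aab, op2_ll.mp Aac, op2_ll.mp Aad,
        fun h' => nbc (op2_ll.mpr h'), fun h' => nbd (op2_ll.mpr h'),
        fun h' => ncd (op2_ll.mpr h')⟩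
    · obtain ⟨hl0, haC⟩ := op2_lr.mp Aad
      have hbC : b ∉ C := fun h' => nbd (op2_lr.mpr ⟨hl0, h'⟩)
      have hcC : c ∉ C := fun h' => ncd (op2_lr.mpr ⟨hl0, h'⟩)
      have hb : b ∈ G.neighborSet a \ C := ⟨op2_ll.mp Aab, hbC⟩
      have hc : c ∈ G.neighborSet a \ C := ⟨op2_ll.mp Aac, hcC⟩
      exact nbc (op2_ll.mpr (hnbr a haC hb hc (by simpa using hbc)))
    · obtain ⟨hk0, haC⟩ := op2_lr.mp Aac
      have hbC : b ∉ C := fun h' => nbc (op2_lr.mpr ⟨hk0, h'⟩)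
      have hdC : d ∉ C := fun h' => ncd (op2_rl.mpr ⟨hk0, h'⟩)
      have hb : b ∈ G.neighborSet a \ C := ⟨op2_ll.mp Aab, hbC⟩
      have hd : d ∈ G.neighborSet a \ C := ⟨op2_ll.mp Aad, hdC⟩
      exact nbd (op2_ll.mpr (hnbr a haC hb hd (by simpa using hbd)))
    · obtain ⟨hk0, -⟩ := op2_lr.mp Aac
      obtain ⟨hl0, -⟩ := op2_lr.mp Aad
      have : k ≠ l := by simpa using hcd
      omega
    · obtain ⟨hj0, haC⟩ := op2_lr.mp Aab
      have hcC : c ∉ C := fun h' => nbc (op2_rl.mpr ⟨hj0, h'⟩)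
      have hdC : d ∉ C := fun h' => nbd (op2_rl.mpr ⟨hj0, h'⟩)
      have hc : c ∈ G.neighborSet a \ C := ⟨op2_ll.mp Aac, hcC⟩
      have hd : d ∈ G.neighborSet a \ C := ⟨op2_ll.mp Aad, hdC⟩
      exact ncd (op2_ll.mpr (hnbr a haC hc hd (by simpa using hcd)))
    · obtain ⟨hj0, -⟩ := op2_lr.mp Aab
      obtain ⟨hl0, -⟩ := op2_lr.mp Aad
      have : j ≠ l := by simpa using hbd
      omega
    · obtain ⟨hj0, -⟩ := op2_lr.mp Aab
      obtain ⟨hk0, -⟩ := op2_lr.mp Aac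
      have : j ≠ k := by simpa using hbc
      omega
    · obtain ⟨hj0, -⟩ := op2_lr.mp Aab
      obtain ⟨hk0, -⟩ := op2_lr.mp Aac
      have : j ≠ k := by simpa using hbc
      omega
  · obtain (b | j) := b <;> obtain (c | k) := c <;> obtain (d | l) := d
    · obtain ⟨-, hbC⟩ := op2_rl.mp Aab
      obtain ⟨-, hcC⟩ := op2_rl.mp Aac
      exact nbc (op2_ll.mpr (hC hbC hcC (by simpa using hbc)))
    · obtain ⟨-, hbC⟩ := op2_rl.mp Aab
      obtain ⟨-, hcC⟩ := op2_rl.mp Aac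
      exact nbc (op2_ll.mpr (hC hbC hcC (by simpa using hbc)))
    · obtain ⟨-, hbC⟩ := op2_rl.mp Aab
      obtain ⟨-, hdC⟩ := op2_rl.mp Aad
      exact nbd (op2_ll.mpr (hC hbC hdC (by simpa using hbd)))
    · have hk : i ≠ k := op2_rr.mp Aac
      have hl : i ≠ l := op2_rr.mp Aad
      have : k ≠ l := by simpa using hcd
      omega
    · obtain ⟨-, hcC⟩ := op2_rl.mp Aac
      obtain ⟨-, hdC⟩ := op2_rl.mp Aad
      exact ncd (op2_ll.mpr (hC hcC hdC (by simpa using hcd)))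
    · have hj : i ≠ j := op2_rr.mp Aab
      have hl : i ≠ l := op2_rr.mp Aad
      have : j ≠ l := by simpa using hbd
      omega
    · have hj : i ≠ j := op2_rr.mp Aab
      have hk : i ≠ k := op2_rr.mp Aac
      have : j ≠ k := by simpa using hbc
      omega
    · have hj : i ≠ j := op2_rr.mp Aab
      have hk : i ≠ k := op2_rr.mp Aac
      have : j ≠ k := by simpa using hbc
      omega

end ops

open SimpleGraph Sum in
theorem classG_aux : ∀ (V : Type) (G : SimpleGraph V), InClassG V G →
    G.Connected ∧ ClawFree G ∧ ∃! M : G.Subgraph, M.IsPerfectMatching := by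
  intro V G hG
  induction hG with
  | base => exact ⟨base_conn, base_cf, base_pm⟩
  | op1 G u hu hG ih =>
      obtain ⟨hc, hcf, hpm⟩ := ih
      exact ⟨conn_transfer (fun a b h => op1_ll.mpr h) (op1_rr.mpr (by decide)) u
          (op1_rl.mpr rfl) hc,
        op1_clawFree hu hcf,
        pm_transfer (fun a b => op1_ll) (op1_rr.mpr (by decide)) op1_force hpm⟩
  | op2 G C hne hC hnbr hG ih =>
      obtain ⟨hc, hcf, hpm⟩ := ih
      obtain ⟨v0, hv0⟩ := hne
      exact ⟨conn_transfer (fun a b h => op2_ll.mpr h) (op2_rr.mpr (by decide)) v0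
          (op2_rl.mpr ⟨rfl, hv0⟩) hc,
        op2_clawFree hC hnbr hcf,
        pm_transfer (fun a b => op2_ll) (op2_rr.mpr (by decide)) op2_force hpm⟩
  | iso G H e hG ih =>
      obtain ⟨hc, hcf, hpm⟩ := ih
      exact ⟨(e.connected_iff).mp hc, clawFree_iso e hcf, pm_iso e hpm⟩

theorem classG_connected_clawfree_unique_pm (V : Type) [Fintype V]
    (G : SimpleGraph V) (hG : InClassG V G) :
    G.Connected ∧ ClawFree G ∧ ∃! M : G.Subgraph, M.IsPerfectMatching := by
  exact classG_aux V G hG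
end

section
/- Every connected claw-free finite simple graph with a unique perfect matching belongs to the class 𝒢. -/
open SimpleGraph


section Partner

variable {V : Type} (G : SimpleGraph V)

/-- partner function presentation of a perfect matching -/
def IsPartner (m : V → V) : Prop :=
  ∀ v, G.Adj v (m v) ∧ m (m v) = v

variable {G}

lemma IsPartner.adj {m : V → V} (h : IsPartner G m) (v : V) : G.Adj v (m v) := (h v).1
lemma IsPartner.invol {m : V → V} (h : IsPartner G m) (v : V) : m (m v) = v := (h v).2
lemma IsPartner.ne {m : V → V} (h : IsPartner G m) (v : V) : m v ≠ v :=
  fun he => G.irrefl (he ▸ (h v).1)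

/-- subgraph from a partner function -/
def pmOf {m : V → V} (hm : IsPartner G m) : G.Subgraph where
  verts := Set.univ
  Adj a b := G.Adj a b ∧ b = m a
  adj_sub h := h.1
  edge_vert _ := trivial
  symm := by
    constructor
    rintro a b ⟨h1, rfl⟩
    exact ⟨h1.symm, (hm.invol a).symm⟩

lemma pmOf_isPerfectMatching {m : V → V} (hm : IsPartner G m) :
    (pmOf hm).IsPerfectMatching := by
  constructor
  · intro v _
    exact ⟨m v, ⟨hm.adj v, rfl⟩, by rintro w ⟨-, rfl⟩; rfl⟩
  · intro v; trivial

noncomputable def Subgraph.partner (M : G.Subgraph) (hM : M.IsPerfectMatching) (v : V) : V :=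
  (hM.1 (hM.2 v)).exists.choose

lemma partner_spec {M : G.Subgraph} (hM : M.IsPerfectMatching) (v : V) :
    M.Adj v (Subgraph.partner M hM v) := (hM.1 (hM.2 v)).exists.choose_spec

lemma partner_eq {M : G.Subgraph} (hM : M.IsPerfectMatching) {v w : V} (h : M.Adj v w) :
    w = Subgraph.partner M hM v := by
  have h2 := hM.1 (hM.2 v)
  exact h2.unique h (partner_spec hM v)

lemma partner_isPartner {M : G.Subgraph} (hM : M.IsPerfectMatching) :
    IsPartner G (Subgraph.partner M hM) := by
  intro v
  refine ⟨M.adj_sub (partner_spec hM v), ?_⟩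
  exact (partner_eq hM (partner_spec hM v).symm).symm

/-- A perfect matching is determined by its partner function. -/
lemma pm_eq_of_partner_eq {M N : G.Subgraph} (hM : M.IsPerfectMatching)
    (hN : N.IsPerfectMatching)
    (h : Subgraph.partner M hM = Subgraph.partner N hN) : M = N := by
  apply SimpleGraph.Subgraph.ext
  · rw [hM.2.verts_eq_univ, hN.2.verts_eq_univ]
  · ext a b
    constructor
    · intro hab
      have : b = Subgraph.partner M hM a := partner_eq hM hab
      rw [this, h]; exact (partner_spec hN a)
    · intro hab
      have : b = Subgraph.partner N hN a := partner_eq hN hab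
      rw [this, ← h]; exact (partner_spec hM a)

/-- unique perfect matching in partner form -/
lemma unique_partner_of_upm (hupm : ∃! M : G.Subgraph, M.IsPerfectMatching) :
    ∃ m : V → V, IsPartner G m ∧ ∀ m₂ : V → V, IsPartner G m₂ → m₂ = m := by
  obtain ⟨M, hM, huniq⟩ := hupm
  refine ⟨Subgraph.partner M hM, partner_isPartner hM, ?_⟩
  intro m₂ hm₂
  have hEq : pmOf hm₂ = M := huniq _ (pmOf_isPerfectMatching hm₂)
  funext v
  have : M.Adj v (m₂ v) := by rw [← hEq]; exact ⟨hm₂.adj v, rfl⟩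
  exact partner_eq hM this

lemma upm_of_unique_partner {m : V → V} (hm : IsPartner G m)
    (h : ∀ m₂ : V → V, IsPartner G m₂ → m₂ = m) :
    ∃! M : G.Subgraph, M.IsPerfectMatching := by
  refine ⟨pmOf hm, pmOf_isPerfectMatching hm, ?_⟩
  intro N hN
  have hp := partner_isPartner hN
  have := h _ hp
  exact pm_eq_of_partner_eq hN (pmOf_isPerfectMatching hm)
    (by rw [this]; funext v; exact partner_eq (pmOf_isPerfectMatching hm) ⟨hm.adj v, rfl⟩)

end Partner

section APath
variable {V : Type} {G : SimpleGraph V} {m : V → V}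

variable {V : Type} {G : SimpleGraph V} {m : V → V}


/-- An even alternating cycle yields a different perfect matching: contradiction. -/
lemma altCycle_false (hm : IsPartner G m) (hu : ∀ m₂, IsPartner G m₂ → m₂ = m)
    (c : ℕ → V) (K : ℕ) (hK3 : 3 ≤ K) (hKodd : K % 2 = 1)
    (hinj : ∀ i ≤ K, ∀ j ≤ K, c i = c j → i = j)
    (hadj : ∀ i < K, G.Adj (c i) (c (i+1)))
    (hchord : G.Adj (c K) (c 0))
    (hmEq : ∀ i < K, i % 2 = 0 → m (c i) = c (i+1)) : False := by
  classical
  set σ : ℕ → ℕ := fun j => if j = 0 then K else if j = K then 0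
      else if j % 2 = 1 then j + 1 else j - 1 with hσ
  have s0 : σ 0 = K := by simp [hσ]
  have sK : σ K = 0 := by simp [hσ]
  have sodd : ∀ j, j ≠ 0 → j ≠ K → j % 2 = 1 → σ j = j + 1 := by
    intro j h1 h2 h3; simp only [hσ]; rw [if_neg h1, if_neg h2, if_pos h3]
  have seven : ∀ j, j ≠ 0 → j ≠ K → j % 2 = 0 → σ j = j - 1 := by
    intro j h1 h2 h3; simp only [hσ]; rw [if_neg h1, if_neg h2, if_neg (by omega)]
  have cases4 : ∀ j ≤ K, j = 0 ∨ j = K ∨ (j ≠ 0 ∧ j ≠ K ∧ j % 2 = 1)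
      ∨ (j ≠ 0 ∧ j ≠ K ∧ j % 2 = 0) := by intro j hj; omega
  have σ_mem : ∀ j ≤ K, σ j ≤ K := by
    intro j hj
    rcases cases4 j hj with h | h | ⟨h1,h2,h3⟩ | ⟨h1,h2,h3⟩
    · rw [h, s0]
    · rw [h, sK]; omega
    · rw [sodd j h1 h2 h3]; omega
    · rw [seven j h1 h2 h3]; omega
  have σ_invol : ∀ j ≤ K, σ (σ j) = j := by
    intro j hj
    rcases cases4 j hj with h | h | ⟨h1,h2,h3⟩ | ⟨h1,h2,h3⟩
    · rw [h, s0, sK]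
    · rw [h, sK, s0]
    · rw [sodd j h1 h2 h3, seven (j+1) (by omega) (by omega) (by omega)]; omega
    · rw [seven j h1 h2 h3, sodd (j-1) (by omega) (by omega) (by omega)]; omega
  have σ_adj : ∀ j ≤ K, G.Adj (c j) (c (σ j)) := by
    intro j hj
    rcases cases4 j hj with h | h | ⟨h1,h2,h3⟩ | ⟨h1,h2,h3⟩
    · rw [h, s0]; exact hchord.symm
    · rw [h, sK]; exact hchord
    · rw [sodd j h1 h2 h3]; exact hadj j (by omega)
    · rw [seven j h1 h2 h3]
      have := (hadj (j-1) (by omega)).symm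
      rwa [show j - 1 + 1 = j by omega] at this
  have mc : ∀ j ≤ K, j % 2 = 0 → m (c j) = c (j + 1) := by
    intro j hj hj2; exact hmEq j (by omega) hj2
  have mco : ∀ j ≤ K, j % 2 = 1 → m (c j) = c (j - 1) := by
    intro j hj hj2
    have h1 : m (c (j-1)) = c j := by
      have := mc (j-1) (by omega) (by omega)
      rwa [show j - 1 + 1 = j by omega] at this
    rw [← h1, hm.invol]
  have mclosed : ∀ v, (¬ ∃ j, j ≤ K ∧ c j = v) → ¬ ∃ j, j ≤ K ∧ c j = m v := by
    rintro v hv ⟨j, hj, hjv⟩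
    apply hv
    have hvm : v = m (c j) := by rw [hjv, hm.invol]
    rcases Nat.even_or_odd j with hpar | hpar
    · have hj2 := Nat.even_iff.mp hpar
      exact ⟨j + 1, by omega, by rw [← mc j hj hj2, hvm]⟩
    · have hj2 := Nat.odd_iff.mp hpar
      exact ⟨j - 1, by omega, by rw [← mco j hj hj2, hvm]⟩
  set f : V → V := fun v => if h : ∃ j, j ≤ K ∧ c j = v then c (σ h.choose) else m v with hf
  have fc : ∀ j ≤ K, f (c j) = c (σ j) := by
    intro j hj
    have hex : ∃ j', j' ≤ K ∧ c j' = c j := ⟨j, hj, rfl⟩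
    have : hex.choose = j := hinj _ hex.choose_spec.1 _ hj hex.choose_spec.2
    simp only [hf, dif_pos hex, this]
  have foff : ∀ v, (¬ ∃ j, j ≤ K ∧ c j = v) → f v = m v := by
    intro v hv; simp only [hf, dif_neg hv]
  have hfp : IsPartner G f := by
    intro v
    by_cases h : ∃ j, j ≤ K ∧ c j = v
    · obtain ⟨j, hj, rfl⟩ := h
      rw [fc j hj]
      exact ⟨σ_adj j hj, by rw [fc _ (σ_mem j hj), σ_invol j hj]⟩
    · rw [foff v h]
      exact ⟨hm.adj v, by rw [foff _ (mclosed v h), hm.invol]⟩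
  have hfm := hu f hfp
  have h0 : f (c 0) = c K := by rw [fc 0 (by omega), s0]
  have h1 : m (c 0) = c 1 := mc 0 (by omega) rfl
  rw [hfm, h1] at h0
  have := hinj 1 (by omega) K (le_refl _) h0
  omega

end APath

section APath2
variable {V : Type} {G : SimpleGraph V} {m : V → V}

lemma claw_away (hcf : ClawFree G) {t a b c : V} (h1 : G.Adj t a) (h2 : G.Adj t b)
    (h3 : G.Adj t c) (hab : a ≠ b) (hac : a ≠ c) (hbc : b ≠ c)
    (n1 : ¬ G.Adj a b) (n2 : ¬ G.Adj a c) (n3 : ¬ G.Adj b c) : False :=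
  hcf ⟨t, a, b, c, h1.ne, h2.ne, h3.ne, hab, hac, hbc, h1, h2, h3, n1, n2, n3⟩

structure APath (G : SimpleGraph V) (m : V → V) (p : ℕ → V) (L : ℕ) : Prop where
  odd : L % 2 = 1
  inj : ∀ i ≤ L, ∀ j ≤ L, p i = p j → i = j
  adj : ∀ i < L, G.Adj (p i) (p (i+1))
  mEq : ∀ i < L, i % 2 = 0 → m (p i) = p (i+1)

variable {p : ℕ → V} {L : ℕ}

lemma APath.mOdd (h : APath G m p L) (hm : IsPartner G m) :
    ∀ j ≤ L, j % 2 = 1 → m (p j) = p (j - 1) := by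
  intro j hj hj2
  have h1 : m (p (j-1)) = p j := by
    have := h.mEq (j-1) (by omega) (by omega)
    rwa [show j - 1 + 1 = j by omega] at this
  rw [← h1, hm.invol]

/-- even chord from the end of an alternating path -/
lemma alt1_false (hm : IsPartner G m) (hu : ∀ m₂, IsPartner G m₂ → m₂ = m)
    (hP : APath G m p L) {i : ℕ} (hie : i % 2 = 0) (hiL : i + 3 ≤ L)
    (hchord : G.Adj (p L) (p i)) : False := by
  have hLo := hP.odd
  apply altCycle_false hm hu (fun j => p (i + j)) (L - i) (by omega) (by omega)
  · intro a ha b hb hab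
    have := hP.inj (i+a) (by omega) (i+b) (by omega) hab
    omega
  · intro j hj; exact hP.adj (i + j) (by omega)
  · rw [show i + (L - i) = L by omega, show i + 0 = i by omega]; exact hchord
  · intro j hj hj2; exact hP.mEq (i + j) (by omega) (by omega)

/-- odd chord from the end, plus shortcut edge -/
lemma alt2_false (hm : IsPartner G m) (hu : ∀ m₂, IsPartner G m₂ → m₂ = m)
    (hP : APath G m p L) {i : ℕ} (hio : i % 2 = 1) (hi1 : 1 ≤ i) (hiL : i + 4 ≤ L)
    (hchord : G.Adj (p L) (p i)) (hshort : G.Adj (p (i-1)) (p (i+1))) : False := by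
  set δ : ℕ → ℕ := fun j => if j = 0 then i else if j = 1 then i - 1 else i + j - 1 with hδ
  have d0 : δ 0 = i := by simp [hδ]
  have d1 : δ 1 = i - 1 := by simp [hδ]
  have dge : ∀ j, 2 ≤ j → δ j = i + j - 1 := by
    intro j hj; simp only [hδ]; rw [if_neg (by omega), if_neg (by omega)]
  set K := L - i + 1 with hK
  have dmem : ∀ j ≤ K, δ j ≤ L := by
    intro j hj
    rcases (by omega : j = 0 ∨ j = 1 ∨ 2 ≤ j) with h | h | h
    · rw [h, d0]; omega
    · rw [h, d1]; omega
    · rw [dge j h]; omega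
  have hLo := hP.odd
  have val : ∀ j, (j = 0 ∧ δ j = i) ∨ (j = 1 ∧ δ j = i - 1) ∨ (2 ≤ j ∧ δ j = i + j - 1) := by
    intro j
    rcases (by omega : j = 0 ∨ j = 1 ∨ 2 ≤ j) with h | h | h
    · exact Or.inl ⟨h, by rw [h, d0]⟩
    · exact Or.inr (Or.inl ⟨h, by rw [h, d1]⟩)
    · exact Or.inr (Or.inr ⟨h, dge j h⟩)
  have dinj : ∀ a ≤ K, ∀ b ≤ K, δ a = δ b → a = b := by
    intro a _ b _ hab
    rcases val a with ⟨h1, h2⟩ | ⟨h1, h2⟩ | ⟨h1, h2⟩ <;>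
      rcases val b with ⟨h1', h2'⟩ | ⟨h1', h2'⟩ | ⟨h1', h2'⟩ <;>
      (rw [h2, h2'] at hab; omega)
  apply altCycle_false hm hu (fun j => p (δ j)) K (by omega) (by omega)
  · intro a ha b hb hab
    exact dinj a ha b hb (hP.inj _ (dmem a ha) _ (dmem b hb) hab)
  · intro j hj
    rcases (by omega : j = 0 ∨ j = 1 ∨ 2 ≤ j) with h | h | h
    · subst h
      rw [show (0:ℕ)+1 = 1 by rfl, d0, d1]
      have := (hP.adj (i-1) (by omega)).symm
      rwa [show i - 1 + 1 = i by omega] at this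
    · subst h
      rw [d1, dge 2 (by omega), show i + 2 - 1 = i + 1 by omega]
      exact hshort
    · rw [dge j h, dge (j+1) (by omega), show i + (j+1) - 1 = (i + j - 1) + 1 by omega]
      exact hP.adj (i+j-1) (by omega)
  · rw [d0, dge K (by omega), show i + K - 1 = L by omega]
    exact hchord
  · intro j hj hj2
    rcases (by omega : j = 0 ∨ 2 ≤ j) with h | h
    · subst h
      rw [show (0:ℕ)+1 = 1 by rfl, d0, d1]
      exact hP.mOdd hm i (by omega) hio
    · rw [dge j h, dge (j+1) (by omega), show i + (j+1) - 1 = (i + j - 1) + 1 by omega]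
      exact hP.mEq (i+j-1) (by omega) (by omega)

/-- any chord from the end of an alternating path lands at position `L-2`. -/
lemma chord_lands (hm : IsPartner G m) (hu : ∀ m₂, IsPartner G m₂ → m₂ = m)
    (hcf : ClawFree G) (hP : APath G m p L) {i : ℕ} (hiL : i ≤ L - 2) (hL3 : 3 ≤ L)
    (hchord : G.Adj (p L) (p i)) : i = L - 2 := by
  have hLo := hP.odd
  by_contra hne
  rcases Nat.even_or_odd i with hpar | hpar
  · exact alt1_false hm hu hP (Nat.even_iff.mp hpar) (by omega) hchord
  · have hio := Nat.odd_iff.mp hpar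
    have hi4 : i + 4 ≤ L := by omega
    by_cases h1 : G.Adj (p (i+1)) (p L)
    · exact alt1_false hm hu hP (i := i+1) (by omega) (by omega) h1.symm
    by_cases h2 : G.Adj (p (i-1)) (p L)
    · exact alt1_false hm hu hP (i := i-1) (by omega) (by omega) h2.symm
    by_cases h3 : G.Adj (p (i-1)) (p (i+1))
    · exact alt2_false hm hu hP hio (by omega) hi4 hchord h3
    · have e1 : G.Adj (p i) (p (i-1)) := by
        have := (hP.adj (i-1) (by omega)).symm
        rwa [show i - 1 + 1 = i by omega] at this
      have e2 : G.Adj (p i) (p (i+1)) := hP.adj i (by omega)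
      have e3 : G.Adj (p i) (p L) := hchord.symm
      have ne1 : p (i-1) ≠ p (i+1) := fun h =>
        by have := hP.inj _ (by omega) _ (by omega) h; omega
      have ne2 : p (i-1) ≠ p L := fun h =>
        by have := hP.inj _ (by omega) _ (le_refl L) h; omega
      have ne3 : p (i+1) ≠ p L := fun h =>
        by have := hP.inj _ (by omega) _ (le_refl L) h; omega
      exact claw_away hcf e1 e2 e3 ne1 ne2 ne3 h3 h2 h1

/-- extending an alternating path by a fresh neighbour and its partner -/
lemma apath_extend (hm : IsPartner G m) (hP : APath G m p L) {u : V}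
    (hadj : G.Adj (p L) u) (hfresh : ∀ j ≤ L, p j ≠ u) :
    APath G m (fun j => if j ≤ L then p j else if j = L + 1 then u else m u) (L + 2) := by
  have hLo := hP.odd
  have hfresh2 : ∀ j ≤ L, p j ≠ m u := by
    intro j hj h
    have h2 : m (p j) = u := by rw [h, hm.invol]
    rcases Nat.even_or_odd j with hpar | hpar
    · have hje := Nat.even_iff.mp hpar
      have := hP.mEq j (by omega) hje
      exact hfresh (j+1) (by omega) (by rw [← this, h2])
    · have := hP.mOdd hm j hj (Nat.odd_iff.mp hpar)
      exact hfresh (j-1) (by omega) (by rw [← this, h2])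
  have hum : u ≠ m u := (hm.adj u).ne
  constructor
  · omega
  · intro a ha b hb hab
    rcases (by omega : a ≤ L ∨ a = L + 1 ∨ a = L + 2) with h | h | h <;>
      rcases (by omega : b ≤ L ∨ b = L + 1 ∨ b = L + 2) with h' | h' | h'
    · rw [if_pos h, if_pos h'] at hab
      exact hP.inj a h b h' hab
    · rw [if_pos h, h', if_neg (by omega), if_pos rfl] at hab
      exact absurd hab (hfresh a h)
    · rw [if_pos h, h', if_neg (by omega), if_neg (by omega)] at hab
      exact absurd hab (hfresh2 a h)
    · rw [h, if_neg (by omega), if_pos rfl, if_pos h'] at hab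
      exact absurd hab.symm (hfresh b h')
    · omega
    · rw [h, h', if_neg (by omega), if_pos rfl, if_neg (by omega), if_neg (by omega)] at hab
      exact absurd hab hum
    · rw [h, if_neg (by omega), if_neg (by omega), if_pos h'] at hab
      exact absurd hab.symm (hfresh2 b h')
    · rw [h, h', if_neg (by omega), if_neg (by omega), if_neg (by omega), if_pos rfl] at hab
      exact absurd hab.symm hum
    · omega
  · intro i hi
    rcases (by omega : i + 1 ≤ L ∨ i = L ∨ i = L + 1) with h | h | h
    · rw [if_pos h, if_pos (by omega)]
      exact hP.adj i (by omega)
    · rw [h, if_pos (le_refl L), if_neg (by omega), if_pos rfl]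
      exact hadj
    · rw [h, if_neg (by omega), if_pos rfl, if_neg (by omega), if_neg (by omega)]
      exact hm.adj u
  · intro i hi hie
    rcases (by omega : i + 1 ≤ L ∨ i = L ∨ i = L + 1) with h | h | h
    · rw [if_pos h, if_pos (by omega)]
      exact hP.mEq i (by omega) hie
    · omega
    · rw [h, if_neg (by omega), if_pos rfl, if_neg (by omega), if_neg (by omega)]

lemma exists_triangle_config [Fintype V] [Nonempty V]
    (hm : IsPartner G m) (hu : ∀ m₂, IsPartner G m₂ → m₂ = m) (hcf : ClawFree G)
    (hmin : ∀ v, ∃ w, G.Adj v w ∧ w ≠ m v) :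
    ∃ z y t : V, m z = y ∧ G.Adj z y ∧ G.Adj z t ∧ G.Adj y t ∧
      (∀ w, G.Adj z w → w = y ∨ w = t) ∧ (∀ w, G.Adj y w → w = z ∨ w = t) := by
  classical
  set P : ℕ → Prop := fun L => L % 2 = 1 ∧ ∃ p, APath G m p L with hPdef
  have hbound : ∀ L, P L → L ≤ Fintype.card V := by
    rintro L ⟨-, p, hp⟩
    have hinj : Function.Injective (fun j : Fin (L+1) => p j) := by
      intro a b hab
      exact Fin.ext (hp.inj a (Nat.lt_succ_iff.mp a.isLt) b (Nat.lt_succ_iff.mp b.isLt) hab)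
    have := Fintype.card_le_of_injective _ hinj
    simp only [Fintype.card_fin] at this
    omega
  have hP1 : P 1 := by
    obtain ⟨v⟩ := ‹Nonempty V›
    refine ⟨rfl, fun j => if j = 0 then v else m v, ?_, ?_, ?_, ?_⟩
    · rfl
    · intro a ha b hb hab
      interval_cases a <;> interval_cases b <;> simp_all
      · exact absurd hab (hm.adj v).ne
      · exact absurd hab.symm (hm.adj v).ne
    · intro i hi
      have : i = 0 := by omega
      subst this
      simpa using hm.adj v
    · intro i hi hie
      have : i = 0 := by omega
      subst this
      simp
  set L := Nat.findGreatest P (Fintype.card V) with hL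
  have hPL : P L := Nat.findGreatest_spec (m := 1) (by
      have := Fintype.card_pos (α := V); omega) hP1
  have hmax : ∀ L', P L' → L' ≤ L := fun L' h => Nat.le_findGreatest (hbound L' h) h
  obtain ⟨hLo, p, hp⟩ := hPL
  have onpath : ∀ (q : ℕ → V), APath G m q L → ∀ w, G.Adj (q L) w → ∃ j ≤ L, q j = w := by
    intro q hq w hw
    by_contra hno
    push_neg at hno
    have hext := apath_extend hm hq hw hno
    have hPL2 : P (L+2) := ⟨by omega, _, hext⟩
    have := hmax _ hPL2
    omega
  have hL3 : 3 ≤ L := by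
    by_contra h
    have hL1 : L = 1 := by omega
    obtain ⟨w, hw, hwm⟩ := hmin (p L)
    obtain ⟨j, hj, hjw⟩ := onpath p hp w hw
    have hmL : m (p L) = p (L-1) := hp.mOdd hm L (le_refl L) hLo
    rw [hL1] at hj
    interval_cases j
    · apply hwm
      rw [hmL, hL1]
      exact hjw.symm
    · rw [hL1] at hw
      rw [hjw] at hw
      exact G.loopless.irrefl _ hw
  have dich : ∀ (q : ℕ → V), APath G m q L → ∀ w, G.Adj (q L) w →
      w = q (L-1) ∨ w = q (L-2) := by
    intro q hq w hw
    obtain ⟨j, hj, rfl⟩ := onpath q hq w hw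
    rcases (by omega : j = L ∨ j = L - 1 ∨ j ≤ L - 2) with h | h | h
    · rw [h] at hw
      exact absurd hw (G.loopless.irrefl _)
    · left; rw [h]
    · right; rw [chord_lands hm hu hcf hq h hL3 hw]
  have hmL : m (p L) = p (L-1) := hp.mOdd hm L (le_refl L) hLo
  obtain ⟨w, hw, hwm⟩ := hmin (p L)
  have hwt : w = p (L-2) := by
    rcases dich p hp w hw with h | h
    · rw [hmL] at hwm
      exact absurd h hwm
    · exact h
  have hzt : G.Adj (p L) (p (L-2)) := hwt ▸ hw
  set τ : ℕ → ℕ := fun j => if j = L - 1 then L else if j = L then L - 1 else j with hτ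
  have t1 : τ (L-1) = L := by simp only [hτ]; split_ifs <;> omega
  have t2 : τ L = L - 1 := by simp only [hτ]; split_ifs <;> omega
  have t3 : ∀ j ≤ L - 2, τ j = j := by
    intro j hj; simp only [hτ]; split_ifs <;> omega
  have tmem : ∀ j ≤ L, τ j ≤ L := by
    intro j hj; simp only [hτ]; split_ifs <;> omega
  set q : ℕ → V := fun j => p (τ j) with hq'
  have hq : APath G m q L := by
    refine ⟨hLo, ?_, ?_, ?_⟩
    · intro a ha b hb hab
      have h2 : τ a = τ b := hp.inj _ (tmem a ha) _ (tmem b hb) hab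
      simp only [hτ] at h2
      split_ifs at h2 <;> omega
    · intro i hi
      rcases (by omega : i + 1 ≤ L - 2 ∨ i = L - 2 ∨ i = L - 1) with h | h | h
      · show G.Adj (p (τ i)) (p (τ (i+1)))
        rw [t3 i (by omega), t3 (i+1) h]
        exact hp.adj i (by omega)
      · show G.Adj (p (τ i)) (p (τ (i+1)))
        rw [h, t3 (L-2) (le_refl _), show L - 2 + 1 = L - 1 by omega, t1]
        exact hzt.symm
      · show G.Adj (p (τ i)) (p (τ (i+1)))
        rw [h, t1, show L - 1 + 1 = L by omega, t2]
        have := (hp.adj (L-1) (by omega)).symm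
        rwa [show L - 1 + 1 = L by omega] at this
    · intro i hi hie
      rcases (by omega : i + 1 ≤ L - 2 ∨ i = L - 2 ∨ i = L - 1) with h | h | h
      · show m (p (τ i)) = p (τ (i+1))
        rw [t3 i (by omega), t3 (i+1) h]
        exact hp.mEq i (by omega) hie
      · omega
      · show m (p (τ i)) = p (τ (i+1))
        rw [h, t1, show L - 1 + 1 = L by omega, t2]
        exact hmL
  refine ⟨p L, p (L-1), p (L-2), hmL, ?_, hzt, ?_, dich p hp, ?_⟩
  · have h2 := hp.adj (L-1) (by omega)
    rw [show L - 1 + 1 = L by omega] at h2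
    exact h2.symm
  · have h2 := hp.adj (L-2) (by omega)
    rw [show L - 2 + 1 = L - 1 by omega] at h2
    exact h2.symm
  · intro w' hw'
    have hadj' : G.Adj (q L) w' := by
      show G.Adj (p (τ L)) w'
      rwa [t2]
    rcases dich q hq w' hadj' with h | h
    · left
      rw [h]
      show p (τ (L-1)) = p L
      rw [t1]
    · right
      rw [h]
      show p (τ (L-2)) = p (L-2)
      rw [t3 (L-2) (le_refl _)]

end APath2

section Strip
variable {V : Type} {G : SimpleGraph V} {x y : V} {D : Set V}

/-- dropping the initial segment of a walk that stays in {x,y} -/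
lemma strip_drop (hD : ∀ w, G.Adj x w → w = y ∨ w ∈ D) (hE : ∀ w, G.Adj y w → w = x ∨ w ∈ D) :
    ∀ (n : ℕ) (v b : V) (w : G.Walk v b), w.length ≤ n → (v = x ∨ v = y) →
      b ≠ x → b ≠ y → ∃ g, g ≠ x ∧ g ≠ y ∧ g ∈ D ∧ ∃ w' : G.Walk g b, w'.length < w.length := by
  intro n
  induction n with
  | zero =>
    intro v b w hw hv hbx hby
    have : v = b := by
      cases w with
      | nil => rfl
      | cons h t => simp at hw
    rcases hv with h | h <;> subst this <;> [exact absurd h hbx; exact absurd h hby]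
  | succ n ih =>
    intro v b w hw hv hbx hby
    cases w with
    | nil =>
      rcases hv with h | h <;> subst h <;> [exact absurd rfl hbx; exact absurd rfl hby]
    | cons h t =>
      rename_i c
      by_cases hc : c = x ∨ c = y
      · obtain ⟨g, hg1, hg2, hg3, w', hw'⟩ :=
          ih c b t (by simp at hw; omega) hc hbx hby
        exact ⟨g, hg1, hg2, hg3, w', by simp; omega⟩
      · push_neg at hc
        have hcD : c ∈ D := by
          rcases hv with hv | hv
          · subst hv
            rcases hD c h with h' | h'
            · exact absurd h' hc.2
            · exact h'
          · subst hv
            rcases hE c h with h' | h'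
            · exact absurd h' hc.1
            · exact h'
        exact ⟨c, hc.1, hc.2, hcD, t, by simp⟩

lemma strip_reach (hD : ∀ w, G.Adj x w → w = y ∨ w ∈ D)
    (hE : ∀ w, G.Adj y w → w = x ∨ w ∈ D)
    (hclq : ∀ a ∈ D, ∀ b ∈ D, a ≠ b → G.Adj a b) :
    ∀ (n : ℕ) (a b : V) (ha : a ≠ x ∧ a ≠ y) (hb : b ≠ x ∧ b ≠ y) (w : G.Walk a b),
      w.length ≤ n →
      (G.comap (Subtype.val : {v : V // v ≠ x ∧ v ≠ y} → V)).Reachable ⟨a, ha⟩ ⟨b, hb⟩ := by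
  intro n
  induction n with
  | zero =>
    intro a b ha hb w hw
    have : a = b := by
      cases w with
      | nil => rfl
      | cons h t => simp at hw
    subst this
    exact Reachable.refl _
  | succ n ih =>
    intro a b ha hb w hw
    cases w with
    | nil => exact Reachable.refl _
    | cons h t =>
      rename_i c
      by_cases hc : c = x ∨ c = y
      · -- a is in D
        have haD : a ∈ D := by
          rcases hc with hc | hc <;> subst hc
          · rcases hD a h.symm with h' | h'
            · exact absurd h' ha.2
            · exact h'
          · rcases hE a h.symm with h' | h'
            · exact absurd h' ha.1
            · exact h'
        by_cases hab : a = b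
        · subst hab; exact Reachable.refl _
        · obtain ⟨g, hg1, hg2, hg3, w', hw'⟩ :=
            strip_drop hD hE (n) c b t (by simp at hw; omega) hc hb.1 hb.2
          have hrest : (G.comap (Subtype.val : {v : V // v ≠ x ∧ v ≠ y} → V)).Reachable
              ⟨g, hg1, hg2⟩ ⟨b, hb⟩ := ih g b ⟨hg1, hg2⟩ hb w' (by simp at hw; omega)
          by_cases hag : a = g
          · subst hag; exact hrest
          · have hadj : (G.comap (Subtype.val : {v : V // v ≠ x ∧ v ≠ y} → V)).Adj
                ⟨a, ha⟩ ⟨g, hg1, hg2⟩ := hclq a haD g hg3 hag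
            exact hadj.reachable.trans hrest
      · push_neg at hc
        have hadj : (G.comap (Subtype.val : {v : V // v ≠ x ∧ v ≠ y} → V)).Adj
            ⟨a, ha⟩ ⟨c, hc⟩ := h
        exact hadj.reachable.trans (ih c b hc hb t (by simp at hw; omega))

lemma strip_connected (hconn : G.Connected)
    (hD : ∀ w, G.Adj x w → w = y ∨ w ∈ D)
    (hE : ∀ w, G.Adj y w → w = x ∨ w ∈ D)
    (hclq : ∀ a ∈ D, ∀ b ∈ D, a ≠ b → G.Adj a b)
    (hne : Nonempty {v : V // v ≠ x ∧ v ≠ y}) :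
    (G.comap (Subtype.val : {v : V // v ≠ x ∧ v ≠ y} → V)).Connected := by
  rw [connected_iff]
  refine ⟨fun a b => ?_, hne⟩
  obtain ⟨w⟩ := hconn.preconnected a.val b.val
  exact strip_reach hD hE hclq w.length a.val b.val
    ⟨a.prop.1, a.prop.2⟩ ⟨b.prop.1, b.prop.2⟩ w (le_refl _)

end Strip
section AdjLemmas
variable {W : Type*} {H : SimpleGraph W} {C : Set W} {u : W}

lemma addOp2_inl_inl {a b : W} : (AddOp2 H C).Adj (Sum.inl a) (Sum.inl b) ↔ H.Adj a b := by
  simp only [AddOp2, fromRel_adj]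
  constructor
  · rintro ⟨h1, h2 | h2⟩
    · exact h2
    · exact h2.symm
  · intro h
    exact ⟨by simp [h.ne], Or.inl h⟩

lemma addOp2_inl_inr {a : W} {i : Fin 2} :
    (AddOp2 H C).Adj (Sum.inl a) (Sum.inr i) ↔ i = 0 ∧ a ∈ C := by
  simp only [AddOp2, fromRel_adj]
  constructor
  · rintro ⟨h1, h2 | h2⟩
    · exact h2
    · exact h2.elim
  · intro h
    exact ⟨by simp, Or.inl h⟩

lemma addOp2_inr_inl {a : W} {i : Fin 2} :
    (AddOp2 H C).Adj (Sum.inr i) (Sum.inl a) ↔ i = 0 ∧ a ∈ C := by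
  rw [adj_comm]; exact addOp2_inl_inr

lemma addOp2_inr_inr {i j : Fin 2} :
    (AddOp2 H C).Adj (Sum.inr i) (Sum.inr j) ↔ i ≠ j := by
  simp only [AddOp2, fromRel_adj]
  constructor
  · rintro ⟨h1, -⟩
    exact fun h => h1 (by rw [h])
  · intro h
    exact ⟨by simp [h], Or.inl trivial⟩

lemma addOp1_inl_inl {a b : W} : (AddOp1 H u).Adj (Sum.inl a) (Sum.inl b) ↔ H.Adj a b := by
  simp only [AddOp1, fromRel_adj]
  constructor
  · rintro ⟨h1, h2 | h2⟩
    · exact h2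
    · exact h2.symm
  · intro h
    exact ⟨by simp [h.ne], Or.inl h⟩

lemma addOp1_inl_inr {a : W} {i : Fin 2} :
    (AddOp1 H u).Adj (Sum.inl a) (Sum.inr i) ↔ a = u := by
  simp only [AddOp1, fromRel_adj]
  constructor
  · rintro ⟨h1, h2 | h2⟩
    · exact h2
    · exact h2.elim
  · intro h
    exact ⟨by simp, Or.inl h⟩

lemma addOp1_inr_inl {a : W} {i : Fin 2} :
    (AddOp1 H u).Adj (Sum.inr i) (Sum.inl a) ↔ a = u := by
  rw [adj_comm]; exact addOp1_inl_inr

lemma addOp1_inr_inr {i j : Fin 2} :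
    (AddOp1 H u).Adj (Sum.inr i) (Sum.inr j) ↔ i ≠ j := by
  simp only [AddOp1, fromRel_adj]
  constructor
  · rintro ⟨h1, -⟩
    exact fun h => h1 (by rw [h])
  · intro h
    exact ⟨by simp [h], Or.inl trivial⟩

end AdjLemmas

section Iso
variable {V : Type} [DecidableEq V] {G : SimpleGraph V} {x y : V}

noncomputable def delEquiv (x y : V) (hxy : x ≠ y) : V ≃ ({v : V // v ≠ x ∧ v ≠ y} ⊕ Fin 2) where
  toFun v := if h1 : v = x then Sum.inr 0 else if h2 : v = y then Sum.inr 1 else Sum.inl ⟨v, h1, h2⟩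
  invFun s := match s with
    | Sum.inl a => a.val
    | Sum.inr i => if i = 0 then x else y
  left_inv v := by
    by_cases h1 : v = x
    · subst h1; simp
    · by_cases h2 : v = y
      · subst h2; simp [h1]
      · simp [h1, h2]
  right_inv s := by
    match s with
    | Sum.inl a => simp [a.prop.1, a.prop.2]
    | Sum.inr i =>
      fin_cases i
      · simp
      · simp [Ne.symm hxy]

lemma delEquiv_x (hxy : x ≠ y) : delEquiv x y hxy x = Sum.inr 0 := by simp [delEquiv]
lemma delEquiv_y (hxy : x ≠ y) : delEquiv x y hxy y = Sum.inr 1 := by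
  simp [delEquiv, Ne.symm hxy]
lemma delEquiv_other (hxy : x ≠ y) {v : V} (h1 : v ≠ x) (h2 : v ≠ y) :
    delEquiv x y hxy v = Sum.inl ⟨v, h1, h2⟩ := by simp [delEquiv, h1, h2]

/-- The isomorphism for operation 2 (pendant removal): `y` pendant at `x`. -/
noncomputable def isoOp2 (hxy : G.Adj x y) (hyN : ∀ w, G.Adj y w → w = x) :
    G ≃g AddOp2 (G.comap (Subtype.val : {v : V // v ≠ x ∧ v ≠ y} → V))
      {v : {v : V // v ≠ x ∧ v ≠ y} | G.Adj x v.val} where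
  toEquiv := delEquiv x y hxy.ne
  map_rel_iff' := by
    intro a b
    show (AddOp2 _ _).Adj (delEquiv x y hxy.ne a) (delEquiv x y hxy.ne b) ↔ G.Adj a b
    by_cases hax : a = x
    · by_cases hbx : b = x
      · rw [hax, hbx, delEquiv_x, addOp2_inr_inr]
        simp
    
      · by_cases hby : b = y
        · rw [hax, hby, delEquiv_x, delEquiv_y, addOp2_inr_inr]
          rw [hax] at *
          simp only [ne_eq]
          constructor
          · intro _; exact hxy
          · intro _; decide
        · rw [hax, delEquiv_x, delEquiv_other hxy.ne hbx hby, addOp2_inr_inl]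
          simp only [Set.mem_setOf_eq]
          constructor
          · rintro ⟨-, h⟩; exact h
          · intro h; exact ⟨by trivial, h⟩
    · by_cases hay : a = y
      · by_cases hbx : b = x
        · rw [hay, hbx, delEquiv_x, delEquiv_y, addOp2_inr_inr]
          constructor
          · intro _; exact hxy.symm
          · intro _; decide
        · by_cases hby : b = y
          · rw [hay, hby, delEquiv_y, addOp2_inr_inr]
            simp
          · rw [hay, delEquiv_y, delEquiv_other hxy.ne hbx hby, addOp2_inr_inl]
            constructor
            · rintro ⟨h, -⟩; exact absurd h (by decide)
            · intro h; exact absurd (hyN b h) hbx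
      · by_cases hbx : b = x
        · rw [hbx, delEquiv_x, delEquiv_other hxy.ne hax hay, addOp2_inl_inr]
          simp only [Set.mem_setOf_eq]
          constructor
          · rintro ⟨-, h⟩; exact h.symm
          · intro h; exact ⟨by trivial, h.symm⟩
        · by_cases hby : b = y
          · rw [hby, delEquiv_y, delEquiv_other hxy.ne hax hay, addOp2_inl_inr]
            constructor
            · rintro ⟨h, -⟩; exact absurd h (by decide)
            · intro h; exact absurd (hyN a h.symm) hax
          · rw [delEquiv_other hxy.ne hax hay, delEquiv_other hxy.ne hbx hby, addOp2_inl_inl]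
            exact Iff.rfl

/-- The isomorphism for operation 1 (triangle removal): `x,y,t` triangle. -/
noncomputable def isoOp1 {t : V} (hxy : G.Adj x y) (hxt : G.Adj x t) (hyt : G.Adj y t)
    (hxN : ∀ w, G.Adj x w → w = y ∨ w = t) (hyN : ∀ w, G.Adj y w → w = x ∨ w = t) :
    G ≃g AddOp1 (G.comap (Subtype.val : {v : V // v ≠ x ∧ v ≠ y} → V))
      ⟨t, hxt.ne', hyt.ne'⟩ where
  toEquiv := delEquiv x y hxy.ne
  map_rel_iff' := by
    intro a b
    show (AddOp1 _ _).Adj (delEquiv x y hxy.ne a) (delEquiv x y hxy.ne b) ↔ G.Adj a b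
    by_cases hax : a = x
    · by_cases hbx : b = x
      · rw [hax, hbx, delEquiv_x, addOp1_inr_inr]
        simp
      · by_cases hby : b = y
        · rw [hax, hby, delEquiv_x, delEquiv_y, addOp1_inr_inr]
          constructor
          · intro _; exact hxy
          · intro _; decide
        · rw [hax, delEquiv_x, delEquiv_other hxy.ne hbx hby, addOp1_inr_inl]
          constructor
          · intro h
            have : b = t := congrArg Subtype.val h
            rw [this]; exact hxt
          · intro h
            rcases hxN b h with h' | h'
            · exact absurd h' hby
            · exact Subtype.ext h'
    · by_cases hay : a = y
      · by_cases hbx : b = x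
        · rw [hay, hbx, delEquiv_x, delEquiv_y, addOp1_inr_inr]
          constructor
          · intro _; exact hxy.symm
          · intro _; decide
        · by_cases hby : b = y
          · rw [hay, hby, delEquiv_y, addOp1_inr_inr]
            simp
          · rw [hay, delEquiv_y, delEquiv_other hxy.ne hbx hby, addOp1_inr_inl]
            constructor
            · intro h
              have : b = t := congrArg Subtype.val h
              rw [this]; exact hyt
            · intro h
              rcases hyN b h with h' | h'
              · exact absurd h' hbx
              · exact Subtype.ext h'
      · by_cases hbx : b = x
        · rw [hbx, delEquiv_x, delEquiv_other hxy.ne hax hay, addOp1_inl_inr]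
          constructor
          · intro h
            have : a = t := congrArg Subtype.val h
            rw [this]; exact hxt.symm
          · intro h
            rcases hxN a h.symm with h' | h'
            · exact absurd h' hay
            · exact Subtype.ext h'
        · by_cases hby : b = y
          · rw [hby, delEquiv_y, delEquiv_other hxy.ne hax hay, addOp1_inl_inr]
            constructor
            · intro h
              have : a = t := congrArg Subtype.val h
              rw [this]; exact hyt.symm
            · intro h
              rcases hyN a h.symm with h' | h'
              · exact absurd h' hax
              · exact Subtype.ext h'
          · rw [delEquiv_other hxy.ne hax hay, delEquiv_other hxy.ne hbx hby, addOp1_inl_inl]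
            exact Iff.rfl

end Iso

section Aux
variable {V : Type} {G : SimpleGraph V}


/-- walks from {x,y} stay in {x,y} when x,y see nothing else -/
lemma walk_closure {x y : V} (hx' : ∀ w, G.Adj x w → w = y) (hy' : ∀ w, G.Adj y w → w = x)
    {a b : V} (w : G.Walk a b) : (a = x ∨ a = y) → (b = x ∨ b = y) := by
  induction w with
  | nil => exact id
  | cons h t ih =>
    intro ha
    apply ih
    rcases ha with h' | h'
    · subst h'; exact Or.inr (hx' _ h)
    · subst h'; exact Or.inl (hy' _ h)

lemma clawfree_comap (hcf : ClawFree G) (p : V → Prop) :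
    ClawFree (G.comap (Subtype.val : {v : V // p v} → V)) := by
  rintro ⟨a, b, c, d, h1, h2, h3, h4, h5, h6, ha1, ha2, ha3, hn1, hn2, hn3⟩
  exact hcf ⟨a.val, b.val, c.val, d.val,
    fun h => h1 (Subtype.ext h), fun h => h2 (Subtype.ext h), fun h => h3 (Subtype.ext h),
    fun h => h4 (Subtype.ext h), fun h => h5 (Subtype.ext h), fun h => h6 (Subtype.ext h),
    ha1, ha2, ha3, hn1, hn2, hn3⟩

/-- restriction of the unique partner function to the deleted-pair subgraph -/
lemma partner_restrict {m : V → V} (hm : IsPartner G m)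
    (hu : ∀ m₂, IsPartner G m₂ → m₂ = m) {x y : V} (hmx : m x = y) :
    ∃ m' : {v : V // v ≠ x ∧ v ≠ y} → {v : V // v ≠ x ∧ v ≠ y},
      IsPartner (G.comap (Subtype.val : {v : V // v ≠ x ∧ v ≠ y} → V)) m' ∧
      ∀ m₂, IsPartner (G.comap (Subtype.val : {v : V // v ≠ x ∧ v ≠ y} → V)) m₂ → m₂ = m' := by
  classical
  have hmy : m y = x := by rw [← hmx, hm.invol]
  have hcl : ∀ v : V, v ≠ x → v ≠ y → m v ≠ x ∧ m v ≠ y := by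
    intro v h1 h2
    constructor
    · intro h
      apply h2
      rw [← hm.invol v, h, hmx]
    · intro h
      apply h1
      rw [← hm.invol v, h, hmy]
  refine ⟨fun v => ⟨m v.val, hcl v.val v.prop.1 v.prop.2⟩, ?_, ?_⟩
  · intro v
    exact ⟨hm.adj v.val, Subtype.ext (hm.invol v.val)⟩
  · intro m₂ hm₂
    set lift : V → V := fun v => if h1 : v = x then y else if h2 : v = y then x
      else (m₂ ⟨v, h1, h2⟩).val with hliftdef
    have hxyne : x ≠ y := by
      intro h
      have := hm.adj x
      rw [hmx, ← h] at this
      exact G.loopless.irrefl _ this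
    have liftx : lift x = y := by simp [hliftdef]
    have lifty : lift y = x := by simp [hliftdef, Ne.symm hxyne]
    have lifto : ∀ (v : V) (h1 : v ≠ x) (h2 : v ≠ y), lift v = (m₂ ⟨v, h1, h2⟩).val := by
      intro v h1 h2; simp [hliftdef, h1, h2]
    have hlift : IsPartner G lift := by
      intro v
      by_cases h1 : v = x
      · subst h1
        rw [liftx, lifty]
        exact ⟨by rw [← hmx]; exact hm.adj _, rfl⟩
      · by_cases h2 : v = y
        · subst h2
          rw [lifty, liftx]
          exact ⟨by rw [← hmy]; exact hm.adj _, rfl⟩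
        · rw [lifto v h1 h2]
          constructor
          · exact (hm₂ ⟨v, h1, h2⟩).1
          · rw [lifto _ (m₂ ⟨v, h1, h2⟩).prop.1 (m₂ ⟨v, h1, h2⟩).prop.2]
            have := (hm₂ ⟨v, h1, h2⟩).2
            exact congrArg Subtype.val this
    have heq := hu lift hlift
    funext v
    apply Subtype.ext
    have h1 := congrFun heq v.val
    rw [lifto v.val v.prop.1 v.prop.2] at h1
    show (m₂ v).val = m v.val
    rw [← h1]

end Aux


section Main

lemma card_two_case {V : Type} [Fintype V] {G : SimpleGraph V} (h2 : Fintype.card V = 2)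
    (hconn : G.Connected) : InClassG V G := by
  classical
  have hadjall : ∀ v w : V, v ≠ w → G.Adj v w := by
    intro v w hvw
    obtain ⟨walk⟩ := hconn.preconnected v w
    cases walk with
    | nil => exact absurd rfl hvw
    | cons h t =>
      rename_i c
      by_cases hcw : c = w
      · subst hcw; exact h
      · exfalso
        have hvc : v ≠ c := h.ne
        have hcard : ({v, c, w} : Finset V).card = 3 := by
          rw [Finset.card_insert_of_notMem (by simp [hvc, hvw]),
            Finset.card_insert_of_notMem (by simp [hcw]), Finset.card_singleton]
        have hle := Finset.card_le_univ ({v, c, w} : Finset V)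
        rw [hcard] at hle
        omega
  have e : G ≃g (⊤ : SimpleGraph (Fin 2)) :=
    { toEquiv := Fintype.equivFinOfCardEq h2
      map_rel_iff' := by
        intro a b
        simp only [top_adj, ne_eq, EmbeddingLike.apply_eq_iff_eq]
        constructor
        · intro h; exact hadjall a b h
        · intro h; exact fun he => G.loopless.irrefl _ (he ▸ h) }
  exact InClassG.iso _ _ e.symm InClassG.base

theorem connected_clawfree_unique_pm_mem_classG (V : Type) [Fintype V]
    (G : SimpleGraph V) (hconn : G.Connected) (hcf : ClawFree G)
    (hupm : ∃! M : G.Subgraph, M.IsPerfectMatching) :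
    InClassG V G := by
  classical
  have key : ∀ (n : ℕ) (V : Type) [Fintype V] (G : SimpleGraph V), Fintype.card V ≤ n →
      G.Connected → ClawFree G → (∃! M : G.Subgraph, M.IsPerfectMatching) → InClassG V G := by
    intro n
    induction n with
    | zero =>
      intro V _ G hcard hconn _ _
      have : Nonempty V := hconn.nonempty
      have := Fintype.card_pos (α := V)
      omega
    | succ n ih =>
      intro V instV G hcard hconn hcf hupm
      classical
      obtain ⟨m, hm, hu⟩ := unique_partner_of_upm hupm
      by_cases h2 : Fintype.card V = 2
      · exact card_two_case h2 hconn
      by_cases hpend : ∃ yv : V, ∀ w, G.Adj yv w → w = m yv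
      · -- pendant / op2 case
        obtain ⟨y, hyN⟩ := hpend
        have hmy : G.Adj y (m y) := hm.adj y
        set x := m y with hxdef
        have hmx : m x = y := hm.invol y
        have hxy : G.Adj x y := hmy.symm
        have hxyne : x ≠ y := hxy.ne
        have hCne : ∃ c, G.Adj x c ∧ c ≠ y := by
          by_contra hno
          push_neg at hno
          have hall : ∀ v : V, v = x ∨ v = y := by
            intro v
            obtain ⟨w⟩ := hconn.preconnected x v
            exact walk_closure hno hyN w (Or.inl rfl)
          have hsub : (Finset.univ : Finset V) ⊆ {x, y} := by
            intro v _
            rcases hall v with h | h <;> simp [h]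
          have hle : Fintype.card V ≤ 2 := by
            calc Fintype.card V = (Finset.univ : Finset V).card := (Finset.card_univ).symm
              _ ≤ ({x, y} : Finset V).card := Finset.card_le_card hsub
              _ ≤ 2 := le_trans (Finset.card_insert_le _ _) (by simp)
          have hge : 1 < Fintype.card V := Fintype.one_lt_card_iff_nontrivial.mpr ⟨⟨x, y, hxyne⟩⟩
          omega
        obtain ⟨c₀, hc₀⟩ := hCne
        have hclqD : ∀ a, G.Adj x a → a ≠ y → ∀ b, G.Adj x b → b ≠ y → a ≠ b → G.Adj a b := by
          intro a ha hay b hb hby hab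
          by_contra hnadj
          have n_ya : ¬ G.Adj y a := by
            intro h
            have := hyN a h
            rw [this] at ha
            exact G.loopless.irrefl _ ha
          have n_yb : ¬ G.Adj y b := by
            intro h
            have := hyN b h
            rw [this] at hb
            exact G.loopless.irrefl _ hb
          exact claw_away hcf hxy ha hb (Ne.symm hay) (Ne.symm hby) hab n_ya n_yb hnadj
        have hconn' : (G.comap (Subtype.val : {v : V // v ≠ x ∧ v ≠ y} → V)).Connected :=
          strip_connected hconn (D := {v | G.Adj x v ∧ v ≠ y})
            (fun w hw => by
              by_cases h : w = y
              · exact Or.inl h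
              · exact Or.inr ⟨hw, h⟩)
            (fun w hw => Or.inl (hyN w hw))
            (fun a ha b hb hab => hclqD a ha.1 ha.2 b hb.1 hb.2 hab)
            ⟨⟨c₀, hc₀.1.ne', hc₀.2⟩⟩
        have hcf' := clawfree_comap hcf (fun v => v ≠ x ∧ v ≠ y)
        obtain ⟨m', hm', hu'⟩ := partner_restrict hm hu hmx
        have hupm' := upm_of_unique_partner hm' hu'
        have hcard' : Fintype.card {v : V // v ≠ x ∧ v ≠ y} ≤ n := by
          have hlt : Fintype.card {v : V // v ≠ x ∧ v ≠ y} < Fintype.card V :=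
            Fintype.card_subtype_lt (x := x) (by simp)
          omega
        have hG'mem := ih {v : V // v ≠ x ∧ v ≠ y}
          (G.comap (Subtype.val : {v : V // v ≠ x ∧ v ≠ y} → V)) hcard' hconn' hcf' hupm'
        have hne : ({v : {v : V // v ≠ x ∧ v ≠ y} | G.Adj x v.val}).Nonempty :=
          ⟨⟨c₀, hc₀.1.ne', hc₀.2⟩, hc₀.1⟩
        have hC : (G.comap (Subtype.val : {v : V // v ≠ x ∧ v ≠ y} → V)).IsClique
            {v : {v : V // v ≠ x ∧ v ≠ y} | G.Adj x v.val} := by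
          rw [isClique_iff]
          intro a ha b hb hab
          exact hclqD a.val ha a.prop.2 b.val hb b.prop.2 (fun h => hab (Subtype.ext h))
        have hnbr : ∀ u ∈ ({v : {v : V // v ≠ x ∧ v ≠ y} | G.Adj x v.val}),
            (G.comap (Subtype.val : {v : V // v ≠ x ∧ v ≠ y} → V)).IsClique
              ((G.comap (Subtype.val : {v : V // v ≠ x ∧ v ≠ y} → V)).neighborSet u \
                {v : {v : V // v ≠ x ∧ v ≠ y} | G.Adj x v.val}) := by
          intro u hu' 
          rw [isClique_iff]
          intro a ha b hb hab
          obtain ⟨ha1, ha2⟩ := ha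
          obtain ⟨hb1, hb2⟩ := hb
          rw [mem_neighborSet] at ha1 hb1
          by_contra hnadj
          exact claw_away hcf (Adj.symm hu') ha1 hb1
            (Ne.symm a.prop.1) (Ne.symm b.prop.1) (fun h => hab (Subtype.ext h))
            ha2 hb2 hnadj
        exact InClassG.iso _ _ (isoOp2 hxy hyN).symm
          (InClassG.op2 _ _ hne hC hnbr hG'mem)
      · -- triangle / op1 case
        push_neg at hpend
        haveI hnon : Nonempty V := hconn.nonempty
        obtain ⟨z, y₀, t, hmz, hzy, hzt, hyt, hNz, hNy⟩ :=
          exists_triangle_config hm hu hcf hpend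
        have hconn' : (G.comap (Subtype.val : {v : V // v ≠ z ∧ v ≠ y₀} → V)).Connected :=
          strip_connected hconn (D := {t})
            (fun w hw => by
              rcases hNz w hw with h | h
              · exact Or.inl h
              · exact Or.inr (by simp [h]))
            (fun w hw => by
              rcases hNy w hw with h | h
              · exact Or.inl h
              · exact Or.inr (by simp [h]))
            (fun a ha b hb hab => by
              simp only [Set.mem_singleton_iff] at ha hb
              rw [ha, hb] at hab
              exact absurd rfl hab)
            ⟨⟨t, hzt.ne', hyt.ne'⟩⟩
        have hcf' := clawfree_comap hcf (fun v => v ≠ z ∧ v ≠ y₀)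
        obtain ⟨m', hm', hu'⟩ := partner_restrict hm hu hmz
        have hupm' := upm_of_unique_partner hm' hu'
        have hcard' : Fintype.card {v : V // v ≠ z ∧ v ≠ y₀} ≤ n := by
          have hlt : Fintype.card {v : V // v ≠ z ∧ v ≠ y₀} < Fintype.card V :=
            Fintype.card_subtype_lt (x := z) (by simp)
          omega
        have hG'mem := ih {v : V // v ≠ z ∧ v ≠ y₀}
          (G.comap (Subtype.val : {v : V // v ≠ z ∧ v ≠ y₀} → V)) hcard' hconn' hcf' hupm'
        have hsimp : (G.comap (Subtype.val : {v : V // v ≠ z ∧ v ≠ y₀} → V)).IsClique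
            ((G.comap (Subtype.val : {v : V // v ≠ z ∧ v ≠ y₀} → V)).neighborSet
              ⟨t, hzt.ne', hyt.ne'⟩) := by
          rw [isClique_iff]
          intro a ha b hb hab
          rw [mem_neighborSet] at ha hb
          by_contra hnadj
          apply claw_away hcf hzt.symm ha hb
          · intro h; exact a.prop.1 h.symm
          · intro h; exact b.prop.1 h.symm
          · exact fun h => hab (Subtype.ext h)
          · intro h
            rcases hNz a.val h with h' | h'
            · exact a.prop.2 h'
            · have ha2 : G.Adj t a.val := ha
              rw [h'] at ha2
              exact G.loopless.irrefl _ ha2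
          · intro h
            rcases hNz b.val h with h' | h'
            · exact b.prop.2 h'
            · have hb2 : G.Adj t b.val := hb
              rw [h'] at hb2
              exact G.loopless.irrefl _ hb2
          · exact hnadj
        exact InClassG.iso _ _ (isoOp1 hzy hzt hyt hNz hNy).symm
          (InClassG.op1 _ _ hsimp hG'mem)
  exact key (Fintype.card V) V G le_rfl hconn hcf hupm

end Main
end
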